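/- arXiv:math/0111192 — 3 statements merged into one kernel-verified Lean document; each statement's English description precedes it below -/
import Mathlib

section
/- For any k-bounded partition λ, the k-Schur function expands unitriangularly in the homogeneous basis with integer coefficients and k-bounded indices: s_λ^{(k)} = h_λ + Σ_{μ > λ, μ_1 ≤ k} d_{λμ}^{(k)} h_μ, where the sum is over k-bounded partitions μ of |λ| with μ > λ in dominance order and each d_{λμ}^{(k)} is an integer. -/
open scoped BigOperators Classical

noncomputable section

/-- Model of the ring of symmetric functions `Λ = ℚ[h₁,h₂,…]`: the polynomial
ring on the (algebraically independent) complete homogeneous generators. -/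
abbrev SymFn : Type := MvPolynomial ℕ ℚ

/-- The complete homogeneous symmetric function `h_r` (`h_0 = 1`). -/
def hh : ℕ → SymFn
  | 0 => 1
  | r + 1 => MvPolynomial.X r

/-- `h_n` for an integer index, with `h_n = 0` for `n < 0`. -/
def hZ (n : ℤ) : SymFn := if n < 0 then 0 else hh n.toNat

/-- `h_λ = h_{λ₁} h_{λ₂} ⋯`. -/
def hProd (l : List ℕ) : SymFn := (l.map hh).prod

/-- The Schur function via the Jacobi–Trudi determinant
`s_λ = det(h_{λ_i - i + j})_{1 ≤ i,j ≤ ℓ(λ)}`. -/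
def schur (l : List ℕ) : SymFn :=
  Matrix.det (Matrix.of fun i j : Fin l.length =>
    hZ (((l.get i : ℕ) : ℤ) - ((i : ℕ) : ℤ) + ((j : ℕ) : ℤ)))

/-- A partition: a weakly decreasing list of positive integers. -/
def IsPartition (l : List ℕ) : Prop := l.Pairwise (· ≥ ·) ∧ ∀ x ∈ l, 0 < x

/-- A `k`-bounded partition: all parts at most `k`. -/
def KBounded (k : ℕ) (l : List ℕ) : Prop := ∀ x ∈ l, x ≤ k

/-- The main hook-length `h_M(λ) = λ₁ + ℓ(λ) - 1`. -/
def mainHook (l : List ℕ) : ℕ := l.headI + l.length - 1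

/-- Dominance order: `Dominates μ λ` means `μ ≥ λ`, i.e.
`λ₁ + ⋯ + λ_i ≤ μ₁ + ⋯ + μ_i` for all `i`. -/
def Dominates (mu lam : List ℕ) : Prop := ∀ i : ℕ, (lam.take i).sum ≤ (mu.take i).sum

/-- Auxiliary function (with fuel) computing the `k`-split of a partition:
successive blocks of main hook-length exactly `k` (the last block having
main hook-length at most `k`). -/
def kSplitAux (k : ℕ) : ℕ → List ℕ → List (List ℕ)
  | _, [] => []
  | 0, l => [l]
  | fuel + 1, a :: rest =>
    if (a :: rest).length ≤ k + 1 - a ∨ k + 1 - a = 0 then [a :: rest]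
    else (a :: rest).take (k + 1 - a) :: kSplitAux k fuel ((a :: rest).drop (k + 1 - a))

/-- The `k`-split `λ^{→k}` of a `k`-bounded partition `λ`. -/
def kSplit (k : ℕ) (l : List ℕ) : List (List ℕ) := kSplitAux k l.length l

/-- The `k`-split polynomial `G_λ^{(k)} = s_{λ^{(1)}} s_{λ^{(2)}} ⋯ s_{λ^{(r)}}`. -/
def Gk (k : ℕ) (l : List ℕ) : SymFn := ((kSplit k l).map schur).prod

/-- `Λ^{(k)}`: the linear span of the `h_λ` over `k`-bounded partitions `λ`. -/
def LamK (k : ℕ) : Submodule ℚ SymFn :=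
  Submodule.span ℚ {f : SymFn | ∃ l : List ℕ, IsPartition l ∧ KBounded k l ∧ f = hProd l}

/-- The `k`-Schur functions (at `t = 1`), defined recursively from a family `T`
of projection operators by `s_λ^{(k)} = T_{λ₁} (s_{λ₁} ⋅ s_{(λ₂,λ₃,…)}^{(k)})`,
starting from `s_{()}^{(k)} = 1`. -/
def kSchurWith (T : ℕ → (SymFn →ₗ[ℚ] SymFn)) : List ℕ → SymFn
  | [] => 1
  | a :: rest => T a (schur [a] * kSchurWith T rest)

/-- `T` is a family of projection operators for `Λ^{(k)}`:
`T_j G_λ^{(k)} = G_λ^{(k)}` if `λ₁ = j` and `0` otherwise, for every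
`k`-bounded partition `λ`.  (Any such family restricts to the projection
operator of Lapointe–Morse on `Λ^{(k)}`.) -/
def ProjOps (k : ℕ) (T : ℕ → (SymFn →ₗ[ℚ] SymFn)) : Prop :=
  ∀ (j : ℕ) (l : List ℕ), IsPartition l → KBounded k l →
    T j (Gk k l) = if l.headI = j then Gk k l else 0


namespace KAux
open Pointwise

def msortD (m : Multiset ℕ) : List ℕ := m.sort (· ≥ ·)

lemma msortD_sorted (m : Multiset ℕ) : (msortD m).Pairwise (· ≥ ·) := Multiset.pairwise_sort _ _

lemma msortD_coe (m : Multiset ℕ) : (↑(msortD m) : Multiset ℕ) = m := Multiset.sort_eq _ _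

lemma msortD_eq_self {l : List ℕ} (h : l.Pairwise (· ≥ ·)) : msortD ↑l = l :=
  List.Perm.eq_of_pairwise' (msortD_sorted _) h (Multiset.coe_eq_coe.mp (msortD_coe ↑l))

lemma msortD_sum (m : Multiset ℕ) : (msortD m).sum = m.sum := by
  conv_rhs => rw [← msortD_coe m]
  simp

lemma msortD_length (m : Multiset ℕ) : (msortD m).length = Multiset.card m := by
  conv_rhs => rw [← msortD_coe m]
  simp

lemma le_headI_of_sorted {l : List ℕ} (h : l.Pairwise (· ≥ ·)) : ∀ x ∈ l, x ≤ l.headI := by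
  cases l with
  | nil => simp
  | cons a t =>
    intro x hx
    rcases List.mem_cons.mp hx with rfl | hx
    · simp
    · exact (List.pairwise_cons.mp h).1 x hx

lemma take_sum_le_sum (L : List ℕ) (t : ℕ) : (L.take t).sum ≤ L.sum := by
  conv_rhs => rw [← List.take_append_drop t L]
  rw [List.sum_append]; omega

lemma take_sum_mono (L : List ℕ) {i j : ℕ} (h : i ≤ j) : (L.take i).sum ≤ (L.take j).sum := by
  have : L.take i = (L.take j).take i := by rw [List.take_take, min_eq_left h]
  rw [this]
  exact take_sum_le_sum _ _

lemma take_succ_sum_le : ∀ (L : List ℕ) (a t : ℕ), L.Pairwise (· ≥ ·) → (∀ x ∈ L, x ≤ a) →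
    (L.take (t+1)).sum ≤ a + (L.take t).sum
  | [], a, t, _, _ => by simp
  | b :: L', a, t, hs, hb => by
    cases t with
    | zero => simpa using hb b (by simp)
    | succ t' =>
      have hs' : L'.Pairwise (· ≥ ·) := hs.of_cons
      have hb' : ∀ x ∈ L', x ≤ a := fun x hx => hb x (List.mem_cons_of_mem _ hx)
      have ih := take_succ_sum_le L' a t' hs' hb'
      simp only [List.take_succ_cons, List.sum_cons]
      omega

lemma take_sum_le_cons (a : ℕ) (L : List ℕ) (hs : L.Pairwise (· ≥ ·)) (hb : ∀ x ∈ L, x ≤ a)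
    (t : ℕ) : (L.take t).sum ≤ ((a :: L).take t).sum := by
  cases t with
  | zero => simp
  | succ t' =>
    rw [List.take_succ_cons, List.sum_cons]
    exact take_succ_sum_le L a t' hs hb

/-- sum of any submultiset of `L` with `t` elements is at most the sum of the `t` largest. -/
lemma top_lemma : ∀ (L : List ℕ), L.Pairwise (· ≥ ·) → ∀ s : Multiset ℕ, s ≤ ↑L →
    s.sum ≤ (L.take (Multiset.card s)).sum := by
  intro L
  induction L with
  | nil =>
    intro _ s hs
    have : s = 0 := Multiset.le_zero.mp (by simpa using hs)
    simp [this]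
  | cons a L ih =>
    intro hs s hle
    by_cases ha : a ∈ s
    · have h1 : s.erase a ≤ ↑L := by
        have := Multiset.erase_le_erase a hle
        rwa [← Multiset.cons_coe, Multiset.erase_cons_head] at this
      have hcard : Multiset.card s = Multiset.card (s.erase a) + 1 := by
        rw [Multiset.card_erase_of_mem ha, Nat.pred_eq_sub_one]
        have : 0 < Multiset.card s := Multiset.card_pos_iff_exists_mem.mpr ⟨a, ha⟩
        omega
      have hse : s = a ::ₘ s.erase a := (Multiset.cons_erase ha).symm
      rw [hcard, List.take_succ_cons, List.sum_cons]
      calc s.sum = a + (s.erase a).sum := by rw [hse]; simp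
        _ ≤ a + (L.take (Multiset.card (s.erase a))).sum := by
            have := ih hs.of_cons _ h1; omega
    · have h1 : s ≤ ↑L := by
        rw [Multiset.le_iff_count]
        intro b
        by_cases hb : b = a
        · subst hb; simp [Multiset.count_eq_zero_of_notMem ha]
        · have := Multiset.le_iff_count.mp hle b
          rwa [← Multiset.cons_coe, Multiset.count_cons_of_ne hb] at this
      exact (ih hs.of_cons s h1).trans
        (take_sum_le_cons a L hs.of_cons (fun x hx => (List.pairwise_cons.mp hs).1 x hx) _)

lemma take_sum_le_filter_pos : ∀ (L : List ℕ), L.Pairwise (· ≥ ·) → ∀ t,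
    (L.take t).sum ≤ ((L.filter (fun x => decide (0 < x))).take t).sum := by
  intro L
  induction L with
  | nil => simp
  | cons a L ih =>
    intro hs t
    cases t with
    | zero => simp
    | succ t' =>
      by_cases ha : 0 < a
      · rw [List.filter_cons_of_pos (by simpa using ha), List.take_succ_cons, List.take_succ_cons,
          List.sum_cons, List.sum_cons]
        have := ih hs.of_cons t'
        omega
      · have ha0 : a = 0 := by omega
        subst ha0
        have hz : ∀ x ∈ (0 :: L : List ℕ).take (t'+1), x = 0 := by
          intro x hx
          have hm := List.mem_of_mem_take hx
          have := le_headI_of_sorted hs x hm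
          simpa using this
        rw [List.sum_eq_zero hz]
        omega

lemma msortD_filter_pos (m : Multiset ℕ) :
    (msortD m).filter (fun x => decide (0 < x)) = msortD (m.filter (fun x => 0 < x)) := by
  have h1 : ((msortD m).filter (fun x => decide (0 < x))).Perm (msortD (m.filter (fun x => 0 < x))) := by
    rw [← Multiset.coe_eq_coe, ← Multiset.filter_coe, msortD_coe, msortD_coe]
  have h2 : ((msortD m).filter (fun x => decide (0 < x))).Pairwise (· ≥ ·) :=
    List.Pairwise.filter _ (msortD_sorted m)
  exact List.Perm.eq_of_pairwise' h2 (msortD_sorted _) h1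


open Finset

lemma zero_filter_pos {B : List ℕ} (hB : B.Pairwise (· ≥ ·)) (h0 : B.headI = 0) :
    B.filter (fun x => decide (0 < x)) = [] := by
  rw [List.filter_eq_nil_iff]
  intro x hx
  have := le_headI_of_sorted hB x hx
  simp only [h0] at this
  simp
  omega

lemma getD_le_getD_of_sorted {L : List ℕ} (h : L.Pairwise (· ≥ ·)) (i : ℕ) :
    L.getD (i+1) 0 ≤ L.getD i 0 := by
  by_cases h1 : i + 1 < L.length
  · rw [List.getD_eq_getElem L 0 h1, List.getD_eq_getElem L 0 (by omega)]
    exact List.pairwise_iff_get.mp h ⟨i, by omega⟩ ⟨i+1, h1⟩ (by simp)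
  · rw [List.getD_eq_default L 0 (by omega)]
    omega

lemma sum_range_getD_take (L : List ℕ) : ∀ (t : ℕ),
    ∑ i ∈ Finset.range t, (L.getD i 0 : ℤ) = ((L.take t).sum : ℤ) := by
  induction L with
  | nil => intro t; simp
  | cons a L ih =>
    intro t
    cases t with
    | zero => simp
    | succ t' =>
      rw [Finset.sum_range_succ']
      simp only [List.getD_cons_succ, List.getD_cons_zero, List.take_succ_cons, List.sum_cons]
      rw [ih t']
      push_cast
      ring

lemma sum_range_getD_map (G : ℕ → ℤ) (hG : G 0 = 0) :
    ∀ (L : List ℕ) (N : ℕ), L.length ≤ N →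
      ∑ i ∈ Finset.range N, G (L.getD i 0) = (L.map G).sum := by
  intro L
  induction L with
  | nil => intro N _; simp [hG]
  | cons a L ih =>
    intro N h
    cases N with
    | zero => simp at h
    | succ N' =>
      rw [Finset.sum_range_succ']
      simp only [List.getD_cons_succ, List.getD_cons_zero, List.map_cons, List.sum_cons]
      rw [ih N' (by simpa using h)]
      ring

lemma abel_id (D h : ℕ → ℤ) : ∀ N : ℕ,
    ∑ i ∈ Finset.range N, (D (i+1) - D i) * h i
      = D N * h N - D 0 * h 0 + ∑ i ∈ Finset.range N, D (i+1) * (h i - h (i+1)) := by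
  intro N
  induction N with
  | zero => simp
  | succ N ih =>
    rw [Finset.sum_range_succ, Finset.sum_range_succ, ih]
    ring

lemma abel_nonneg (D h : ℕ → ℤ) (N : ℕ) (hD0 : D 0 = 0) (hDN : D N = 0)
    (hD : ∀ t, 0 ≤ D t) (hmono : ∀ i, h (i+1) ≤ h i) :
    0 ≤ ∑ i ∈ Finset.range N, (D (i+1) - D i) * h i := by
  rw [abel_id, hD0, hDN]
  simp only [zero_mul, mul_zero, sub_zero, zero_add]
  apply Finset.sum_nonneg
  intro i _
  have h1 := hD (i+1)
  have h2 := hmono i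
  nlinarith

lemma filter_pos_eq_of_getD_eq : ∀ (L B : List ℕ), L.Pairwise (· ≥ ·) → B.Pairwise (· ≥ ·) →
    (∀ i, L.getD i 0 = B.getD i 0) →
    L.filter (fun x => decide (0 < x)) = B.filter (fun x => decide (0 < x)) := by
  intro L
  induction L with
  | nil =>
    intro B _ hB h
    cases B with
    | nil => rfl
    | cons b B' =>
      have h0 := h 0
      simp at h0
      rw [zero_filter_pos hB (by simp [← h0])]
      simp
  | cons a L ih =>
    intro B hL hB h
    cases B with
    | nil =>
      have h0 := h 0
      simp at h0
      rw [zero_filter_pos hL (by simp [h0])]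
      simp
    | cons b B' =>
      have h0 := h 0
      simp at h0
      subst h0
      have htail : ∀ i, L.getD i 0 = B'.getD i 0 := by
        intro i
        have := h (i+1)
        simpa using this
      have := ih B' hL.of_cons hB.of_cons htail
      by_cases ha : 0 < a
      · rw [List.filter_cons_of_pos (by simpa using ha), List.filter_cons_of_pos (by simpa using ha), this]
      · rw [List.filter_cons_of_neg (by simpa using ha), List.filter_cons_of_neg (by simpa using ha), this]

/-- `sq_dom`: dominance implies the sum of squares inequality, with equality iff the
positive parts agree. -/
lemma sq_dom (m : Multiset ℕ) (B : List ℕ) (hB : B.Pairwise (· ≥ ·))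
    (hsum : m.sum = B.sum) (hdom : ∀ t, (B.take t).sum ≤ ((msortD m).take t).sum) :
    ((B.map (fun x : ℕ => (x:ℤ)^2)).sum ≤ (Multiset.map (fun x : ℕ => (x:ℤ)^2) m).sum) ∧
    ((Multiset.map (fun x : ℕ => (x:ℤ)^2) m).sum = (B.map (fun x : ℕ => (x:ℤ)^2)).sum →
      m.filter (fun x => 0 < x) = Multiset.filter (fun x => 0 < x) ↑B) := by
  set L := msortD m with hLdef
  set N := L.length + B.length with hNdef
  set f : ℕ → ℤ := fun i => (L.getD i 0 : ℤ) with hfdef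
  set g : ℕ → ℤ := fun i => (B.getD i 0 : ℤ) with hgdef
  set D : ℕ → ℤ := fun t => ∑ i ∈ Finset.range t, (f i - g i) with hDdef
  have hLsum : L.sum = B.sum := by rw [hLdef, msortD_sum, hsum]
  have hD0 : D 0 = 0 := by simp [hDdef]
  have hsub : ∀ t, D t = ((L.take t).sum : ℤ) - ((B.take t).sum : ℤ) := by
    intro t
    rw [hDdef]
    simp only [Finset.sum_sub_distrib]
    rw [sum_range_getD_take, sum_range_getD_take]
  have hDnn : ∀ t, 0 ≤ D t := by
    intro t
    rw [hsub t]
    have := hdom t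
    omega
  have hDN : D N = 0 := by
    rw [hsub N, List.take_of_length_le (by omega), List.take_of_length_le (by omega), hLsum]
    ring
  have hstep : ∀ i, D (i+1) - D i = f i - g i := by
    intro i
    rw [hDdef]
    simp only [Finset.sum_range_succ, Finset.sum_sub_distrib]
    ring
  have hfmono : ∀ i, f (i+1) ≤ f i := by
    intro i
    have h := getD_le_getD_of_sorted (msortD_sorted m) i
    show ((msortD m).getD (i+1) 0 : ℤ) ≤ ((msortD m).getD i 0 : ℤ)
    exact_mod_cast h
  have hgmono : ∀ i, g (i+1) ≤ g i := by
    intro i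
    have h := getD_le_getD_of_sorted hB i
    show (B.getD (i+1) 0 : ℤ) ≤ (B.getD i 0 : ℤ)
    exact_mod_cast h
  have hA : 0 ≤ ∑ i ∈ Finset.range N, (f i - g i) * f i := by
    have := abel_nonneg D f N hD0 hDN hDnn hfmono
    calc (0:ℤ) ≤ ∑ i ∈ Finset.range N, (D (i+1) - D i) * f i := this
      _ = ∑ i ∈ Finset.range N, (f i - g i) * f i := by
          apply Finset.sum_congr rfl; intro i _; rw [hstep i]
  have hBnn : 0 ≤ ∑ i ∈ Finset.range N, (f i - g i) * g i := by
    have := abel_nonneg D g N hD0 hDN hDnn hgmono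
    calc (0:ℤ) ≤ ∑ i ∈ Finset.range N, (D (i+1) - D i) * g i := this
      _ = ∑ i ∈ Finset.range N, (f i - g i) * g i := by
          apply Finset.sum_congr rfl; intro i _; rw [hstep i]
  -- translate multiset sums of squares
  have hSqm : (Multiset.map (fun x : ℕ => (x:ℤ)^2) m).sum = ∑ i ∈ Finset.range N, (f i)^2 := by
    have h1 : ∑ i ∈ Finset.range N, (fun x : ℕ => ((x:ℤ))^2) (L.getD i 0) = (L.map (fun x : ℕ => (x:ℤ)^2)).sum :=
      sum_range_getD_map (fun x : ℕ => (x:ℤ)^2) (by norm_num) L N (by omega)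
    have h2 : (Multiset.map (fun x : ℕ => (x:ℤ)^2) m).sum = (L.map (fun x : ℕ => (x:ℤ)^2)).sum := by
      conv_lhs => rw [← msortD_coe m]
      simp [hLdef]
    rw [h2, ← h1]
  have hSqB : ((B.map (fun x : ℕ => (x:ℤ)^2)).sum) = ∑ i ∈ Finset.range N, (g i)^2 := by
    have h1 : ∑ i ∈ Finset.range N, (fun x : ℕ => ((x:ℤ))^2) (B.getD i 0) = (B.map (fun x : ℕ => (x:ℤ)^2)).sum :=
      sum_range_getD_map (fun x : ℕ => (x:ℤ)^2) (by norm_num) B N (by omega)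
    rw [← h1]
  have hAB : (∑ i ∈ Finset.range N, (f i - g i) * f i) + (∑ i ∈ Finset.range N, (f i - g i) * g i)
      = (Multiset.map (fun x : ℕ => (x:ℤ)^2) m).sum - ((B.map (fun x : ℕ => (x:ℤ)^2)).sum) := by
    rw [hSqm, hSqB, ← Finset.sum_add_distrib, ← Finset.sum_sub_distrib]
    apply Finset.sum_congr rfl
    intro i _
    ring
  constructor
  · omega
  · intro heq
    rw [heq] at hAB
    have hA0 : (∑ i ∈ Finset.range N, (f i - g i) * f i) = 0 ∧
        (∑ i ∈ Finset.range N, (f i - g i) * g i) = 0 := by omega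
    have hsq0 : ∑ i ∈ Finset.range N, (f i - g i)^2 = 0 := by
      have : ∑ i ∈ Finset.range N, (f i - g i)^2
          = (∑ i ∈ Finset.range N, (f i - g i) * f i) - (∑ i ∈ Finset.range N, (f i - g i) * g i) := by
        rw [← Finset.sum_sub_distrib]
        apply Finset.sum_congr rfl
        intro i _
        ring
      rw [this, hA0.1, hA0.2]
      ring
    have hfg : ∀ i ∈ Finset.range N, (f i - g i)^2 = 0 := by
      intro i hi
      have := (Finset.sum_eq_zero_iff_of_nonneg (fun i _ => sq_nonneg (f i - g i))).mp hsq0 i hi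
      exact this
    have hgetD : ∀ i, L.getD i 0 = B.getD i 0 := by
      intro i
      by_cases hi : i < N
      · have := hfg i (Finset.mem_range.mpr hi)
        have h2 : f i = g i := by nlinarith [sq_nonneg (f i - g i)]
        have h3 : ((L.getD i 0 : ℕ) : ℤ) = ((B.getD i 0 : ℕ) : ℤ) := h2
        exact_mod_cast h3
      · rw [List.getD_eq_default L 0 (by omega), List.getD_eq_default B 0 (by omega)]
    have hfilter := filter_pos_eq_of_getD_eq L B (msortD_sorted m) hB hgetD
    have : (↑(L.filter (fun x => decide (0 < x))) : Multiset ℕ) = ↑(B.filter (fun x => decide (0 < x))) := by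
      rw [hfilter]
    rw [← Multiset.filter_coe, ← Multiset.filter_coe, hLdef, msortD_coe] at this
    exact this

lemma minsum (n : ℕ) : ∀ (T : Finset ℕ), T.card = n →
    (∑ j ∈ Finset.range n, j ≤ ∑ x ∈ T, x) ∧
    (∑ x ∈ T, x = ∑ j ∈ Finset.range n, j → T = Finset.range n) := by
  induction n with
  | zero => intro T hT; simp [Finset.card_eq_zero.mp hT]
  | succ n ih =>
    intro T hT
    have hne : T.Nonempty := Finset.card_pos.mp (by omega)
    set M := T.max' hne with hMdef
    have hM : M ∈ T := T.max'_mem hne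
    have hsub : T ⊆ Finset.range (M+1) := by
      intro x hx
      exact Finset.mem_range.mpr (by have := T.le_max' x hx; omega)
    have hMn : n ≤ M := by
      have := Finset.card_le_card hsub
      rw [Finset.card_range] at this
      omega
    set T' := T.erase M with hT'def
    have hc' : T'.card = n := by
      rw [hT'def, Finset.card_erase_of_mem hM, hT]
      rfl
    obtain ⟨h1, h2⟩ := ih T' hc'
    have hsumT : ∑ x ∈ T, x = M + ∑ x ∈ T', x := by
      rw [← Finset.add_sum_erase T _ hM]
    rw [Finset.sum_range_succ]
    constructor
    · omega
    · intro he
      have hMeq : M = n := by omega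
      have hse : ∑ x ∈ T', x = ∑ j ∈ Finset.range n, j := by omega
      have hT'r := h2 hse
      have : T = insert M T' := (Finset.insert_erase hM).symm
      rw [this, hMeq, hT'r, Finset.range_add_one]

lemma sigma_eq_one {n : ℕ} (σ : Equiv.Perm (Fin n))
    (h : ∀ t (ht : t ≤ n),
      Finset.image (fun j : Fin t => ((σ (Fin.castLE ht j)) : ℕ)) Finset.univ = Finset.range t) :
    σ = 1 := by
  have key : ∀ v : ℕ, ∀ i : Fin n, (i : ℕ) = v → σ i = i := by
    intro v
    induction v using Nat.strong_induction_on with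
    | _ v ihv =>
      intro i hiv
      have ht : v + 1 ≤ n := by have := i.2; omega
      have hmem : v ∈ Finset.range (v+1) := by simp
      rw [← h (v+1) ht] at hmem
      obtain ⟨j, -, hj⟩ := Finset.mem_image.mp hmem
      by_cases hlt : ((Fin.castLE ht j : Fin n) : ℕ) < v
      · have := ihv _ hlt (Fin.castLE ht j) rfl
        rw [this] at hj
        omega
      · have hj2 : ((Fin.castLE ht j : Fin n) : ℕ) = v := by
          have := j.2
          simp only [Fin.coe_castLE] at hlt ⊢
          omega
        have hji : (Fin.castLE ht j : Fin n) = i := Fin.ext (by rw [hj2, hiv])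
        rw [hji] at hj
        exact Fin.ext (by rw [hj, hiv])
  apply Equiv.ext
  intro i
  rw [key (i : ℕ) i rfl]
  rfl

-- multiset products of hh
def hprodM (m : Multiset ℕ) : SymFn := (m.map hh).prod

lemma hprodM_coe (l : List ℕ) : hprodM ↑l = hProd l := by
  simp [hprodM, hProd]

lemma hprodM_add (m₁ m₂ : Multiset ℕ) : hprodM (m₁ + m₂) = hprodM m₁ * hprodM m₂ := by
  simp [hprodM]

lemma hprodM_cons (a : ℕ) (m : Multiset ℕ) : hprodM (a ::ₘ m) = hh a * hprodM m := by
  simp [hprodM]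

lemma hh_zero : hh 0 = 1 := rfl

lemma hZ_natCast (a : ℕ) : hZ (a : ℤ) = hh a := by
  simp [hZ]

lemma hprodM_filter_pos (m : Multiset ℕ) :
    hprodM (m.filter (fun x => 0 < x)) = hprodM m := by
  induction m using Multiset.induction_on with
  | empty => simp
  | cons a s ih =>
    by_cases h : 0 < a
    · rw [Multiset.filter_cons_of_pos _ h, hprodM_cons, hprodM_cons, ih]
    · have ha : a = 0 := by omega
      subst ha
      rw [Multiset.filter_cons_of_neg _ h, hprodM_cons, ih, hh_zero, one_mul]

lemma sum_filter_pos (m : Multiset ℕ) : (m.filter (fun x => 0 < x)).sum = m.sum := by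
  induction m using Multiset.induction_on with
  | empty => simp
  | cons a s ih =>
    by_cases h : 0 < a
    · rw [Multiset.filter_cons_of_pos _ h, Multiset.sum_cons, Multiset.sum_cons, ih]
    · have ha : a = 0 := by omega
      subst ha
      rw [Multiset.filter_cons_of_neg _ h, Multiset.sum_cons, ih, zero_add]

lemma sqsum_filter_pos (m : Multiset ℕ) :
    (Multiset.map (fun x : ℕ => (x:ℤ)^2) (m.filter (fun x => 0 < x))).sum
      = (Multiset.map (fun x : ℕ => (x:ℤ)^2) m).sum := by
  induction m using Multiset.induction_on with
  | empty => simp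
  | cons a s ih =>
    by_cases h : 0 < a
    · rw [Multiset.filter_cons_of_pos _ h, Multiset.map_cons, Multiset.map_cons,
        Multiset.sum_cons, Multiset.sum_cons, ih]
    · have ha : a = 0 := by omega
      subst ha
      rw [Multiset.filter_cons_of_neg _ h, Multiset.map_cons, Multiset.sum_cons, ih]
      norm_num

-- dominance at multiset level
def DomM (m : Multiset ℕ) (l : List ℕ) : Prop :=
  ∀ t, (l.take t).sum ≤ ((msortD m).take t).sum

lemma DomM_coe_self {l : List ℕ} (h : l.Pairwise (· ≥ ·)) : DomM ↑l l := by
  intro t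
  rw [msortD_eq_self h]

lemma DomM_append {m₁ m₂ : Multiset ℕ} {B₁ B₂ : List ℕ}
    (hc₁ : Multiset.card m₁ = B₁.length) (hs₁ : m₁.sum = B₁.sum)
    (h₁ : DomM m₁ B₁) (h₂ : DomM m₂ B₂) : DomM (m₁ + m₂) (B₁ ++ B₂) := by
  intro t
  rw [List.take_append, List.sum_append]
  set s : Multiset ℕ := ↑((msortD m₁).take t) + ↑((msortD m₂).take (t - B₁.length)) with hsdef
  have hle1 : (↑((msortD m₁).take t) : Multiset ℕ) ≤ m₁ := by
    conv_rhs => rw [← msortD_coe m₁]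
    rw [Multiset.coe_le]
    exact (List.take_sublist _ _).subperm
  have hle2 : (↑((msortD m₂).take (t - B₁.length)) : Multiset ℕ) ≤ m₂ := by
    conv_rhs => rw [← msortD_coe m₂]
    rw [Multiset.coe_le]
    exact (List.take_sublist _ _).subperm
  have hsle : s ≤ m₁ + m₂ := add_le_add hle1 hle2
  have hcard : Multiset.card s ≤ t := by
    rw [hsdef]
    simp only [Multiset.card_add, Multiset.coe_card, List.length_take, msortD_length]
    have h1 := hc₁
    omega
  have h3 : (B₁.take t).sum + (B₂.take (t - B₁.length)).sum ≤ s.sum := by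
    rw [hsdef, Multiset.sum_add, Multiset.sum_coe, Multiset.sum_coe]
    exact Nat.add_le_add (h₁ t) (h₂ _)
  have h4 : s.sum ≤ ((msortD (m₁ + m₂)).take (Multiset.card s)).sum := by
    apply top_lemma _ (msortD_sorted _)
    rw [msortD_coe]
    exact hsle
  have h5 : ((msortD (m₁ + m₂)).take (Multiset.card s)).sum
      ≤ ((msortD (m₁ + m₂)).take t).sum := take_sum_mono _ hcard
  omega

lemma dominates_of_DomM {m : Multiset ℕ} {l : List ℕ} (h : DomM m l) :
    Dominates (msortD (m.filter (fun x => 0 < x))) l := by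
  intro t
  calc (l.take t).sum ≤ ((msortD m).take t).sum := h t
    _ ≤ (((msortD m).filter (fun x => decide (0 < x))).take t).sum :=
        take_sum_le_filter_pos _ (msortD_sorted m) t
    _ = ((msortD (m.filter (fun x => 0 < x))).take t).sum := by rw [msortD_filter_pos]

/-- Generators (possibly off-diagonal terms) appearing in Jacobi-Trudi expansions:
strict version (positive part differs from `B`). -/
def ESet (k : ℕ) (B : List ℕ) : Set SymFn :=
  {f | ∃ m : Multiset ℕ, Multiset.card m = B.length ∧ m.sum = B.sum ∧ DomM m B ∧
    (∀ x ∈ m, x ≤ k) ∧ Multiset.filter (fun x => 0 < x) m ≠ ↑B ∧ f = hprodM m}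

lemma part_le_k {B : List ℕ} {k : ℕ} (hB : IsPartition B) (h : mainHook B ≤ k) :
    ∀ x ∈ B, x ≤ k := by
  intro x hx
  have h1 := le_headI_of_sorted hB.1 x hx
  have h2 : 1 ≤ B.length := List.length_pos_iff.mpr (List.ne_nil_of_mem hx)
  unfold mainHook at h
  omega

lemma prod_fin_hh : ∀ (B : List ℕ), (∏ i : Fin B.length, hh (B.get i)) = hProd B := by
  intro B
  induction B with
  | nil => simp [hProd]
  | cons a B ih =>
    show (∏ i : Fin (B.length + 1), hh ((a :: B).get i)) = hProd (a :: B)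
    rw [Fin.prod_univ_succ]
    show hh a * (∏ i : Fin B.length, hh ((a :: B).get i.succ)) = hProd (a :: B)
    have hc : (∏ i : Fin B.length, hh ((a :: B).get i.succ)) = ∏ i : Fin B.length, hh (B.get i) :=
      Finset.prod_congr rfl (fun i _ => rfl)
    rw [hc, ih]
    simp [hProd]

lemma Emul {k : ℕ} {B₁ B₂ : List ℕ} {m₁ m₂ : Multiset ℕ}
    (hB₁ : IsPartition B₁) (hB₂ : IsPartition B₂)
    (c₁ : Multiset.card m₁ = B₁.length) (s₁ : m₁.sum = B₁.sum) (d₁ : DomM m₁ B₁)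
    (b₁ : ∀ x ∈ m₁, x ≤ k)
    (c₂ : Multiset.card m₂ = B₂.length) (s₂ : m₂.sum = B₂.sum) (d₂ : DomM m₂ B₂)
    (b₂ : ∀ x ∈ m₂, x ≤ k)
    (hne : Multiset.filter (fun x => 0 < x) m₁ ≠ ↑B₁ ∨
           Multiset.filter (fun x => 0 < x) m₂ ≠ ↑B₂) :
    hprodM m₁ * hprodM m₂ ∈ ESet k (B₁ ++ B₂) := by
  refine ⟨m₁ + m₂, ?_, ?_, DomM_append c₁ s₁ d₁ d₂, ?_, ?_, (hprodM_add _ _).symm⟩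
  · simp [c₁, c₂]
  · simp [s₁, s₂]
  · intro x hx
    rcases Multiset.mem_add.mp hx with h | h
    exacts [b₁ x h, b₂ x h]
  · intro heq
    rw [Multiset.filter_add] at heq
    have hBB : (↑(B₁ ++ B₂) : Multiset ℕ) = ↑B₁ + ↑B₂ := by
      rw [← Multiset.coe_add]
    rw [hBB] at heq
    have e₁ := sq_dom m₁ B₁ hB₁.1 s₁ d₁
    have e₂ := sq_dom m₂ B₂ hB₂.1 s₂ d₂
    have hcB₁ : (Multiset.map (fun x : ℕ => (x:ℤ)^2) (↑B₁ : Multiset ℕ)).sum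
        = (B₁.map (fun x : ℕ => (x:ℤ)^2)).sum := by simp
    have hcB₂ : (Multiset.map (fun x : ℕ => (x:ℤ)^2) (↑B₂ : Multiset ℕ)).sum
        = (B₂.map (fun x : ℕ => (x:ℤ)^2)).sum := by simp
    have htot : (Multiset.map (fun x : ℕ => (x:ℤ)^2) m₁).sum
        + (Multiset.map (fun x : ℕ => (x:ℤ)^2) m₂).sum
        = (B₁.map (fun x : ℕ => (x:ℤ)^2)).sum + (B₂.map (fun x : ℕ => (x:ℤ)^2)).sum := by
      have h1 := congrArg (fun mm : Multiset ℕ => (Multiset.map (fun x : ℕ => (x:ℤ)^2) mm).sum) heq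
      simp only [Multiset.map_add, Multiset.sum_add] at h1
      rw [sqsum_filter_pos, sqsum_filter_pos] at h1
      rw [h1, hcB₁, hcB₂]
    have q₁ : (Multiset.map (fun x : ℕ => (x:ℤ)^2) m₁).sum = (B₁.map (fun x : ℕ => (x:ℤ)^2)).sum := by
      have := e₁.1; have := e₂.1; omega
    have q₂ : (Multiset.map (fun x : ℕ => (x:ℤ)^2) m₂).sum = (B₂.map (fun x : ℕ => (x:ℤ)^2)).sum := by
      have := e₁.1; have := e₂.1; omega
    have f₁ := e₁.2 q₁
    have f₂ := e₂.2 q₂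
    rw [show Multiset.filter (fun x => 0 < x) (↑B₁ : Multiset ℕ) = ↑B₁ from
      Multiset.filter_eq_self.mpr (fun x hx => hB₁.2 x (by exact_mod_cast hx))] at f₁
    rw [show Multiset.filter (fun x => 0 < x) (↑B₂ : Multiset ℕ) = ↑B₂ from
      Multiset.filter_eq_self.mpr (fun x hx => hB₂.2 x (by exact_mod_cast hx))] at f₂
    rcases hne with h | h
    exacts [h f₁, h f₂]

lemma mul_mem_span_of {S₁ S₂ S₃ : Set SymFn} {x y : SymFn} (hx : x ∈ Submodule.span ℤ S₁)
    (hy : y ∈ Submodule.span ℤ S₂) (h : S₁ * S₂ ⊆ S₃) :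
    x * y ∈ Submodule.span ℤ S₃ := by
  have h1 := Submodule.mul_mem_mul hx hy
  rw [Submodule.span_mul_span] at h1
  exact Submodule.span_mono h h1

lemma getD_eq_get (B : List ℕ) (i : ℕ) (h : i < B.length) : B.getD i 0 = B.get ⟨i, h⟩ := by
  rw [List.getD_eq_getElem B 0 h]
  rfl

lemma schur_expand {B : List ℕ} (hB : IsPartition B) {k : ℕ} (hmh : mainHook B ≤ k) :
    schur B - hProd B ∈ Submodule.span ℤ (ESet k B) := by
  classical
  have hdet : schur B = ∑ σ : Equiv.Perm (Fin B.length), Equiv.Perm.sign σ •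
      ∏ i : Fin B.length, hZ ((B.get i : ℤ) - ((i : ℕ) : ℤ) + (((σ i) : ℕ) : ℤ)) := by
    rw [schur, ← Matrix.det_transpose, Matrix.det_apply]
    apply Finset.sum_congr rfl
    intro σ _
    congr 1
  rw [hdet, ← Finset.add_sum_erase _ _ (Finset.mem_univ (1 : Equiv.Perm (Fin B.length)))]
  have hid : (Equiv.Perm.sign (1 : Equiv.Perm (Fin B.length))) •
      (∏ i : Fin B.length, hZ ((B.get i : ℤ) - ((i : ℕ) : ℤ)
        + ((((1 : Equiv.Perm (Fin B.length)) i) : ℕ) : ℤ))) = hProd B := by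
    rw [map_one, one_smul]
    calc (∏ i : Fin B.length, hZ ((B.get i : ℤ) - ((i : ℕ) : ℤ)
            + ((((1 : Equiv.Perm (Fin B.length)) i) : ℕ) : ℤ)))
        = ∏ i : Fin B.length, hh (B.get i) := by
          apply Finset.prod_congr rfl
          intro i _
          have h1 : ((B.get i : ℤ) - ((i : ℕ) : ℤ) + ((((1 : Equiv.Perm (Fin B.length)) i) : ℕ) : ℤ))
              = ((B.get i : ℕ) : ℤ) := by
            simp
          rw [h1, hZ_natCast]
      _ = hProd B := prod_fin_hh B
  rw [hid, add_sub_cancel_left]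
  apply Submodule.sum_mem
  intro σ hσ
  have hσ1 : σ ≠ 1 := (Finset.mem_erase.mp hσ).1
  rw [Units.smul_def]
  apply Submodule.smul_mem
  have hn : 1 ≤ B.length := by
    by_contra hc
    exact hσ1 (Equiv.ext fun i => absurd i.2 (by omega))
  set e : Fin B.length → ℤ :=
    fun i => (B.get i : ℤ) - ((i : ℕ) : ℤ) + (((σ i) : ℕ) : ℤ) with hedef
  by_cases hneg : ∃ i, e i < 0
  · obtain ⟨i, hi⟩ := hneg
    have h0 : hZ (e i) = 0 := by rw [hZ, if_pos hi]
    rw [Finset.prod_eq_zero (Finset.mem_univ i) h0]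
    exact Submodule.zero_mem _
  push_neg at hneg
  apply Submodule.subset_span
  show (∏ i : Fin B.length, hZ (e i)) ∈ ESet k B
  set m : Multiset ℕ := Multiset.map (fun i => (e i).toNat) Finset.univ.val with hmdef
  have hprodm : (∏ i : Fin B.length, hZ (e i)) = hprodM m := by
    rw [hprodM, hmdef, Multiset.map_map, Finset.prod_eq_multiset_prod]
    apply congrArg
    apply Multiset.map_congr rfl
    intro i _
    simp only [Function.comp_apply]
    rw [hZ, if_neg (not_lt.mpr (hneg i))]
  have hcard : Multiset.card m = B.length := by
    rw [hmdef, Multiset.card_map]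
    exact Finset.card_univ.trans (Fintype.card_fin _)
  have hmsum_cast : (m.sum : ℤ) = ∑ i : Fin B.length, e i := by
    rw [hmdef]
    have h0 : (Multiset.map (fun i => (e i).toNat) Finset.univ.val).sum
        = ∑ i : Fin B.length, (e i).toNat := rfl
    rw [h0, Nat.cast_sum]
    exact Finset.sum_congr rfl (fun i _ => Int.toNat_of_nonneg (hneg i))
  have hBsum_cast : ∑ i : Fin B.length, ((B.get i : ℕ) : ℤ) = (B.sum : ℤ) := by
    have h1 : ∀ i : Fin B.length, ((B.get i : ℕ) : ℤ) = ((B.getD (i : ℕ) 0 : ℕ) : ℤ) := by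
      intro i
      rw [getD_eq_get B (i : ℕ) i.2]
    rw [Finset.sum_congr rfl (fun i _ => h1 i),
      Fin.sum_univ_eq_sum_range (fun i => ((B.getD i 0 : ℕ) : ℤ)) B.length,
      sum_range_getD_take, List.take_of_length_le le_rfl]
  have hesum : ∑ i : Fin B.length, e i = (B.sum : ℤ) := by
    rw [hedef]
    simp only [Finset.sum_add_distrib, Finset.sum_sub_distrib]
    rw [Equiv.sum_comp σ (fun i : Fin B.length => ((i : ℕ) : ℤ))]
    rw [hBsum_cast]
    ring
  have hmsum : m.sum = B.sum := by
    have := hmsum_cast.trans hesum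
    exact_mod_cast this
  have hseg : ∀ t (ht : t ≤ B.length),
      ((B.take t).sum ≤ ((msortD m).take t).sum) ∧
      (((msortD m).take t).sum ≤ (B.take t).sum →
        Finset.image (fun j : Fin t => ((σ (Fin.castLE ht j)) : ℕ)) Finset.univ
          = Finset.range t) := by
    intro t ht
    set s : Multiset ℕ :=
      Multiset.map (fun j : Fin t => (e (Fin.castLE ht j)).toNat) Finset.univ.val with hsdef
    have hscard : Multiset.card s = t := by
      rw [hsdef, Multiset.card_map]
      exact Finset.card_univ.trans (Fintype.card_fin _)
    have hsle : s ≤ m := by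
      rw [hsdef, hmdef]
      have h1 : Multiset.map (fun j : Fin t => (e (Fin.castLE ht j)).toNat) Finset.univ.val
          = Multiset.map (fun i => (e i).toNat)
              (Multiset.map (Fin.castLE ht) Finset.univ.val) := by
        rw [Multiset.map_map]
        rfl
      rw [h1]
      apply Multiset.map_le_map
      refine (Multiset.le_iff_subset ?_).mpr ?_
      · exact Multiset.Nodup.map (Fin.castLE_injective ht) Finset.univ.nodup
      · intro x _
        exact Finset.mem_univ x
    have hstop : s.sum ≤ ((msortD m).take t).sum := by
      have := top_lemma (msortD m) (msortD_sorted m) s (by rw [msortD_coe]; exact hsle)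
      rwa [hscard] at this
    set T : Finset ℕ :=
      Finset.image (fun j : Fin t => ((σ (Fin.castLE ht j)) : ℕ)) Finset.univ with hTdef
    have hinj : Function.Injective (fun j : Fin t => ((σ (Fin.castLE ht j)) : ℕ)) := by
      intro a b hab
      exact Fin.castLE_injective ht (σ.injective (Fin.val_injective hab))
    have hTcard : T.card = t := by
      rw [hTdef, Finset.card_image_of_injective _ hinj]
      exact Finset.card_univ.trans (Fintype.card_fin _)
    obtain ⟨hmin1, hmin2⟩ := minsum t T hTcard
    have hTsum : ∑ x ∈ T, x = ∑ j : Fin t, ((σ (Fin.castLE ht j)) : ℕ) := by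
      rw [hTdef]
      exact Finset.sum_image (fun a _ b _ h => hinj h)
    have hssum : (s.sum : ℤ) = ((B.take t).sum : ℤ)
        + ((∑ x ∈ T, x : ℕ) : ℤ) - ((∑ j ∈ Finset.range t, j : ℕ) : ℤ) := by
      have h1 : (s.sum : ℤ) = ∑ j : Fin t, e (Fin.castLE ht j) := by
        rw [hsdef]
        have h0 : (Multiset.map (fun j : Fin t => (e (Fin.castLE ht j)).toNat)
            Finset.univ.val).sum = ∑ j : Fin t, (e (Fin.castLE ht j)).toNat := rfl
        rw [h0, Nat.cast_sum]
        exact Finset.sum_congr rfl (fun j _ => Int.toNat_of_nonneg (hneg _))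
      have h2 : ∀ j : Fin t, e (Fin.castLE ht j)
          = ((B.getD (j : ℕ) 0 : ℕ) : ℤ) - ((j : ℕ) : ℤ)
            + (((σ (Fin.castLE ht j)) : ℕ) : ℤ) := by
        intro j
        rw [hedef]
        simp only []
        rw [getD_eq_get B (j : ℕ) (by have := j.2; omega)]
        have hcc : ((Fin.castLE ht j : Fin B.length) : ℕ) = (j : ℕ) := Fin.coe_castLE ht j
        rw [show (⟨(j : ℕ), by have := j.2; omega⟩ : Fin B.length) = Fin.castLE ht j from
          Fin.ext hcc.symm]
        rw [hcc]
      rw [h1, Finset.sum_congr rfl (fun j _ => h2 j)]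
      rw [Finset.sum_add_distrib, Finset.sum_sub_distrib]
      have h3 : ∑ j : Fin t, ((B.getD (j : ℕ) 0 : ℕ) : ℤ) = ((B.take t).sum : ℤ) := by
        rw [Fin.sum_univ_eq_sum_range (fun i => ((B.getD i 0 : ℕ) : ℤ)) t]
        exact sum_range_getD_take B t
      have h4 : ∑ j : Fin t, ((j : ℕ) : ℤ) = ((∑ j ∈ Finset.range t, j : ℕ) : ℤ) := by
        rw [Nat.cast_sum]
        exact Fin.sum_univ_eq_sum_range (fun i => (i : ℤ)) t
      have h5 : ∑ j : Fin t, (((σ (Fin.castLE ht j)) : ℕ) : ℤ)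
          = ((∑ x ∈ T, x : ℕ) : ℤ) := by
        rw [hTsum, Nat.cast_sum]
      rw [h3, h4, h5]
      ring
    constructor
    · have hc1 : ((B.take t).sum : ℤ) ≤ (s.sum : ℤ) := by
        rw [hssum]
        have : ((∑ j ∈ Finset.range t, j : ℕ) : ℤ) ≤ ((∑ x ∈ T, x : ℕ) : ℤ) := by
          exact_mod_cast hmin1
        omega
      have hc2 : (B.take t).sum ≤ s.sum := by exact_mod_cast hc1
      omega
    · intro hle
      have hc3 : (s.sum : ℤ) ≤ ((B.take t).sum : ℤ) := by
        exact_mod_cast le_trans hstop hle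
      rw [hssum] at hc3
      have h7 : (∑ x ∈ T, x) ≤ ∑ j ∈ Finset.range t, j := by
        have : ((∑ x ∈ T, x : ℕ) : ℤ) ≤ ((∑ j ∈ Finset.range t, j : ℕ) : ℤ) := by omega
        exact_mod_cast this
      exact hmin2 (le_antisymm h7 hmin1)
  have hDomM : DomM m B := by
    intro t
    rcases le_or_gt t B.length with ht | ht
    · exact (hseg t ht).1
    · rw [List.take_of_length_le (by omega), List.take_of_length_le ?_]
      · rw [msortD_sum, hmsum]
      · rw [msortD_length, hcard]
        omega
  have hbound : ∀ x ∈ m, x ≤ k := by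
    intro x hx
    rw [hmdef] at hx
    obtain ⟨i, _, rfl⟩ := Multiset.mem_map.mp hx
    have hgi : B.get i ≤ B.headI := le_headI_of_sorted hB.1 _ (B.get_mem _)
    have hσi : ((σ i : Fin B.length) : ℕ) ≤ B.length - 1 := by
      have := (σ i).2
      omega
    have h1 : e i ≤ ((B.headI + (B.length - 1) : ℕ) : ℤ) := by
      rw [hedef]
      simp only []
      have hi0 : (0 : ℤ) ≤ ((i : ℕ) : ℤ) := by positivity
      push_cast
      push_cast at hσi
      omega
    have h2 : B.headI + (B.length - 1) ≤ k := by
      unfold mainHook at hmh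
      omega
    rw [Int.toNat_le]
    calc e i ≤ ((B.headI + (B.length - 1) : ℕ) : ℤ) := h1
      _ ≤ (k : ℤ) := by exact_mod_cast h2
  have hstrict : Multiset.filter (fun x => 0 < x) m ≠ ↑B := by
    intro hfeq
    apply hσ1
    apply sigma_eq_one σ
    intro t ht
    have hup : ((msortD m).take t).sum ≤ (B.take t).sum := by
      calc ((msortD m).take t).sum
          ≤ (((msortD m).filter (fun x => decide (0 < x))).take t).sum :=
            take_sum_le_filter_pos _ (msortD_sorted m) t
        _ = ((msortD (m.filter (fun x => 0 < x))).take t).sum := by rw [msortD_filter_pos]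
        _ = ((msortD ↑B).take t).sum := by rw [hfeq]
        _ = (B.take t).sum := by rw [msortD_eq_self hB.1]
    exact (hseg t ht).2 hup
  exact ⟨m, hcard, hmsum, hDomM, hbound, hstrict, hprodm⟩

lemma hProd_append (l₁ l₂ : List ℕ) : hProd (l₁ ++ l₂) = hProd l₁ * hProd l₂ := by
  simp [hProd]

lemma prod_schur_expand (k : ℕ) : ∀ (bs : List (List ℕ)),
    (∀ B ∈ bs, IsPartition B ∧ mainHook B ≤ k) → IsPartition bs.flatten →
    (bs.map schur).prod - hProd bs.flatten ∈ Submodule.span ℤ (ESet k bs.flatten) := by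
  intro bs
  induction bs with
  | nil =>
    intro _ _
    simp only [List.map_nil, List.prod_nil, List.flatten_nil]
    rw [show hProd [] = 1 from rfl, sub_self]
    exact Submodule.zero_mem _
  | cons B bs ih =>
    intro hbs hj
    simp only [List.flatten_cons] at hj ⊢
    have hB : IsPartition B := (hbs B (by simp)).1
    have hmh : mainHook B ≤ k := (hbs B (by simp)).2
    have hJ : IsPartition bs.flatten := by
      constructor
      · exact hj.1.sublist (List.sublist_append_right B _)
      · intro x hx
        exact hj.2 x (List.mem_append_right _ hx)
    have hbk : ∀ x ∈ B, x ≤ k := part_le_k hB hmh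
    have hjk : ∀ x ∈ bs.flatten, x ≤ k := by
      intro x hx
      obtain ⟨B', hB', hxB'⟩ := List.mem_flatten.mp hx
      exact part_le_k (hbs B' (List.mem_cons_of_mem _ hB')).1 (hbs B' (List.mem_cons_of_mem _ hB')).2 x hxB'
    have hx := schur_expand hB hmh
    have hy := ih (fun B' h => hbs B' (List.mem_cons_of_mem _ h)) hJ
    have hBdiag : hProd B = hprodM ↑B := (hprodM_coe B).symm
    have hJdiag : hProd bs.flatten = hprodM ↑bs.flatten := (hprodM_coe bs.flatten).symm
    have key : (List.map schur (B :: bs)).prod - hProd (B ++ bs.flatten)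
        = hProd B * ((bs.map schur).prod - hProd bs.flatten)
        + (schur B - hProd B) * hProd bs.flatten
        + (schur B - hProd B) * ((bs.map schur).prod - hProd bs.flatten) := by
      rw [List.map_cons, List.prod_cons, hProd_append]
      ring
    rw [key]
    have m1 : hProd B * ((bs.map schur).prod - hProd bs.flatten)
        ∈ Submodule.span ℤ (ESet k (B ++ bs.flatten)) := by
      apply mul_mem_span_of (S₁ := {hProd B}) (S₂ := ESet k bs.flatten)
        (Submodule.mem_span_singleton_self _) hy
      rintro f hf
      rw [Set.mem_mul] at hf
      obtain ⟨x, hxs, y, hys, rfl⟩ := hf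
      rw [Set.mem_singleton_iff] at hxs
      subst hxs
      obtain ⟨m₂, hc₂, hs₂, hd₂, hb₂, hne₂, rfl⟩ := hys
      rw [hBdiag]
      exact Emul hB hJ (by simp) (by simp) (DomM_coe_self hB.1)
        (fun x hx => hbk x (by exact_mod_cast hx)) hc₂ hs₂ hd₂ hb₂ (Or.inr hne₂)
    have m2 : (schur B - hProd B) * hProd bs.flatten
        ∈ Submodule.span ℤ (ESet k (B ++ bs.flatten)) := by
      apply mul_mem_span_of (S₁ := ESet k B) (S₂ := {hProd bs.flatten}) hx
        (Submodule.mem_span_singleton_self _)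
      rintro f hf
      rw [Set.mem_mul] at hf
      obtain ⟨x, hxs, y, hys, rfl⟩ := hf
      rw [Set.mem_singleton_iff] at hys
      subst hys
      obtain ⟨m₁, hc₁, hs₁, hd₁, hb₁, hne₁, rfl⟩ := hxs
      rw [hJdiag]
      exact Emul hB hJ hc₁ hs₁ hd₁ hb₁ (by simp) (by simp) (DomM_coe_self hJ.1)
        (fun x hx => hjk x (by exact_mod_cast hx)) (Or.inl hne₁)
    have m3 : (schur B - hProd B) * ((bs.map schur).prod - hProd bs.flatten)
        ∈ Submodule.span ℤ (ESet k (B ++ bs.flatten)) := by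
      apply mul_mem_span_of (S₁ := ESet k B) (S₂ := ESet k bs.flatten) hx hy
      rintro f hf
      rw [Set.mem_mul] at hf
      obtain ⟨x, hxs, y, hys, rfl⟩ := hf
      obtain ⟨m₁, hc₁, hs₁, hd₁, hb₁, hne₁, rfl⟩ := hxs
      obtain ⟨m₂, hc₂, hs₂, hd₂, hb₂, hne₂, rfl⟩ := hys
      exact Emul hB hJ hc₁ hs₁ hd₁ hb₁ hc₂ hs₂ hd₂ hb₂ (Or.inl hne₁)
    exact Submodule.add_mem _ (Submodule.add_mem _ m1 m2) m3

lemma kSplitAux_props {k : ℕ} (hk : 1 ≤ k) : ∀ (fuel : ℕ) (l : List ℕ), l.length ≤ fuel →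
    IsPartition l → KBounded k l →
    (kSplitAux k fuel l).flatten = l ∧
      ∀ B ∈ kSplitAux k fuel l, IsPartition B ∧ mainHook B ≤ k := by
  intro fuel
  induction fuel with
  | zero =>
    intro l hl _ _
    have : l = [] := List.length_eq_zero_iff.mp (by omega)
    subst this
    simp [kSplitAux]
  | succ fuel ih =>
    intro l hl hp hb
    cases l with
    | nil => simp [kSplitAux]
    | cons a rest =>
      have ha : 1 ≤ a := hp.2 a (by simp)
      have hak : a ≤ k := hb a (by simp)
      have hcne : ¬ (k + 1 - a = 0) := by omega
      rw [kSplitAux]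
      by_cases hcase : (a :: rest).length ≤ k + 1 - a ∨ k + 1 - a = 0
      · rw [if_pos hcase]
        have hlen : (a :: rest).length ≤ k + 1 - a := hcase.resolve_right hcne
        refine ⟨by simp, ?_⟩
        intro C hC
        simp only [List.mem_singleton] at hC
        subst hC
        refine ⟨hp, ?_⟩
        unfold mainHook
        simp only [List.headI_cons]
        have : (a :: rest).length = rest.length + 1 := rfl
        omega
      · rw [if_neg hcase]
        push_neg at hcase
        obtain ⟨hlen, -⟩ := hcase
        have h1 : IsPartition ((a :: rest).take (k + 1 - a)) := by
          constructor
          · exact hp.1.sublist (List.take_sublist _ _)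
          · intro x hx
            exact hp.2 x (List.mem_of_mem_take hx)
        have h2 : IsPartition ((a :: rest).drop (k + 1 - a)) := by
          constructor
          · exact hp.1.sublist (List.drop_sublist _ _)
          · intro x hx
            exact hp.2 x (List.mem_of_mem_drop hx)
        have hlen2 : ((a :: rest).drop (k + 1 - a)).length ≤ fuel := by
          rw [List.length_drop]
          have : (a :: rest).length ≤ fuel + 1 := hl
          omega
        have hb2 : KBounded k ((a :: rest).drop (k + 1 - a)) :=
          fun x hx => hb x (List.mem_of_mem_drop hx)
        obtain ⟨hjoin, hblocks⟩ := ih _ hlen2 h2 hb2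
        constructor
        · simp only [List.flatten_cons, hjoin, List.take_append_drop]
        · intro C hC
          rcases List.mem_cons.mp hC with rfl | hC
          · refine ⟨h1, ?_⟩
            have hlc : ((a :: rest).take (k + 1 - a)).length = k + 1 - a := by
              rw [List.length_take]
              omega
            have hhead : ((a :: rest).take (k + 1 - a)).headI = a := by
              obtain ⟨c', hc'⟩ : ∃ c', k + 1 - a = c' + 1 := ⟨k - a, by omega⟩
              rw [hc', List.take_succ_cons]
              rfl
            unfold mainHook
            rw [hlc, hhead]
            omega
          · exact hblocks C hC

lemma Gk_expand {k : ℕ} (hk : 1 ≤ k) {l : List ℕ} (hl : IsPartition l) (hb : KBounded k l) :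
    Gk k l - hProd l ∈ Submodule.span ℤ (ESet k l) := by
  obtain ⟨hjoin, hblocks⟩ := kSplitAux_props hk l.length l le_rfl hl hb
  have := prod_schur_expand k (kSplit k l) (fun B hB => hblocks B hB) (by rw [show (kSplit k l).flatten = l from hjoin]; exact hl)
  rw [show (kSplit k l).flatten = l from hjoin] at this
  exact this

/-- Strictly dominating `k`-bounded partitions of the same size. -/
def SSet (k : ℕ) (l : List ℕ) : Set (List ℕ) :=
  {μ | IsPartition μ ∧ KBounded k μ ∧ μ.sum = l.sum ∧ Dominates μ l ∧ μ ≠ l}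

lemma ESet_subset_image {k : ℕ} {l : List ℕ} (hl : IsPartition l) :
    ESet k l ⊆ hProd '' SSet k l := by
  rintro f ⟨m, hc, hs, hd, hbd, hne, rfl⟩
  have hmemf : ∀ x ∈ msortD (m.filter (fun x => 0 < x)), x ∈ m.filter (fun x => 0 < x) := by
    intro x hx
    have : x ∈ (↑(msortD (m.filter (fun x => 0 < x))) : Multiset ℕ) := by exact_mod_cast hx
    rwa [msortD_coe] at this
  refine ⟨msortD (m.filter (fun x => 0 < x)), ⟨⟨msortD_sorted _, ?_⟩, ?_, ?_, dominates_of_DomM hd, ?_⟩, ?_⟩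
  · intro x hx
    exact (Multiset.mem_filter.mp (hmemf x hx)).2
  · intro x hx
    exact hbd x (Multiset.mem_filter.mp (hmemf x hx)).1
  · rw [msortD_sum, sum_filter_pos, hs]
  · intro h
    apply hne
    have := congrArg (fun L : List ℕ => (↑L : Multiset ℕ)) h
    simpa only [msortD_coe] using this
  · show hProd _ = hprodM m
    rw [← hprodM_filter_pos m, ← hprodM_coe, msortD_coe]

lemma eq_of_take_sums {l : List ℕ} : ∀ {μ : List ℕ}, (∀ x ∈ l, 0 < x) → (∀ x ∈ μ, 0 < x) →
    (∀ t, (l.take t).sum = (μ.take t).sum) → l = μ := by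
  induction l with
  | nil =>
    intro μ _ hμ h
    cases μ with
    | nil => rfl
    | cons b μ' =>
      have h1 := h 1
      simp at h1
      have := hμ b (by simp)
      omega
  | cons a l' ih =>
    intro μ hl hμ h
    cases μ with
    | nil =>
      have h1 := h 1
      simp at h1
      have := hl a (by simp)
      omega
    | cons b μ' =>
      have h1 := h 1
      simp at h1
      have htail : ∀ t, (l'.take t).sum = (μ'.take t).sum := by
        intro t
        have h2 := h (t + 1)
        simp only [List.take_succ_cons, List.sum_cons, h1] at h2
        omega
      rw [h1, ih (fun x hx => hl x (by simp [hx])) (fun x hx => hμ x (by simp [hx])) htail]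

lemma dominates_antisymm {l μ : List ℕ} (hl : IsPartition l) (hμ : IsPartition μ)
    (h1 : Dominates μ l) (h2 : Dominates l μ) : μ = l :=
  (eq_of_take_sums hl.2 hμ.2 (fun t => le_antisymm (h1 t) (h2 t))).symm

lemma SSet_trans {k : ℕ} {l μ : List ℕ} (hl : IsPartition l) (hμ : μ ∈ SSet k l) :
    SSet k μ ⊆ SSet k l := by
  rintro ν ⟨p1, p2, p3, p4, p5⟩
  refine ⟨p1, p2, p3.trans hμ.2.2.1, fun t => (hμ.2.2.2.1 t).trans (p4 t), ?_⟩
  intro h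
  subst h
  exact hμ.2.2.2.2 (dominates_antisymm hl hμ.1 hμ.2.2.2.1 p4)

lemma length_le_sum : ∀ (l : List ℕ), (∀ x ∈ l, 0 < x) → l.length ≤ l.sum := by
  intro l
  induction l with
  | nil => simp
  | cons a l' ih =>
    intro h
    have := ih (fun x hx => h x (by simp [hx]))
    have := h a (by simp)
    simp only [List.length_cons, List.sum_cons]
    omega

def meas (l : List ℕ) : ℕ :=
  l.sum * (l.sum + 1) - ∑ t ∈ Finset.range (l.sum + 1), (l.take t).sum

lemma meas_lt {k : ℕ} {l μ : List ℕ} (hl : IsPartition l) (hμ : μ ∈ SSet k l) :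
    meas μ < meas l := by
  obtain ⟨hp, -, hsum, hdom, hne⟩ := hμ
  have key : ∑ t ∈ Finset.range (l.sum + 1), (l.take t).sum
      < ∑ t ∈ Finset.range (l.sum + 1), (μ.take t).sum := by
    apply Finset.sum_lt_sum (fun t _ => hdom t)
    by_contra hcon
    push_neg at hcon
    apply hne
    apply eq_of_take_sums hp.2 hl.2
    intro t
    rcases le_or_gt t l.sum with ht | ht
    · exact le_antisymm (hcon t (Finset.mem_range.mpr (by omega))) (hdom t)
    · rw [List.take_of_length_le (le_trans (length_le_sum μ hp.2) (by omega)),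
        List.take_of_length_le (le_trans (length_le_sum l hl.2) (by omega)), hsum]
  have hb : ∑ t ∈ Finset.range (l.sum + 1), (μ.take t).sum ≤ l.sum * (l.sum + 1) := by
    calc ∑ t ∈ Finset.range (l.sum + 1), (μ.take t).sum
        ≤ ∑ _t ∈ Finset.range (l.sum + 1), l.sum := by
          apply Finset.sum_le_sum
          intro t _
          exact le_trans (take_sum_le_sum μ t) (le_of_eq hsum)
      _ = l.sum * (l.sum + 1) := by
          rw [Finset.sum_const, Finset.card_range]
          ring
  have hmμ : meas μ = l.sum * (l.sum + 1) - ∑ t ∈ Finset.range (l.sum + 1), (μ.take t).sum := by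
    unfold meas
    rw [hsum]
  rw [hmμ]
  unfold meas
  omega

lemma hProd_sub_Gk_mem {k : ℕ} (hk : 1 ≤ k) :
    ∀ (N : ℕ) (l : List ℕ), IsPartition l → KBounded k l → meas l < N →
      hProd l - Gk k l ∈ Submodule.span ℤ (Gk k '' SSet k l) := by
  intro N
  induction N with
  | zero => intro l _ _ h; omega
  | succ N ih =>
    intro l hl hb hm
    have h1 : Gk k l - hProd l ∈ Submodule.span ℤ (hProd '' SSet k l) :=
      Submodule.span_mono (ESet_subset_image hl) (Gk_expand hk hl hb)
    have h2 : Submodule.span ℤ (hProd '' SSet k l) ≤ Submodule.span ℤ (Gk k '' SSet k l) := by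
      rw [Submodule.span_le]
      rintro f ⟨μ, hμ, rfl⟩
      have e1 : hProd μ - Gk k μ ∈ Submodule.span ℤ (Gk k '' SSet k μ) :=
        ih μ hμ.1 hμ.2.1 (by have := meas_lt hl hμ; omega)
      have e2 : Submodule.span ℤ (Gk k '' SSet k μ) ≤ Submodule.span ℤ (Gk k '' SSet k l) :=
        Submodule.span_mono (Set.image_mono (SSet_trans hl hμ))
      have e3 : hProd μ = Gk k μ + (hProd μ - Gk k μ) := by ring
      rw [SetLike.mem_coe, e3]
      exact Submodule.add_mem _ (Submodule.subset_span ⟨μ, hμ, rfl⟩) (e2 e1)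
    have h3 : hProd l - Gk k l = -(Gk k l - hProd l) := by ring
    rw [h3]
    exact Submodule.neg_mem _ (h2 h1)

lemma spanH_le_spanG {k : ℕ} (hk : 1 ≤ k) {l : List ℕ} (hl : IsPartition l) :
    Submodule.span ℤ (hProd '' SSet k l) ≤ Submodule.span ℤ (Gk k '' SSet k l) := by
  rw [Submodule.span_le]
  rintro f ⟨μ, hμ, rfl⟩
  have e1 : hProd μ - Gk k μ ∈ Submodule.span ℤ (Gk k '' SSet k μ) :=
    hProd_sub_Gk_mem hk (meas μ + 1) μ hμ.1 hμ.2.1 (by omega)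
  have e2 : Submodule.span ℤ (Gk k '' SSet k μ) ≤ Submodule.span ℤ (Gk k '' SSet k l) :=
    Submodule.span_mono (Set.image_mono (SSet_trans hl hμ))
  have e3 : hProd μ = Gk k μ + (hProd μ - Gk k μ) := by ring
  rw [SetLike.mem_coe, e3]
  exact Submodule.add_mem _ (Submodule.subset_span ⟨μ, hμ, rfl⟩) (e2 e1)

lemma spanG_le_spanH {k : ℕ} (hk : 1 ≤ k) {l : List ℕ} (hl : IsPartition l) :
    Submodule.span ℤ (Gk k '' SSet k l) ≤ Submodule.span ℤ (hProd '' SSet k l) := by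
  rw [Submodule.span_le]
  rintro f ⟨μ, hμ, rfl⟩
  have e1 : Gk k μ - hProd μ ∈ Submodule.span ℤ (hProd '' SSet k μ) :=
    Submodule.span_mono (ESet_subset_image hμ.1) (Gk_expand hk hμ.1 hμ.2.1)
  have e2 : Submodule.span ℤ (hProd '' SSet k μ) ≤ Submodule.span ℤ (hProd '' SSet k l) :=
    Submodule.span_mono (Set.image_mono (SSet_trans hl hμ))
  have e3 : Gk k μ = hProd μ + (Gk k μ - hProd μ) := by ring
  rw [SetLike.mem_coe, e3]
  exact Submodule.add_mem _ (Submodule.subset_span ⟨μ, hμ, rfl⟩) (e2 e1)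

lemma schur_single (a : ℕ) : schur [a] = hh a := by
  show Matrix.det (Matrix.of fun i j : Fin 1 =>
    hZ ((([a] : List ℕ).get i : ℤ) - ((i : ℕ) : ℤ) + ((j : ℕ) : ℤ))) = hh a
  rw [Matrix.det_fin_one]
  show hZ (((a : ℕ) : ℤ) - ((0:ℕ):ℤ) + ((0:ℕ):ℤ)) = hh a
  have h1 : ((a : ℕ) : ℤ) - ((0:ℕ):ℤ) + ((0:ℕ):ℤ) = ((a:ℕ) : ℤ) := by simp
  rw [h1, hZ_natCast]

lemma hProd_cons (a : ℕ) (l : List ℕ) : hProd (a :: l) = hh a * hProd l := by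
  simp [hProd]

lemma hh_mul_mem {k a : ℕ} {rest μ : List ℕ} (hpart : IsPartition (a :: rest))
    (hb : KBounded k (a :: rest)) (hμ : μ ∈ SSet k rest) :
    hh a * hProd μ ∈ hProd '' SSet k (a :: rest) := by
  obtain ⟨hp, hbd, hsum, hdom, hne⟩ := hμ
  have ha : 0 < a := hpart.2 a (by simp)
  have hd : DomM ((a ::ₘ ↑μ) : Multiset ℕ) (a :: rest) := by
    have h1 : DomM (↑([a] : List ℕ)) [a] := DomM_coe_self (by simp)
    have h2 : DomM ↑μ rest := by
      intro t
      rw [msortD_eq_self hp.1]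
      exact hdom t
    have h3 := DomM_append (B₁ := [a]) (B₂ := rest) (by simp) (by simp) h1 h2
    have h4 : ((↑([a] : List ℕ) : Multiset ℕ) + ↑μ) = (a ::ₘ ↑μ : Multiset ℕ) := by
      simp
    have h5 : ([a] ++ rest : List ℕ) = a :: rest := rfl
    rwa [h4, h5] at h3
  have hposm : Multiset.filter (fun x => 0 < x) ((a ::ₘ ↑μ) : Multiset ℕ) = (a ::ₘ ↑μ : Multiset ℕ) := by
    apply Multiset.filter_eq_self.mpr
    intro x hx
    rcases Multiset.mem_cons.mp hx with rfl | hx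
    · exact ha
    · exact hp.2 x (by exact_mod_cast hx)
  have hmemf : ∀ x ∈ msortD ((a ::ₘ ↑μ) : Multiset ℕ), x ∈ ((a ::ₘ ↑μ) : Multiset ℕ) := by
    intro x hx
    have : x ∈ (↑(msortD ((a ::ₘ ↑μ) : Multiset ℕ)) : Multiset ℕ) := by exact_mod_cast hx
    rwa [msortD_coe] at this
  refine ⟨msortD ((a ::ₘ ↑μ) : Multiset ℕ), ⟨⟨msortD_sorted _, ?_⟩, ?_, ?_, ?_, ?_⟩, ?_⟩
  · intro x hx
    rcases Multiset.mem_cons.mp (hmemf x hx) with h | hx'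
    · rw [h]; exact ha
    · exact hp.2 x (by exact_mod_cast hx')
  · intro x hx
    rcases Multiset.mem_cons.mp (hmemf x hx) with h | hx'
    · rw [h]; exact hb a (by simp)
    · exact hbd x (by exact_mod_cast hx')
  · rw [msortD_sum]
    simp only [Multiset.sum_cons, List.sum_cons]
    rw [show (↑μ : Multiset ℕ).sum = μ.sum by simp, hsum]
  · have := dominates_of_DomM hd
    rwa [hposm] at this
  · intro h
    apply hne
    have h1 := congrArg (fun L : List ℕ => (↑L : Multiset ℕ)) h
    simp only [msortD_coe] at h1
    have h2 : (↑μ : Multiset ℕ) = ↑rest := by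
      have : (a ::ₘ (↑μ : Multiset ℕ)) = a ::ₘ (↑rest : Multiset ℕ) := by
        rw [h1]
        simp
      exact (Multiset.cons_inj_right a).mp this
    have hperm : μ.Perm rest := Multiset.coe_eq_coe.mp h2
    exact List.Perm.eq_of_pairwise' hp.1 (hpart.1.sublist (List.sublist_cons_self a rest)) hperm
  · show hProd _ = hh a * hProd μ
    rw [← hprodM_coe, msortD_coe, hprodM_cons, ← hprodM_coe μ]

lemma kSchur_span {k : ℕ} (hk : 1 ≤ k) (T : ℕ → (SymFn →ₗ[ℚ] SymFn)) (hT : ProjOps k T) :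
    ∀ l, IsPartition l → KBounded k l →
      kSchurWith T l - hProd l ∈ Submodule.span ℤ (hProd '' SSet k l) := by
  intro l
  induction l with
  | nil =>
    intro _ _
    rw [show kSchurWith T [] = 1 from rfl, show hProd [] = 1 from rfl, sub_self]
    exact Submodule.zero_mem _
  | cons a rest ih =>
    intro hp hb
    have hp' : IsPartition rest :=
      ⟨hp.1.sublist (List.sublist_cons_self a rest), fun x hx => hp.2 x (List.mem_cons_of_mem _ hx)⟩
    have hb' : KBounded k rest := fun x hx => hb x (List.mem_cons_of_mem _ hx)
    have hy := ih hp' hb'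
    have step1 : hh a * kSchurWith T rest - hProd (a :: rest)
        ∈ Submodule.span ℤ (hProd '' SSet k (a :: rest)) := by
      have hrw : hh a * kSchurWith T rest - hProd (a :: rest)
          = hh a * (kSchurWith T rest - hProd rest) := by
        rw [hProd_cons]
        ring
      rw [hrw]
      have h1 : hh a * (kSchurWith T rest - hProd rest)
          ∈ Submodule.map (LinearMap.mulLeft ℤ (hh a))
              (Submodule.span ℤ (hProd '' SSet k rest)) := ⟨_, hy, rfl⟩
      rw [Submodule.map_span] at h1
      refine Submodule.span_le.mpr ?_ h1
      rintro f ⟨g, ⟨μ, hμ, rfl⟩, rfl⟩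
      exact Submodule.subset_span (hh_mul_mem hp hb hμ)
    have step2 : hh a * kSchurWith T rest - Gk k (a :: rest)
        ∈ Submodule.span ℤ (Gk k '' SSet k (a :: rest)) := by
      have hrw : hh a * kSchurWith T rest - Gk k (a :: rest)
          = (hh a * kSchurWith T rest - hProd (a :: rest)) + (hProd (a :: rest) - Gk k (a :: rest)) := by
        ring
      rw [hrw]
      exact Submodule.add_mem _ (spanH_le_spanG hk hp step1)
        (hProd_sub_Gk_mem hk (meas (a :: rest) + 1) _ hp hb (by omega))
    have step3 : kSchurWith T (a :: rest) - Gk k (a :: rest)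
        ∈ Submodule.span ℤ (Gk k '' SSet k (a :: rest)) := by
      have hTG : T a (Gk k (a :: rest)) = Gk k (a :: rest) := by
        rw [hT a (a :: rest) hp hb, show (a :: rest).headI = a from rfl, if_pos rfl]
      have hrw : kSchurWith T (a :: rest) - Gk k (a :: rest)
          = T a (hh a * kSchurWith T rest - Gk k (a :: rest)) := by
        rw [show kSchurWith T (a :: rest) = T a (schur [a] * kSchurWith T rest) from rfl,
          schur_single, map_sub, hTG]
      rw [hrw]
      have h1 : T a (hh a * kSchurWith T rest - Gk k (a :: rest))
          ∈ Submodule.map ((T a).restrictScalars ℤ)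
              (Submodule.span ℤ (Gk k '' SSet k (a :: rest))) := ⟨_, step2, rfl⟩
      rw [Submodule.map_span] at h1
      refine Submodule.span_le.mpr ?_ h1
      rintro f ⟨g, ⟨μ, hμ, rfl⟩, rfl⟩
      show ((T a).restrictScalars ℤ) (Gk k μ) ∈ (Submodule.span ℤ (Gk k '' SSet k (a :: rest)) : Set SymFn)
      have h2 : ((T a).restrictScalars ℤ) (Gk k μ) = T a (Gk k μ) := rfl
      rw [h2, hT a μ hμ.1 hμ.2.1]
      split_ifs
      · exact Submodule.subset_span ⟨μ, hμ, rfl⟩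
      · exact Submodule.zero_mem _
    have hfinal : kSchurWith T (a :: rest) - hProd (a :: rest)
        = (kSchurWith T (a :: rest) - Gk k (a :: rest)) + (Gk k (a :: rest) - hProd (a :: rest)) := by
      ring
    rw [hfinal]
    exact Submodule.add_mem _ (spanG_le_spanH hk hp step3)
      (Submodule.span_mono (ESet_subset_image hp) (Gk_expand hk hp hb))

end KAux

/-- For any `k`-bounded partition `λ`, the `k`-Schur function
expands unitriangularly in the homogeneous basis with integer coefficients and
`k`-bounded indices: `s_λ^{(k)} = h_λ + Σ_{μ > λ, μ₁ ≤ k} d_{λμ}^{(k)} h_μ`. -/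
theorem kSchur_h_unitriangular (k : ℕ) (hk : 1 ≤ k)
    (T : ℕ → (SymFn →ₗ[ℚ] SymFn)) (hT : ProjOps k T)
    (l : List ℕ) (hl : IsPartition l) (hb : KBounded k l) :
    ∃ (A : Finset (List ℕ)) (d : List ℕ → ℤ),
      (∀ μ ∈ A, IsPartition μ ∧ KBounded k μ ∧ μ.sum = l.sum ∧ Dominates μ l ∧ μ ≠ l) ∧
      kSchurWith T l = hProd l + ∑ μ ∈ A, (d μ : ℚ) • hProd μ := by
  classical
  have hx := KAux.kSchur_span hk T hT l hl hb
  rw [Submodule.mem_span_set] at hx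
  obtain ⟨c, hsupp, hsum⟩ := hx
  have hch : ∀ f ∈ c.support, ∃ μ, μ ∈ KAux.SSet k l ∧ hProd μ = f := by
    intro f hf
    obtain ⟨μ, hμ, hf2⟩ := hsupp hf
    exact ⟨μ, hμ, hf2⟩
  set g : SymFn → List ℕ := fun f =>
    if h : ∃ μ, μ ∈ KAux.SSet k l ∧ hProd μ = f then h.choose else [] with hgdef
  have hgspec : ∀ f ∈ c.support, g f ∈ KAux.SSet k l ∧ hProd (g f) = f := by
    intro f hf
    have h := hch f hf
    rw [hgdef]
    simp only [dif_pos h]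
    exact h.choose_spec
  set A : Finset (List ℕ) := c.support.image g with hAdef
  refine ⟨A, fun ν => c (hProd ν), ?_, ?_⟩
  · intro μ hμ
    rw [hAdef, Finset.mem_image] at hμ
    obtain ⟨f, hf, rfl⟩ := hμ
    exact (hgspec f hf).1
  · have hinj : ∀ x ∈ c.support, ∀ y ∈ c.support, g x = g y → x = y := by
      intro x hx y hy hxy
      rw [← (hgspec x hx).2, ← (hgspec y hy).2, hxy]
    have hsum2 : ∑ μ ∈ A, ((c (hProd μ) : ℚ)) • hProd μ
        = ∑ f ∈ c.support, ((c f : ℚ)) • f := by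
      rw [hAdef, Finset.sum_image hinj]
      apply Finset.sum_congr rfl
      intro f hf
      rw [(hgspec f hf).2]
    have hsum3 : ∑ f ∈ c.support, ((c f : ℚ)) • f = kSchurWith T l - hProd l := by
      rw [← hsum]
      rw [Finsupp.sum]
      apply Finset.sum_congr rfl
      intro f _
      rw [Int.cast_smul_eq_zsmul]
    rw [hsum2, hsum3]
    ring
end
end

section
/- The k-Schur functions {s_λ^{(k)}}, indexed by the k-bounded partitions λ, form a basis of the vector space Λ^{(k)}. -/
open scoped BigOperators Classical

noncomputable section

-- batch 1 lemmas appended after defs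
namespace KS

def wtL (l : List ℕ) : ℕ := (l.map (fun x => x*x)).sum
def eMul (m : Multiset ℕ) : SymFn := (m.map hh).prod
def wtM (m : Multiset ℕ) : ℕ := (m.map (fun x => x*x)).sum
def Bdd (k : ℕ) (m : Multiset ℕ) : Prop := ∀ x ∈ m, 0 < x ∧ x ≤ k
def toPart (m : Multiset ℕ) : List ℕ := (m.sort (· ≤ ·)).reverse

lemma eMul_coe (l : List ℕ) : eMul ↑l = hProd l := by
  simp [eMul, hProd]

lemma eMul_zero : eMul 0 = 1 := by simp [eMul]

lemma eMul_cons (a : ℕ) (m : Multiset ℕ) : eMul (a ::ₘ m) = hh a * eMul m := by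
  simp [eMul]

lemma eMul_add (m₁ m₂ : Multiset ℕ) : eMul (m₁ + m₂) = eMul m₁ * eMul m₂ := by
  simp [eMul]

lemma wtM_coe (l : List ℕ) : wtM ↑l = wtL l := by simp [wtM, wtL]

lemma hh_pos (a : ℕ) (ha : 0 < a) : hh a = MvPolynomial.X (a - 1) := by
  cases a with
  | zero => omega
  | succ b => simp [hh]

lemma eMul_monomial (m : Multiset ℕ) (hm : ∀ x ∈ m, 0 < x) :
    eMul m = MvPolynomial.monomial (Multiset.toFinsupp (m.map (· - 1))) 1 := by
  induction m using Multiset.induction_on with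
  | empty => simp [eMul]
  | cons a s ih =>
    rw [eMul_cons, ih (fun x hx => hm x (Multiset.mem_cons_of_mem hx)),
      hh_pos a (hm a (Multiset.mem_cons_self a s))]
    rw [MvPolynomial.X, MvPolynomial.monomial_mul, Multiset.map_cons,
      show (a-1) ::ₘ Multiset.map (· - 1) s = {a-1} + Multiset.map (· - 1) s from
        (Multiset.singleton_add _ _).symm,
      Multiset.toFinsupp_add, Multiset.toFinsupp_singleton]
    simp

lemma map_sub_one_inj {m₁ m₂ : Multiset ℕ} (h₁ : ∀ x ∈ m₁, 0 < x) (h₂ : ∀ x ∈ m₂, 0 < x)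
    (h : m₁.map (· - 1) = m₂.map (· - 1)) : m₁ = m₂ := by
  have e : ∀ m : Multiset ℕ, (∀ x ∈ m, 0 < x) → (m.map (· - 1)).map (· + 1) = m := by
    intro m hm
    rw [Multiset.map_map]
    rw [show m = Multiset.map id m by simp]
    rw [Multiset.map_map]
    apply Multiset.map_congr rfl
    intro x hx
    have := hm x (by simpa using hx)
    simp; omega
  rw [← e m₁ h₁, ← e m₂ h₂, h]

lemma eMul_inj {m₁ m₂ : Multiset ℕ} (h₁ : ∀ x ∈ m₁, 0 < x) (h₂ : ∀ x ∈ m₂, 0 < x)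
    (h : eMul m₁ = eMul m₂) : m₁ = m₂ := by
  rw [eMul_monomial m₁ h₁, eMul_monomial m₂ h₂] at h
  have := MvPolynomial.monomial_left_injective (one_ne_zero) h
  exact map_sub_one_inj h₁ h₂ (Multiset.toFinsupp.injective this)

lemma toPart_coe (m : Multiset ℕ) : (↑(toPart m) : Multiset ℕ) = m := by
  simp [toPart]

lemma toPart_sorted (m : Multiset ℕ) : (toPart m).Pairwise (· ≥ ·) := by
  have h := Multiset.pairwise_sort m (· ≤ ·)
  unfold toPart
  rw [List.pairwise_reverse]
  exact h

lemma sorted_eq_of_coe_eq {l₁ l₂ : List ℕ} (h₁ : l₁.Pairwise (· ≥ ·)) (h₂ : l₂.Pairwise (· ≥ ·))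
    (h : (↑l₁ : Multiset ℕ) = ↑l₂) : l₁ = l₂ :=
  List.Perm.eq_of_pairwise (fun _ _ _ _ h1 h2 => le_antisymm h2 h1) h₁ h₂ (Quotient.exact h)

lemma toPart_of_sorted {l : List ℕ} (h : l.Pairwise (· ≥ ·)) : toPart ↑l = l :=
  sorted_eq_of_coe_eq (toPart_sorted _) h (toPart_coe _)

lemma eMul_toPart (m : Multiset ℕ) : eMul m = hProd (toPart m) := by
  rw [← eMul_coe, toPart_coe]

end KS
namespace KS

variable {k : ℕ}

abbrev Idx (k : ℕ) := {l : List ℕ // IsPartition l ∧ KBounded k l}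

lemma hProd_linearIndependent (k : ℕ) :
    LinearIndependent ℚ (fun l : Idx k => hProd l.1) := by
  have key : (fun l : Idx k => hProd l.1) =
      (MvPolynomial.basisMonomials ℕ ℚ) ∘
        (fun l : Idx k => Multiset.toFinsupp ((↑l.1 : Multiset ℕ).map (· - 1))) := by
    funext l
    simp only [Function.comp, MvPolynomial.coe_basisMonomials]
    rw [← eMul_coe, eMul_monomial (↑l.1 : Multiset ℕ) (fun x hx => l.2.1.2 x (by simpa using hx))]
  rw [key]
  exact (MvPolynomial.basisMonomials ℕ ℚ).linearIndependent.comp _ (by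
    intro l₁ l₂ h
    apply Subtype.ext
    apply sorted_eq_of_coe_eq l₁.2.1.1 l₂.2.1.1
    exact map_sub_one_inj (fun x hx => l₁.2.1.2 x (by simpa using hx))
      (fun x hx => l₂.2.1.2 x (by simpa using hx)) (Multiset.toFinsupp.injective h))

def HigherSet (k n w : ℕ) : Set SymFn :=
  {f | ∃ m : Multiset ℕ, Bdd k m ∧ m.sum = n ∧ w < wtM m ∧ f = eMul m}

def HigherH (k n w : ℕ) : Submodule ℚ SymFn := Submodule.span ℚ (HigherSet k n w)

def HigherG (k n w : ℕ) : Submodule ℚ SymFn :=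
  Submodule.span ℚ
    {f | ∃ l : List ℕ, IsPartition l ∧ KBounded k l ∧ l.sum = n ∧ w < wtL l ∧ f = Gk k l}

lemma wtM_add (m₁ m₂ : Multiset ℕ) : wtM (m₁ + m₂) = wtM m₁ + wtM m₂ := by simp [wtM]

lemma wtM_le {m : Multiset ℕ} (hm : Bdd k m) : wtM m ≤ k * m.sum := by
  induction m using Multiset.induction_on with
  | empty => simp [wtM]
  | cons a s ih =>
    have ha := hm a (Multiset.mem_cons_self a s)
    have hs := ih (fun x hx => hm x (Multiset.mem_cons_of_mem hx))
    simp only [wtM, Multiset.map_cons, Multiset.sum_cons] at *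
    have : a * a ≤ k * a := Nat.mul_le_mul_right a ha.2
    rw [Nat.mul_add]; omega

lemma higherH_mono {n w w' : ℕ} (h : w ≤ w') : HigherH k n w' ≤ HigherH k n w := by
  apply Submodule.span_mono
  rintro f ⟨m, hb, hs, hw, rfl⟩
  exact ⟨m, hb, hs, lt_of_le_of_lt h hw, rfl⟩

lemma higherG_mono {n w w' : ℕ} (h : w ≤ w') : HigherG k n w' ≤ HigherG k n w := by
  apply Submodule.span_mono
  rintro f ⟨l, hp, hb, hs, hw, rfl⟩
  exact ⟨l, hp, hb, hs, lt_of_le_of_lt h hw, rfl⟩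

lemma eMul_mul_higherH {n w : ℕ} {f : SymFn} (m₀ : Multiset ℕ) (hb : Bdd k m₀)
    (hf : f ∈ HigherH k n w) : eMul m₀ * f ∈ HigherH k (m₀.sum + n) (wtM m₀ + w) := by
  induction hf using Submodule.span_induction with
  | mem g hg =>
    obtain ⟨m, hmb, hms, hmw, rfl⟩ := hg
    rw [← eMul_add]
    exact Submodule.subset_span ⟨m₀ + m, fun x hx => by
      rcases Multiset.mem_add.1 hx with h | h
      · exact hb x h
      · exact hmb x h, by simp [hms], by rw [wtM_add]; omega, rfl⟩
  | zero => simp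
  | add g₁ g₂ _ _ h₁ h₂ => rw [mul_add]; exact Submodule.add_mem _ h₁ h₂
  | smul c g _ h => rw [mul_smul_comm]; exact Submodule.smul_mem _ _ h

lemma higherH_mul_higherH {n₁ w₁ n₂ w₂ : ℕ} {f g : SymFn}
    (hf : f ∈ HigherH k n₁ w₁) (hg : g ∈ HigherH k n₂ w₂) :
    f * g ∈ HigherH k (n₁ + n₂) (w₁ + w₂) := by
  induction hf using Submodule.span_induction with
  | mem f' hf' =>
    obtain ⟨m, hmb, hms, hmw, rfl⟩ := hf'
    have := eMul_mul_higherH m hmb hg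
    rw [hms] at this
    exact higherH_mono (by omega) this
  | zero => simp
  | add g₁ g₂ _ _ h₁ h₂ => rw [add_mul]; exact Submodule.add_mem _ h₁ h₂
  | smul c g' _ h => rw [smul_mul_assoc]; exact Submodule.smul_mem _ _ h

end KS
namespace KS

lemma hZ_natCast (a : ℕ) : hZ (a : ℤ) = hh a := by
  rw [hZ, if_neg (by omega)]
  simp

lemma prod_map_eq {M : Type*} [CommMonoid M] (f : ℕ → M) :
    ∀ l : List ℕ, (l.map f).prod = ∏ i : Fin l.length, f (l.get i)
  | [] => by simp
  | a :: t => by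
    simp only [List.map_cons, List.prod_cons, List.length_cons]
    rw [Fin.prod_univ_succ, prod_map_eq f t]
    rfl

lemma sum_map_eq {M : Type*} [AddCommMonoid M] (f : ℕ → M) :
    ∀ l : List ℕ, (l.map f).sum = ∑ i : Fin l.length, f (l.get i)
  | [] => by simp
  | a :: t => by
    simp only [List.map_cons, List.sum_cons, List.length_cons]
    rw [Fin.sum_univ_succ, sum_map_eq f t]
    rfl

lemma hProd_eq_prod (l : List ℕ) : hProd l = ∏ i : Fin l.length, hh (l.get i) :=
  prod_map_eq hh l

lemma sum_eq_sum_get (l : List ℕ) : l.sum = ∑ i : Fin l.length, l.get i := by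
  have h := sum_map_eq (id : ℕ → ℕ) l
  rw [List.map_id] at h
  exact h

lemma wtL_eq_sum_get (l : List ℕ) : wtL l = ∑ i : Fin l.length, l.get i * l.get i :=
  sum_map_eq _ l

lemma mem_le_headI {l : List ℕ} (hs : l.Pairwise (· ≥ ·)) {x : ℕ} (hx : x ∈ l) : x ≤ l.headI := by
  cases l with
  | nil => simp at hx
  | cons a t =>
    rcases List.mem_cons.1 hx with rfl | h
    · simp
    · exact (List.pairwise_cons.1 hs).1 x h

lemma sum_filter_pos (m : Multiset ℕ) : (m.filter (fun x => 0 < x)).sum = m.sum := by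
  conv_rhs => rw [← Multiset.filter_add_not (fun x => 0 < x) m]
  rw [Multiset.sum_add]
  have : (m.filter (fun x => ¬ 0 < x)).sum = 0 := by
    apply Multiset.sum_eq_zero
    intro x hx
    have := (Multiset.mem_filter.1 hx).2
    omega
  omega

lemma wtM_filter_pos (m : Multiset ℕ) : wtM (m.filter (fun x => 0 < x)) = wtM m := by
  conv_rhs => rw [← Multiset.filter_add_not (fun x => 0 < x) m]
  rw [wtM_add]
  have : wtM (m.filter (fun x => ¬ 0 < x)) = 0 := by
    apply Multiset.sum_eq_zero
    intro x hx
    obtain ⟨y, hy, rfl⟩ := Multiset.mem_map.1 hx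
    have hy2 := (Multiset.mem_filter.1 hy).2
    have hy0 : y = 0 := by omega
    simp [hy0]
  omega

lemma eMul_filter_pos (m : Multiset ℕ) : eMul (m.filter (fun x => 0 < x)) = eMul m := by
  conv_rhs => rw [← Multiset.filter_add_not (fun x => 0 < x) m]
  rw [eMul_add]
  have : eMul (m.filter (fun x => ¬ 0 < x)) = 1 := by
    apply Multiset.prod_eq_one
    intro x hx
    obtain ⟨y, hy, rfl⟩ := Multiset.mem_map.1 hx
    have : y = 0 := by have := (Multiset.mem_filter.1 hy).2; omega
    simp [this, hh]
  rw [this, mul_one]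

lemma perm_eq_one_of_strictMono {n : ℕ} (π : Equiv.Perm (Fin n)) (h : StrictMono π) :
    π = 1 := by
  have he : StrictMono.orderIsoOfSurjective (⇑π) h π.surjective = OrderIso.refl (Fin n) :=
    Subsingleton.elim _ _
  apply Equiv.ext
  intro i
  have h1 := congrFun (StrictMono.coe_orderIsoOfSurjective (⇑π) h π.surjective) i
  rw [he] at h1
  rw [Equiv.Perm.one_apply]
  simpa using h1.symm

lemma key_rearrange {n : ℕ} (gZ : Fin n → ℤ) (hmono : ∀ i j : Fin n, i < j → gZ j < gZ i)
    (π : Equiv.Perm (Fin n)) (hπ : π ≠ 1) :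
    ∑ j : Fin n, gZ j * ((j : ℕ) : ℤ) < ∑ j : Fin n, gZ j * ((π j : ℕ) : ℤ) := by
  have hfg : Antivary gZ (fun j : Fin n => ((j : ℕ) : ℤ)) := by
    intro i j hij
    have hij' : i < j := by simpa using hij
    exact le_of_lt (hmono i j hij')
  have hnot : ¬ Antivary gZ ((fun j : Fin n => ((j : ℕ) : ℤ)) ∘ π) := by
    intro hA
    apply hπ
    apply perm_eq_one_of_strictMono
    intro i j hij
    rcases lt_trichotomy (π i) (π j) with h | h | h
    · exact h
    · exact absurd (π.injective h) (ne_of_lt hij)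
    · exfalso
      have hcast : ((fun j : Fin n => ((j:ℕ):ℤ)) ∘ π) j < ((fun j : Fin n => ((j:ℕ):ℤ)) ∘ π) i := by
        simp only [Function.comp_apply]
        exact_mod_cast h
      exact absurd (hA hcast) (not_le.2 (hmono i j hij))
  have hlt := (Antivary.sum_smul_lt_sum_smul_comp_perm_iff (σ := π) hfg).2 hnot
  simpa [smul_eq_mul] using hlt

end KS
namespace KS

lemma intCast_mul_mem {z : ℤ} {P : SymFn} {N : Submodule ℚ SymFn} (hP : P ∈ N) :
    ((z : SymFn) * P) ∈ N := by
  rw [show ((z : SymFn)) = MvPolynomial.C ((z : ℚ)) from (map_intCast _ _).symm,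
    ← MvPolynomial.smul_eq_C_mul]
  exact N.smul_mem _ hP

lemma schur_expand {k : ℕ} {l : List ℕ} (hs : l.Pairwise (· ≥ ·)) (hp : ∀ x ∈ l, 0 < x)
    (hmh : mainHook l ≤ k) : schur l - hProd l ∈ HigherH k l.sum (wtL l) := by
  classical
  have hterm : ∀ σ : Equiv.Perm (Fin l.length), σ ≠ 1 →
      (∏ i : Fin l.length, hZ ((l.get (σ i) : ℤ) - ((σ i : ℕ) : ℤ) + ((i : ℕ) : ℤ)))
        ∈ HigherH k l.sum (wtL l) := by
    intro σ hσ
    by_cases hneg : ∀ i : Fin l.length, 0 ≤ (l.get (σ i) : ℤ) - ((σ i : ℕ) : ℤ) + ((i : ℕ) : ℤ)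
    · -- all entries nonnegative
      have hn0 : 0 < l.length := by
        by_contra h
        exact hσ (Equiv.ext fun i => absurd i.isLt (by omega))
      have hh1 : 1 ≤ l.headI := by
        cases l with
        | nil => simp at hn0
        | cons a t => exact hp a (List.mem_cons_self)
      have hmh' : l.headI + l.length - 1 ≤ k := hmh
      set b : Fin l.length → ℕ :=
        fun i => ((l.get (σ i) : ℤ) - ((σ i : ℕ) : ℤ) + ((i : ℕ) : ℤ)).toNat with hbdef
      have hbZ : ∀ i, ((b i : ℕ) : ℤ) = (l.get (σ i) : ℤ) - ((σ i : ℕ) : ℤ) + ((i : ℕ) : ℤ) :=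
        fun i => Int.toNat_of_nonneg (hneg i)
      have hprod : (∏ i : Fin l.length, hZ ((l.get (σ i) : ℤ) - ((σ i : ℕ) : ℤ) + ((i : ℕ) : ℤ)))
          = eMul (Multiset.map b Finset.univ.val) := by
        rw [eMul, Multiset.map_map, ← Finset.prod_eq_multiset_prod]
        apply Finset.prod_congr rfl
        intro i _
        rw [← hbZ i, hZ_natCast]
        rfl
      rw [hprod, ← eMul_filter_pos]
      apply Submodule.subset_span
      refine ⟨_, ?_, ?_, ?_, rfl⟩
      · -- bounded
        intro x hx
        have hx' := Multiset.mem_filter.1 hx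
        obtain ⟨i, _, rfl⟩ := Multiset.mem_map.1 hx'.1
        refine ⟨hx'.2, ?_⟩
        have h1 := hbZ i
        have h2 : l.get (σ i) ≤ l.headI := mem_le_headI hs (l.get_mem _)
        have h3 : ((i : ℕ)) < l.length := i.isLt
        omega
      · -- sum
        rw [sum_filter_pos]
        have h1 : (Multiset.map b Finset.univ.val).sum = ∑ i : Fin l.length, b i :=
          (Finset.sum_eq_multiset_sum _ _).symm
        rw [h1]
        have h2 : ((∑ i : Fin l.length, b i : ℕ) : ℤ) = ((l.sum : ℕ) : ℤ) := by
          push_cast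
          rw [Finset.sum_congr rfl (fun i _ => hbZ i), Finset.sum_add_distrib,
            Finset.sum_sub_distrib,
            Equiv.sum_comp σ (fun j : Fin l.length => (l.get j : ℤ)),
            Equiv.sum_comp σ (fun j : Fin l.length => ((j : ℕ) : ℤ)),
            show ((List.map (Nat.cast : ℕ → ℤ) l).sum = ∑ i : Fin l.length, (l.get i : ℤ)) from
              sum_map_eq _ l]
          ring
        exact_mod_cast h2
      · -- weight
        rw [wtM_filter_pos]
        have h1 : wtM (Multiset.map b Finset.univ.val) = ∑ i : Fin l.length, b i * b i := by
          rw [wtM, Multiset.map_map, ← Finset.sum_eq_multiset_sum]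
          rfl
        rw [h1]
        set gZ : Fin l.length → ℤ := fun j => (l.get j : ℤ) - ((j : ℕ) : ℤ) with hgZ
        have hmono : ∀ i j : Fin l.length, i < j → gZ j < gZ i := by
          intro i j hij
          have hget : l.get j ≤ l.get i := hs.rel_get_of_lt hij
          have hc : ((i : ℕ) : ℤ) < ((j : ℕ) : ℤ) := by exact_mod_cast hij
          simp only [hgZ]
          omega
        have hπ : σ.symm ≠ 1 := fun h => hσ (by rw [← Equiv.symm_symm σ, h]; rfl)
        have keyr := key_rearrange gZ hmono σ.symm hπ
        have e3 : ∑ i : Fin l.length, gZ (σ i) * gZ (σ i) = ∑ j, gZ j * gZ j :=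
          Equiv.sum_comp σ (fun j => gZ j * gZ j)
        have e4 : ∑ i : Fin l.length, gZ (σ i) * ((i : ℕ) : ℤ)
            = ∑ j, gZ j * ((σ.symm j : ℕ) : ℤ) := by
          rw [← Equiv.sum_comp σ (fun j => gZ j * ((σ.symm j : ℕ) : ℤ))]
          apply Finset.sum_congr rfl
          intro i _
          rw [Equiv.symm_apply_apply]
        have expand : ∀ i : Fin l.length, ((b i : ℕ) : ℤ) * ((b i : ℕ) : ℤ)
            = gZ (σ i) * gZ (σ i) + 2 * (gZ (σ i) * ((i : ℕ) : ℤ)) + ((i : ℕ) : ℤ) * ((i : ℕ) : ℤ) := by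
          intro i
          rw [hbZ i]
          simp only [hgZ]
          ring
        have E : ((∑ i : Fin l.length, b i * b i : ℕ) : ℤ)
            = ∑ j, gZ j * gZ j + 2 * (∑ j, gZ j * ((σ.symm j : ℕ) : ℤ))
              + ∑ i : Fin l.length, ((i : ℕ) : ℤ) * ((i : ℕ) : ℤ) := by
          push_cast
          rw [Finset.sum_congr rfl (fun i _ => expand i), Finset.sum_add_distrib,
            Finset.sum_add_distrib, ← Finset.mul_sum, e3, e4]
        have expand2 : ∀ j : Fin l.length, (l.get j : ℤ) * (l.get j : ℤ)
            = gZ j * gZ j + 2 * (gZ j * ((j : ℕ) : ℤ)) + ((j : ℕ) : ℤ) * ((j : ℕ) : ℤ) := by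
          intro j
          simp only [hgZ]
          ring
        have F : ((wtL l : ℕ) : ℤ)
            = ∑ j, gZ j * gZ j + 2 * (∑ j, gZ j * ((j : ℕ) : ℤ))
              + ∑ j : Fin l.length, ((j : ℕ) : ℤ) * ((j : ℕ) : ℤ) := by
          rw [wtL_eq_sum_get]
          push_cast
          rw [Finset.sum_congr rfl (fun j _ => expand2 j), Finset.sum_add_distrib,
            Finset.sum_add_distrib, ← Finset.mul_sum]
        have hfin : ((wtL l : ℕ) : ℤ) < ((∑ i : Fin l.length, b i * b i : ℕ) : ℤ) := by
          rw [F, E]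
          linarith [keyr]
        exact_mod_cast hfin
    · push_neg at hneg
      obtain ⟨i, hi⟩ := hneg
      have hzero : (∏ i : Fin l.length,
          hZ ((l.get (σ i) : ℤ) - ((σ i : ℕ) : ℤ) + ((i : ℕ) : ℤ))) = 0 :=
        Finset.prod_eq_zero (Finset.mem_univ i) (by rw [hZ, if_pos (by omega)])
      rw [hzero]
      exact Submodule.zero_mem _
  rw [schur, Matrix.det_apply']
  simp only [Matrix.of_apply]
  rw [← Finset.add_sum_erase _ _ (Finset.mem_univ (1 : Equiv.Perm (Fin l.length)))]
  have hone : ((Equiv.Perm.sign (1 : Equiv.Perm (Fin l.length)) : ℤ) : SymFn) *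
      (∏ i : Fin l.length,
        hZ ((l.get ((1 : Equiv.Perm (Fin l.length)) i) : ℤ)
          - (((1 : Equiv.Perm (Fin l.length)) i : ℕ) : ℤ) + ((i : ℕ) : ℤ))) = hProd l := by
    simp only [Equiv.Perm.one_apply, map_one, Units.val_one, Int.cast_one, one_mul]
    rw [hProd_eq_prod]
    apply Finset.prod_congr rfl
    intro i _
    rw [show (l.get i : ℤ) - ((i : ℕ) : ℤ) + ((i : ℕ) : ℤ) = ((l.get i : ℕ) : ℤ) by ring,
      hZ_natCast]
  rw [hone, add_sub_cancel_left]
  apply Submodule.sum_mem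
  intro σ hσ'
  exact intCast_mul_mem (hterm σ (Finset.mem_erase.1 hσ').1)

end KS
namespace KS

lemma join_cons' {α : Type*} (b : List α) (bs : List (List α)) :
    (b :: bs).flatten = b ++ bs.flatten := by
  simp

lemma kSplitAux_spec (k : ℕ) :
    ∀ (fuel : ℕ) (l : List ℕ), l.length ≤ fuel → l.Pairwise (· ≥ ·) →
      (∀ x ∈ l, 0 < x ∧ x ≤ k) →
      (kSplitAux k fuel l).flatten = l ∧
        ∀ b ∈ kSplitAux k fuel l,
          b.Pairwise (· ≥ ·) ∧ (∀ x ∈ b, 0 < x ∧ x ≤ k) ∧ mainHook b ≤ k := by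
  intro fuel
  induction fuel with
  | zero =>
    intro l hl _ _
    have h0 : l = [] := List.length_eq_zero_iff.1 (Nat.le_antisymm hl (Nat.zero_le _))
    subst h0
    simp [kSplitAux]
  | succ fuel ih =>
    intro l hl hs hb
    cases l with
    | nil => simp [kSplitAux]
    | cons a rest =>
      have ha := hb a (List.mem_cons_self)
      rw [kSplitAux]
      by_cases hcase : (a :: rest).length ≤ k + 1 - a ∨ k + 1 - a = 0
      · rw [if_pos hcase]
        refine ⟨by simp, ?_⟩
        intro b hbmem
        rw [List.mem_singleton] at hbmem
        subst hbmem
        refine ⟨hs, hb, ?_⟩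
        have hlen : (a :: rest).length ≤ k + 1 - a := by
          rcases hcase with h | h
          · exact h
          · omega
        rw [mainHook]
        simp only [List.headI, List.length_cons] at *
        omega
      · rw [if_neg hcase]
        push_neg at hcase
        obtain ⟨hlong, ht0⟩ := hcase
        have hsub : ((a :: rest).drop (k + 1 - a)).Pairwise (· ≥ ·) :=
          hs.sublist (List.drop_sublist _ _)
        have hdrop := ih ((a :: rest).drop (k + 1 - a))
          (by rw [List.length_drop]; simp only [List.length_cons] at *; omega)
          hsub (fun x hx => hb x (List.drop_subset _ _ hx))
        constructor
        · rw [join_cons', hdrop.1, List.take_append_drop]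
        · intro b hbmem
          rcases List.mem_cons.1 hbmem with rfl | h
          · refine ⟨hs.sublist (List.take_sublist _ _),
              fun x hx => hb x (List.take_subset _ _ hx), ?_⟩
            obtain ⟨t', ht'⟩ : ∃ t', k + 1 - a = t' + 1 := ⟨k - a, by omega⟩
            rw [ht', List.take_succ_cons, mainHook]
            simp only [List.headI, List.length_cons, List.length_take,
              List.length_cons] at *
            omega
          · exact hdrop.2 b h

lemma kSplit_spec {k : ℕ} {l : List ℕ} (hs : l.Pairwise (· ≥ ·))
    (hb : ∀ x ∈ l, 0 < x ∧ x ≤ k) :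
    (kSplit k l).flatten = l ∧
      ∀ b ∈ kSplit k l, b.Pairwise (· ≥ ·) ∧ (∀ x ∈ b, 0 < x ∧ x ≤ k) ∧ mainHook b ≤ k :=
  kSplitAux_spec k l.length l le_rfl hs hb

lemma hProd_append (l₁ l₂ : List ℕ) : hProd (l₁ ++ l₂) = hProd l₁ * hProd l₂ := by
  simp [hProd]

lemma wtL_append (l₁ l₂ : List ℕ) : wtL (l₁ ++ l₂) = wtL l₁ + wtL l₂ := by
  simp [wtL]

lemma blocks_expand {k : ℕ} : ∀ bs : List (List ℕ),
    (∀ b ∈ bs, b.Pairwise (· ≥ ·) ∧ (∀ x ∈ b, 0 < x ∧ x ≤ k) ∧ mainHook b ≤ k) →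
    ((bs.map schur).prod - hProd bs.flatten) ∈ HigherH k bs.flatten.sum (wtL bs.flatten)
  | [], _ => by
    simp only [List.map_nil, List.prod_nil, List.flatten_nil]
    rw [show hProd [] = 1 from by simp [hProd], sub_self]
    exact Submodule.zero_mem _
  | b :: bs, h => by
    have hb := h b (List.mem_cons_self)
    have hR2 := blocks_expand bs (fun b' hb' => h b' (List.mem_cons_of_mem b hb'))
    have hR1 := schur_expand hb.1 (fun x hx => (hb.2.1 x hx).1) hb.2.2
    set R1 := schur b - hProd b with hR1def
    set R2 := (bs.map schur).prod - hProd bs.flatten with hR2def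
    have e1 : schur b = hProd b + R1 := by rw [hR1def]; ring
    have e2 : (bs.map schur).prod = hProd bs.flatten + R2 := by rw [hR2def]; ring
    have key : ((b :: bs).map schur).prod - hProd ((b :: bs).flatten)
        = hProd b * R2 + R1 * hProd bs.flatten + R1 * R2 := by
      rw [List.map_cons, List.prod_cons, join_cons', hProd_append, e1, e2]
      ring
    rw [key, join_cons', List.sum_append, wtL_append]
    have hbb : Bdd k (↑b : Multiset ℕ) := fun x hx => hb.2.1 x (by simpa using hx)
    have hbj : Bdd k (↑bs.flatten : Multiset ℕ) := by
      intro x hx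
      obtain ⟨b', hb', hxb⟩ := List.mem_flatten.1 (by simpa using hx)
      exact (h b' (List.mem_cons_of_mem b hb')).2.1 x hxb
    refine Submodule.add_mem _ (Submodule.add_mem _ ?_ ?_) ?_
    · have := eMul_mul_higherH (↑b : Multiset ℕ) hbb hR2
      rw [eMul_coe, wtM_coe, Multiset.sum_coe] at this
      exact this
    · rw [mul_comm]
      have := eMul_mul_higherH (↑bs.flatten : Multiset ℕ) hbj hR1
      rw [eMul_coe, wtM_coe, Multiset.sum_coe] at this
      rw [show b.sum + bs.flatten.sum = bs.flatten.sum + b.sum from by omega,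
        show wtL b + wtL bs.flatten = wtL bs.flatten + wtL b from by omega]
      exact this
    · exact higherH_mul_higherH hR1 hR2

lemma Gk_expand {k : ℕ} {l : List ℕ} (hs : l.Pairwise (· ≥ ·))
    (hb : ∀ x ∈ l, 0 < x ∧ x ≤ k) :
    Gk k l - hProd l ∈ HigherH k l.sum (wtL l) := by
  obtain ⟨hj, hblocks⟩ := kSplit_spec hs hb
  have := blocks_expand (kSplit k l) hblocks
  rw [hj] at this
  exact this

end KS
namespace KS

lemma toPart_mem {m : Multiset ℕ} {x : ℕ} : x ∈ toPart m ↔ x ∈ m := by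
  rw [← Multiset.mem_coe, toPart_coe]

lemma toPart_sum (m : Multiset ℕ) : (toPart m).sum = m.sum := by
  rw [← Multiset.sum_coe, toPart_coe]

lemma wtL_toPart (m : Multiset ℕ) : wtL (toPart m) = wtM m := by
  rw [← wtM_coe, toPart_coe]

lemma toPart_isPartition {k : ℕ} {m : Multiset ℕ} (hb : Bdd k m) :
    IsPartition (toPart m) :=
  ⟨toPart_sorted m, fun x hx => (hb x (toPart_mem.1 hx)).1⟩

lemma toPart_kBounded {k : ℕ} {m : Multiset ℕ} (hb : Bdd k m) :
    KBounded k (toPart m) :=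
  fun x hx => (hb x (toPart_mem.1 hx)).2

lemma eMul_G_aux (k : ℕ) : ∀ (N : ℕ) (m : Multiset ℕ), Bdd k m →
    k * m.sum - wtM m < N →
    eMul m - Gk k (toPart m) ∈ HigherG k m.sum (wtM m) := by
  intro N
  induction N with
  | zero => intro m _ h; omega
  | succ N ih =>
    intro m hb hN
    have hGk := Gk_expand (toPart_sorted m)
      (fun x hx => ⟨(hb x (toPart_mem.1 hx)).1, (hb x (toPart_mem.1 hx)).2⟩)
    rw [toPart_sum, wtL_toPart] at hGk
    have heq : eMul m - Gk k (toPart m) = -(Gk k (toPart m) - hProd (toPart m)) := by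
      rw [eMul_toPart]; ring
    rw [heq]
    apply Submodule.neg_mem
    refine Submodule.span_le.2 ?_ hGk
    rintro f ⟨m', hb', hs', hw', rfl⟩
    have hle' : wtM m' ≤ k * m'.sum := wtM_le hb'
    have hm' : k * m'.sum - wtM m' < N := by
      rw [hs'] at hle' ⊢
      omega
    have hrec := ih m' hb' hm'
    have heq2 : eMul m' = Gk k (toPart m') + (eMul m' - Gk k (toPart m')) := by ring
    rw [SetLike.mem_coe, heq2]
    apply Submodule.add_mem
    · apply Submodule.subset_span
      exact ⟨toPart m', toPart_isPartition hb', toPart_kBounded hb',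
        by rw [toPart_sum, hs'], by rw [wtL_toPart]; exact hw', rfl⟩
    · rw [hs'] at hrec
      exact higherG_mono (le_of_lt hw') hrec

lemma eMul_G {k : ℕ} {m : Multiset ℕ} (hb : Bdd k m) :
    eMul m - Gk k (toPart m) ∈ HigherG k m.sum (wtM m) :=
  eMul_G_aux k (k * m.sum - wtM m + 1) m hb (Nat.lt_succ_self _)

lemma higherH_le_higherG (k n w : ℕ) : HigherH k n w ≤ HigherG k n w := by
  refine Submodule.span_le.2 ?_
  rintro f ⟨m, hb, hs, hw, rfl⟩
  have heq : eMul m = Gk k (toPart m) + (eMul m - Gk k (toPart m)) := by ring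
  rw [SetLike.mem_coe, heq]
  apply Submodule.add_mem
  · apply Submodule.subset_span
    exact ⟨toPart m, toPart_isPartition hb, toPart_kBounded hb,
      by rw [toPart_sum, hs], by rw [wtL_toPart]; exact hw, rfl⟩
  · have h := eMul_G hb
    rw [hs] at h
    exact higherG_mono (le_of_lt hw) h

lemma higherG_le_higherH (k n w : ℕ) : HigherG k n w ≤ HigherH k n w := by
  refine Submodule.span_le.2 ?_
  rintro f ⟨l, hp, hkb, hs, hw, rfl⟩
  have hGk := Gk_expand hp.1 (fun x hx => ⟨hp.2 x hx, hkb x hx⟩)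
  have heq : Gk k l = hProd l + (Gk k l - hProd l) := by ring
  rw [SetLike.mem_coe, heq]
  apply Submodule.add_mem
  · apply Submodule.subset_span
    exact ⟨(↑l : Multiset ℕ), fun x hx => ⟨hp.2 x (by simpa using hx), hkb x (by simpa using hx)⟩,
      by rw [Multiset.sum_coe, hs], by rw [wtM_coe]; omega, (eMul_coe l).symm⟩
  · rw [hs] at hGk
    exact higherH_mono (le_of_lt hw) hGk

lemma T_higherG {k n w : ℕ} (T : ℕ → (SymFn →ₗ[ℚ] SymFn)) (hT : ProjOps k T) (j : ℕ)
    {f : SymFn} (hf : f ∈ HigherG k n w) : T j f ∈ HigherG k n w := by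
  induction hf using Submodule.span_induction with
  | mem g hg =>
    obtain ⟨l, hp, hkb, hsum, hw, rfl⟩ := hg
    rw [hT j l hp hkb]
    split
    · exact Submodule.subset_span ⟨l, hp, hkb, hsum, hw, rfl⟩
    · exact Submodule.zero_mem _
  | zero => simp
  | add g₁ g₂ _ _ h₁ h₂ => rw [map_add]; exact Submodule.add_mem _ h₁ h₂
  | smul c g _ hg => rw [map_smul]; exact Submodule.smul_mem _ _ hg

lemma Gk_nil (k : ℕ) : Gk k [] = 1 := by
  simp [Gk, kSplit, kSplitAux]

lemma schur_single (a : ℕ) : schur [a] = hh a := by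
  have h : schur [a] = hZ ((([a].get (0 : Fin 1) : ℕ) : ℤ)
      - (((0 : Fin 1) : ℕ) : ℤ) + (((0 : Fin 1) : ℕ) : ℤ)) := Matrix.det_fin_one _
  rw [h]
  have : (([a].get (0 : Fin 1) : ℕ) : ℤ) - (((0 : Fin 1) : ℕ) : ℤ) + (((0 : Fin 1) : ℕ) : ℤ)
      = ((a : ℕ) : ℤ) := by simp
  rw [this, hZ_natCast]

lemma kSchur_expand {k : ℕ} (T : ℕ → (SymFn →ₗ[ℚ] SymFn)) (hT : ProjOps k T) :
    ∀ l : List ℕ, IsPartition l → KBounded k l →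
      kSchurWith T l - Gk k l ∈ HigherG k l.sum (wtL l)
  | [], _, _ => by
    rw [show kSchurWith T [] = 1 from rfl, Gk_nil, sub_self]
    exact Submodule.zero_mem _
  | a :: rest, hp, hkb => by
    have hrest_p : IsPartition rest :=
      ⟨(List.pairwise_cons.1 hp.1).2, fun x hx => hp.2 x (List.mem_cons_of_mem a hx)⟩
    have hrest_b : KBounded k rest := fun x hx => hkb x (List.mem_cons_of_mem a hx)
    have ha : 0 < a ∧ a ≤ k :=
      ⟨hp.2 a (List.mem_cons_self), hkb a (List.mem_cons_self)⟩
    have hIH := kSchur_expand T hT rest hrest_p hrest_b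
    have hGr := Gk_expand hrest_p.1 (fun x hx => ⟨hrest_p.2 x hx, hrest_b x hx⟩)
    have hbdd : Bdd k (a ::ₘ (↑rest : Multiset ℕ)) := by
      intro x hx
      rcases Multiset.mem_cons.1 hx with rfl | h
      · exact ha
      · exact ⟨hrest_p.2 x (by simpa using h), hrest_b x (by simpa using h)⟩
    have hEG := eMul_G hbdd
    have htp : toPart (a ::ₘ (↑rest : Multiset ℕ)) = a :: rest := by
      rw [show (a ::ₘ (↑rest : Multiset ℕ)) = ((a :: rest : List ℕ) : Multiset ℕ) from by
        simp, toPart_of_sorted hp.1]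
    rw [htp, show (a ::ₘ (↑rest : Multiset ℕ)).sum = a + rest.sum from by simp,
      show wtM (a ::ₘ (↑rest : Multiset ℕ)) = a * a + wtL rest from by
        simp [wtM, wtL]] at hEG
    rw [show (a :: rest).sum = a + rest.sum from by simp,
      show wtL (a :: rest) = a * a + wtL rest from by simp [wtL]]
    set R := hh a * kSchurWith T rest - Gk k (a :: rest) with hRdef
    have hR : R ∈ HigherG k (a + rest.sum) (a * a + wtL rest) := by
      have key : R = (eMul (a ::ₘ (↑rest : Multiset ℕ)) - Gk k (a :: rest))
          + hh a * (Gk k rest - hProd rest)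
          + hh a * (kSchurWith T rest - Gk k rest) := by
        rw [hRdef, show eMul (a ::ₘ (↑rest : Multiset ℕ)) = hh a * hProd rest from by
          rw [eMul_cons, eMul_coe]]
        ring
      rw [key]
      refine Submodule.add_mem _ (Submodule.add_mem _ ?_ ?_) ?_
      · exact hEG
      · apply higherH_le_higherG
        have h2 := eMul_mul_higherH ({a} : Multiset ℕ)
          (fun x hx => by rw [Multiset.mem_singleton] at hx; subst hx; exact ha) hGr
        rw [show eMul ({a} : Multiset ℕ) = hh a from by simp [eMul],
          show ({a} : Multiset ℕ).sum = a from by simp,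
          show wtM ({a} : Multiset ℕ) = a * a from by simp [wtM]] at h2
        exact h2
      · apply higherH_le_higherG
        have h3 := higherG_le_higherH k rest.sum (wtL rest) hIH
        have h2 := eMul_mul_higherH ({a} : Multiset ℕ)
          (fun x hx => by rw [Multiset.mem_singleton] at hx; subst hx; exact ha) h3
        rw [show eMul ({a} : Multiset ℕ) = hh a from by simp [eMul],
          show ({a} : Multiset ℕ).sum = a from by simp,
          show wtM ({a} : Multiset ℕ) = a * a from by simp [wtM]] at h2
        exact h2
    have hsch : kSchurWith T (a :: rest) = T a (hh a * kSchurWith T rest) := by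
      rw [show kSchurWith T (a :: rest) = T a (schur [a] * kSchurWith T rest) from rfl,
        schur_single]
    have hmul : hh a * kSchurWith T rest = Gk k (a :: rest) + R := by rw [hRdef]; ring
    rw [hsch, hmul, map_add, hT a (a :: rest) hp hkb, if_pos (show (a :: rest).headI = a from rfl),
      show Gk k (a :: rest) + T a R - Gk k (a :: rest) = T a R from by ring]
    exact T_higherG T hT a hR

end KS
namespace KS

lemma kSchur_hExpand {k : ℕ} (T : ℕ → (SymFn →ₗ[ℚ] SymFn)) (hT : ProjOps k T)
    {l : List ℕ} (hp : IsPartition l) (hkb : KBounded k l) :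
    kSchurWith T l - hProd l ∈ HigherH k l.sum (wtL l) := by
  have h1 := higherG_le_higherH _ _ _ (kSchur_expand T hT l hp hkb)
  have h2 := Gk_expand hp.1 (fun x hx => ⟨hp.2 x hx, hkb x hx⟩)
  have heq : kSchurWith T l - hProd l
      = (kSchurWith T l - Gk k l) + (Gk k l - hProd l) := by ring
  rw [heq]
  exact Submodule.add_mem _ h1 h2

lemma kSchur_linearIndependent {k : ℕ} (T : ℕ → (SymFn →ₗ[ℚ] SymFn)) (hT : ProjOps k T) :
    LinearIndependent ℚ (fun l : Idx k => kSchurWith T l.1) := by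
  classical
  rw [linearIndependent_iff']
  intro s g hsum
  by_contra hcon
  push_neg at hcon
  obtain ⟨i₁, hi₁s, hi₁⟩ := hcon
  set F := s.filter (fun j => g j ≠ 0) with hF
  have hi₁F : i₁ ∈ F := Finset.mem_filter.2 ⟨hi₁s, hi₁⟩
  set F' := F.filter (fun j => j.1.sum = i₁.1.sum) with hF'
  have hne : F'.Nonempty := ⟨i₁, Finset.mem_filter.2 ⟨hi₁F, rfl⟩⟩
  obtain ⟨j₀, hj₀F', hj₀min⟩ := Finset.exists_min_image F' (fun j => wtL j.1) hne
  have hj₀F : j₀ ∈ F := (Finset.mem_filter.1 hj₀F').1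
  have hj₀sum : j₀.1.sum = i₁.1.sum := (Finset.mem_filter.1 hj₀F').2
  have hj₀s : j₀ ∈ s := (Finset.mem_filter.1 hj₀F).1
  have hg₀ : g j₀ ≠ 0 := (Finset.mem_filter.1 hj₀F).2
  set M := Submodule.span ℚ ((fun l : Idx k => hProd l.1) '' {j₀}ᶜ) with hM
  have hkey : ∀ j ∈ F, HigherH k j.1.sum (wtL j.1) ≤ M := by
    intro j hjF
    refine Submodule.span_le.2 ?_
    rintro f ⟨m, hb, hs', hw, rfl⟩
    rw [SetLike.mem_coe, eMul_toPart]
    apply Submodule.subset_span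
    refine ⟨⟨toPart m, toPart_isPartition hb, toPart_kBounded hb⟩, ?_, rfl⟩
    rw [Set.mem_compl_singleton_iff]
    intro heq
    have hv : toPart m = j₀.1 := congrArg Subtype.val heq
    have h1 : j₀.1.sum = j.1.sum := by rw [← hv, toPart_sum, hs']
    have h2 : wtL j₀.1 = wtM m := by rw [← hv, wtL_toPart]
    have hjF' : j ∈ F' := Finset.mem_filter.2 ⟨hjF, by omega⟩
    have := hj₀min j hjF'
    omega
  have hdecomp : (0 : SymFn)
      = ∑ j ∈ s, g j • hProd j.1 + ∑ j ∈ s, g j • (kSchurWith T j.1 - hProd j.1) := by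
    rw [← hsum, ← Finset.sum_add_distrib]
    apply Finset.sum_congr rfl
    intro j _
    rw [← smul_add]
    congr 1
    ring
  have hq : (∑ j ∈ s, g j • (kSchurWith T j.1 - hProd j.1)) ∈ M := by
    apply Submodule.sum_mem
    intro j hjs
    by_cases hgj : g j = 0
    · simp [hgj]
    · exact Submodule.smul_mem _ _ (hkey j (Finset.mem_filter.2 ⟨hjs, hgj⟩)
        (kSchur_hExpand T hT j.2.1 j.2.2))
  have hrest : (∑ j ∈ s.erase j₀, g j • hProd j.1) ∈ M := by
    apply Submodule.sum_mem
    intro j hj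
    apply Submodule.smul_mem
    apply Submodule.subset_span
    exact ⟨j, (Finset.mem_erase.1 hj).1, rfl⟩
  have hsplit : ∑ j ∈ s, g j • hProd j.1
      = g j₀ • hProd j₀.1 + ∑ j ∈ s.erase j₀, g j • hProd j.1 :=
    (Finset.add_sum_erase s _ hj₀s).symm
  have hmem : g j₀ • hProd j₀.1 ∈ M := by
    have h0 : g j₀ • hProd j₀.1 + (∑ j ∈ s.erase j₀, g j • hProd j.1
        + ∑ j ∈ s, g j • (kSchurWith T j.1 - hProd j.1)) = 0 := by
      rw [← add_assoc, ← hsplit]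
      exact hdecomp.symm
    have heq := eq_neg_of_add_eq_zero_left h0
    rw [heq]
    exact Submodule.neg_mem _ (Submodule.add_mem _ hrest hq)
  have hnot : hProd j₀.1 ∉ M :=
    (hProd_linearIndependent k).notMem_span_image (by simp)
  apply hnot
  have := Submodule.smul_mem M (g j₀)⁻¹ hmem
  rwa [inv_smul_smul₀ hg₀] at this

lemma hProd_mem_span_kSchur {k : ℕ} (T : ℕ → (SymFn →ₗ[ℚ] SymFn)) (hT : ProjOps k T) :
    ∀ (N : ℕ) (l : List ℕ), IsPartition l → KBounded k l →
      k * l.sum - wtL l < N →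
      hProd l ∈ Submodule.span ℚ (Set.range fun j : Idx k => kSchurWith T j.1) := by
  intro N
  induction N with
  | zero => intro l _ _ h; omega
  | succ N ih =>
    intro l hp hkb hN
    have hq := kSchur_hExpand T hT hp hkb
    have heq : hProd l = kSchurWith T l - (kSchurWith T l - hProd l) := by ring
    rw [heq]
    apply Submodule.sub_mem
    · exact Submodule.subset_span ⟨⟨l, hp, hkb⟩, rfl⟩
    · refine Submodule.span_le.2 ?_ hq
      rintro f ⟨m, hb, hs, hw, rfl⟩
      rw [SetLike.mem_coe, eMul_toPart]
      have hle : wtM m ≤ k * m.sum := wtM_le hb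
      apply ih (toPart m) (toPart_isPartition hb) (toPart_kBounded hb)
      rw [toPart_sum, wtL_toPart, hs]
      rw [hs] at hle
      omega

lemma span_eq_lamK {k : ℕ} (T : ℕ → (SymFn →ₗ[ℚ] SymFn)) (hT : ProjOps k T) :
    Submodule.span ℚ (Set.range fun j : Idx k => kSchurWith T j.1) = LamK k := by
  apply le_antisymm
  · refine Submodule.span_le.2 ?_
    rintro f ⟨⟨l, hp, hkb⟩, rfl⟩
    have hq := kSchur_hExpand T hT hp hkb
    have heq : kSchurWith T l = hProd l + (kSchurWith T l - hProd l) := by ring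
    show kSchurWith T l ∈ LamK k
    rw [heq]
    apply Submodule.add_mem
    · exact Submodule.subset_span ⟨l, hp, hkb, rfl⟩
    · refine Submodule.span_le.2 ?_ hq
      rintro f ⟨m, hb, hs, hw, rfl⟩
      rw [SetLike.mem_coe, eMul_toPart]
      exact Submodule.subset_span ⟨toPart m, toPart_isPartition hb, toPart_kBounded hb, rfl⟩
  · refine Submodule.span_le.2 ?_
    rintro f ⟨l, hp, hkb, rfl⟩
    exact hProd_mem_span_kSchur T hT (k * l.sum - wtL l + 1) l hp hkb (Nat.lt_succ_self _)

end KS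


/-- The `k`-Schur functions `{s_λ^{(k)}}`, indexed by the
`k`-bounded partitions `λ`, form a basis of the vector space `Λ^{(k)}`. -/
theorem kSchur_basis (k : ℕ) (hk : 1 ≤ k)
    (T : ℕ → (SymFn →ₗ[ℚ] SymFn)) (hT : ProjOps k T) :
    LinearIndependent ℚ
      (fun l : {l : List ℕ // IsPartition l ∧ KBounded k l} => kSchurWith T l.1) ∧
    Submodule.span ℚ
      (Set.range fun l : {l : List ℕ // IsPartition l ∧ KBounded k l} =>
        kSchurWith T l.1) = LamK k := by
  exact ⟨KS.kSchur_linearIndependent T hT, KS.span_eq_lamK T hT⟩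
end
end

section
/- For any k-bounded partition λ, the k-Schur function expands unitriangularly in the k-split basis with integer coefficients, with all higher terms indexed by partitions having the same first part: s_λ^{(k)} = G_λ^{(k)} + Σ_{μ > λ, μ_1 = λ_1} v_μ G_μ^{(k)}, where the sum is over k-bounded partitions μ of |λ| with μ > λ in dominance order and μ_1 = λ_1, and each v_μ is an integer. -/
open scoped BigOperators Classical

noncomputable section

namespace KSP

/-- decreasing sort -/
def sortL (l : List ℕ) : List ℕ := l.insertionSort (· ≥ ·)

lemma sortL_perm (l : List ℕ) : List.Perm (sortL l) l := List.perm_insertionSort _ l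

lemma sortL_sorted (l : List ℕ) : (sortL l).Pairwise (· ≥ ·) := List.pairwise_insertionSort _ l

lemma sorted_eq_of_perm {l₁ l₂ : List ℕ} (h : List.Perm l₁ l₂) (h₁ : l₁.Pairwise (· ≥ ·))
    (h₂ : l₂.Pairwise (· ≥ ·)) : l₁ = l₂ :=
  List.Perm.eq_of_pairwise' h₁ h₂ h

lemma sortL_eq_self {l : List ℕ} (h : l.Pairwise (· ≥ ·)) : sortL l = l :=
  sorted_eq_of_perm (sortL_perm l) (sortL_sorted l) h

lemma take_sum_le (l : List ℕ) (m : ℕ) : (l.take m).sum ≤ l.sum := by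
  conv_rhs => rw [← List.take_append_drop m l]
  rw [List.sum_append]; omega

lemma take_sum_mono (l : List ℕ) {m m' : ℕ} (h : m ≤ m') :
    (l.take m).sum ≤ (l.take m').sum := by
  have : (l.take m').take m = l.take m := by
    rw [List.take_take]; congr 1; omega
  rw [← this]; exact take_sum_le _ _

lemma take_sum_succ (l : List ℕ) (m : ℕ) :
    (l.take (m+1)).sum = (l.take m).sum + l.getD m 0 := by
  rw [List.take_succ, List.sum_append]
  congr 1
  rcases lt_or_ge m l.length with h | h
  · simp [List.getElem?_eq_getElem h, List.getD_eq_getElem l 0 h]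
  · simp [List.getElem?_eq_none h, List.getD_eq_default _ _ h]

lemma take_sum_eq_range (l : List ℕ) (m : ℕ) :
    (l.take m).sum = ∑ i ∈ Finset.range m, l.getD i 0 := by
  induction m with
  | zero => simp
  | succ m ih => rw [take_sum_succ, Finset.sum_range_succ, ih]

lemma take_of_ge_length (l : List ℕ) {m : ℕ} (h : l.length ≤ m) : l.take m = l :=
  List.take_of_length_le h

lemma sorted_head_max {l : List ℕ} (h : l.Pairwise (· ≥ ·)) {x : ℕ} (hx : x ∈ l) :
    x ≤ l.headI := by
  cases l with
  | nil => simp at hx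
  | cons a t =>
    rcases List.mem_cons.1 hx with rfl | hx
    · simp
    · exact List.rel_of_pairwise_cons h hx

lemma length_le_sum {l : List ℕ} (h : ∀ x ∈ l, 0 < x) : l.length ≤ l.sum := by
  induction l with
  | nil => simp
  | cons a t ih =>
    simp only [List.length_cons, List.sum_cons]
    have := h a (by simp)
    have := ih (fun x hx => h x (by simp [hx]))
    omega

lemma dominates_refl (l : List ℕ) : Dominates l l := fun _ => le_rfl

lemma dominates_trans {a b c : List ℕ} (h1 : Dominates a b) (h2 : Dominates b c) :
    Dominates a c := fun i => le_trans (h2 i) (h1 i)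

lemma eq_of_take_sum_eq : ∀ {l1 l2 : List ℕ}, (∀ x ∈ l1, 0 < x) → (∀ x ∈ l2, 0 < x) →
    (∀ i, (l1.take i).sum = (l2.take i).sum) → l1 = l2
  | [], [], _, _, _ => rfl
  | [], b :: t2, _, hp2, h => by
    have h1 := h 1; simp at h1
    have hb := hp2 b (by simp); omega
  | a :: t1, [], hp1, _, h => by
    have h1 := h 1; simp at h1
    have ha := hp1 a (by simp); omega
  | a :: t1, b :: t2, hp1, hp2, h => by
    have hab : a = b := by have := h 1; simpa using this
    have htl : t1 = t2 := by
      apply eq_of_take_sum_eq (fun x hx => hp1 x (by simp [hx]))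
        (fun x hx => hp2 x (by simp [hx]))
      intro i
      have := h (i+1)
      simp only [List.take_succ_cons, List.sum_cons, hab] at this
      omega
    rw [hab, htl]

lemma dominates_antisymm {l1 l2 : List ℕ} (hp1 : ∀ x ∈ l1, 0 < x) (hp2 : ∀ x ∈ l2, 0 < x)
    (h1 : Dominates l1 l2) (h2 : Dominates l2 l1) : l1 = l2 :=
  eq_of_take_sum_eq hp1 hp2 (fun i => le_antisymm (h2 i) (h1 i))

lemma length_le_of_dominates {ν μ : List ℕ} (hd : Dominates ν μ) (hs : ν.sum = μ.sum)
    (hp : ∀ x ∈ ν, 0 < x) : ν.length ≤ μ.length := by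
  by_contra hlen
  push_neg at hlen
  have h1 : (ν.take μ.length).sum ≥ μ.sum := by
    have := hd μ.length
    rwa [take_of_ge_length μ le_rfl] at this
  have hsplit : ν.sum = (ν.take μ.length).sum + (ν.drop μ.length).sum := by
    conv_lhs => rw [← List.take_append_drop μ.length ν]
    rw [List.sum_append]
  have hdrop : 0 < (ν.drop μ.length).sum := by
    have hne : ν.drop μ.length ≠ [] := by
      intro hcon
      have := List.drop_eq_nil_iff.1 hcon
      omega
    cases hD : ν.drop μ.length with
    | nil => exact absurd hD hne
    | cons a t =>
      have ha : a ∈ ν := by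
        have : a ∈ ν.drop μ.length := by rw [hD]; simp
        exact List.mem_of_mem_drop this
      have := hp a ha
      simp [hD]; omega
  omega

/-- top-m property of decreasing sorted lists -/
lemma sum_le_take_of_le : ∀ (S : List ℕ), S.Pairwise (· ≥ ·) →
    ∀ (m : ℕ) (D : Multiset ℕ), D ≤ (S : Multiset ℕ) → Multiset.card D ≤ m →
    D.sum ≤ (S.take m).sum
  | [], _, m, D, hD, _ => by
    simp only [Multiset.coe_nil] at hD
    have : D = 0 := le_bot_iff.mp hD
    simp [this]
  | s :: S', hS, m, D, hD, hc => by
    have hS' : S'.Pairwise (· ≥ ·) := hS.tail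
    have hbd : ∀ x ∈ S', x ≤ s := fun x hx => List.rel_of_pairwise_cons hS hx
    by_cases hs : s ∈ D
    · obtain ⟨D', rfl⟩ := Multiset.exists_cons_of_mem hs
      have hD' : D' ≤ (S' : Multiset ℕ) := by
        rw [← Multiset.cons_coe] at hD
        exact (Multiset.cons_le_cons_iff s).mp hD
      have hc' : Multiset.card D' + 1 ≤ m := by simpa using hc
      obtain ⟨m', rfl⟩ : ∃ m', m = m' + 1 := ⟨m - 1, by omega⟩
      have := sum_le_take_of_le S' hS' m' D' hD' (by omega)
      simp only [List.take_succ_cons, List.sum_cons, Multiset.sum_cons]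
      omega
    · have hD' : D ≤ (S' : Multiset ℕ) := by
        rw [Multiset.le_iff_count]
        intro a
        have h1 := Multiset.le_iff_count.mp hD a
        rw [← Multiset.cons_coe, Multiset.count_cons] at h1
        by_cases has : a = s
        · subst has; simp [Multiset.count_eq_zero_of_notMem hs]
        · simpa [has] using h1
      have h2 := sum_le_take_of_le S' hS' m D hD' hc
      refine le_trans h2 ?_
      -- (S'.take m).sum ≤ ((s::S').take m).sum
      clear h2 hD hD' hc hs
      induction m generalizing s S' with
      | zero => simp
      | succ m' ih =>
        simp only [List.take_succ_cons, List.sum_cons]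
        rw [take_sum_succ]
        rcases lt_or_ge m' S'.length with h | h
        · have hmem : S'.getD m' 0 ∈ S' := by
            rw [List.getD_eq_getElem S' 0 h]
            exact List.getElem_mem _
          have := hbd _ hmem
          have := take_sum_mono S' (Nat.le_succ m')
          omega
        · rw [List.getD_eq_default _ _ h]
          have := take_sum_mono S' (Nat.le_succ m')
          omega

lemma coe_le_coe_of_sublist {l₁ l₂ : List ℕ} (h : l₁.Sublist l₂) :
    (l₁ : Multiset ℕ) ≤ (l₂ : Multiset ℕ) := by
  exact Multiset.coe_le.mpr h.subperm

lemma dominates_append {x y u w : List ℕ}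
    (hd1 : Dominates x y) (hs1 : x.sum = y.sum) (hx : ∀ a ∈ x, 0 < a)
    (hd2 : Dominates u w) : Dominates (sortL (x ++ u)) (y ++ w) := by
  intro m
  have hperm : ((sortL (x ++ u)) : Multiset ℕ) = ((x ++ u : List ℕ) : Multiset ℕ) :=
    Multiset.coe_eq_coe.mpr (sortL_perm _)
  have hxy : x.length ≤ y.length := length_le_of_dominates hd1 hs1 hx
  rcases le_or_gt m y.length with hm | hm
  · -- D = x.take m
    have hD : ((x.take m : List ℕ) : Multiset ℕ) ≤ ((sortL (x ++ u)) : Multiset ℕ) := by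
      rw [hperm]
      exact coe_le_coe_of_sublist ((List.take_sublist m x).trans (List.sublist_append_left x u))
    have h1 := sum_le_take_of_le _ (sortL_sorted (x ++ u)) m _ hD
      (by simpa using (List.length_take m x ▸ (by simp : (x.take m).length = min m x.length) ▸ min_le_left m x.length))
    have h2 : ((y ++ w).take m).sum = (y.take m).sum := by
      rw [List.take_append, List.sum_append]
      have : m - y.length = 0 := by omega
      simp [this]
    rw [h2]
    exact le_trans (hd1 m) (by simpa using h1)
  · -- D = x ++ u.take (m - y.length)
    have hD : (((x ++ u.take (m - y.length)) : List ℕ) : Multiset ℕ)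
        ≤ ((sortL (x ++ u)) : Multiset ℕ) := by
      rw [hperm]
      exact coe_le_coe_of_sublist (List.Sublist.append_left (List.take_sublist _ u) x)
    have hcard : (x ++ u.take (m - y.length)).length ≤ m := by
      simp only [List.length_append, List.length_take]
      omega
    have h1 := sum_le_take_of_le _ (sortL_sorted (x ++ u)) m _ hD (by simpa using hcard)
    have h2 : ((y ++ w).take m).sum = y.sum + (w.take (m - y.length)).sum := by
      rw [List.take_append, List.sum_append, take_of_ge_length y (by omega)]
    rw [h2]
    have h3 : (x ++ u.take (m - y.length)).sum = x.sum + (u.take (m - y.length)).sum := by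
      rw [List.sum_append]
    simp only [Multiset.sum_coe] at h1
    rw [h3] at h1
    have := hd2 (m - y.length)
    omega

lemma dominates_cons_sort {a : ℕ} {ν μ : List ℕ} (ha : 0 < a) (hd : Dominates ν μ) :
    Dominates (sortL (a :: ν)) (a :: μ) := by
  have := dominates_append (x := [a]) (y := [a]) (u := ν) (w := μ)
    (fun _ => le_rfl) rfl (by simpa using ha) hd
  simpa using this

def wMeas (N : ℕ) (l : List ℕ) : ℕ := ∑ i ∈ Finset.range N, (l.take (i+1)).sum

lemma wMeas_le {n : ℕ} {l : List ℕ} (h : l.sum = n) : wMeas n l ≤ n * n := by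
  calc wMeas n l ≤ ∑ _i ∈ Finset.range n, n :=
        Finset.sum_le_sum (fun i _ => h ▸ take_sum_le l (i+1))
    _ = n * n := by simp [mul_comm]

lemma wMeas_lt {n : ℕ} {ν μ : List ℕ} (hpν : ∀ x ∈ ν, 0 < x) (hpμ : ∀ x ∈ μ, 0 < x)
    (hsν : ν.sum = n) (hsμ : μ.sum = n) (hd : Dominates ν μ) (hne : ν ≠ μ) :
    wMeas n μ < wMeas n ν := by
  have hex : ∃ i, (μ.take i).sum ≠ (ν.take i).sum := by
    by_contra hcon
    push_neg at hcon
    exact hne (eq_of_take_sum_eq hpν hpμ (fun i => (hcon i).symm))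
  obtain ⟨i, hi⟩ := hex
  have hilt : i ≤ n := by
    by_contra hgt
    push_neg at hgt
    have h1 : ν.length ≤ n := le_trans (length_le_sum hpν) (le_of_eq hsν)
    have h2 : μ.length ≤ n := le_trans (length_le_sum hpμ) (le_of_eq hsμ)
    rw [take_of_ge_length ν (by omega), take_of_ge_length μ (by omega)] at hi
    omega
  have hipos : i ≠ 0 := by rintro rfl; simp at hi
  apply Finset.sum_lt_sum (fun j _ => hd (j+1))
  refine ⟨i - 1, Finset.mem_range.mpr (by omega), ?_⟩
  have : i - 1 + 1 = i := by omega
  rw [this]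
  exact lt_of_le_of_ne (hd i) hi

/-- partitions facts -/
lemma isPartition_sortL {l : List ℕ} (h : ∀ x ∈ l, 0 < x) : IsPartition (sortL l) :=
  ⟨sortL_sorted l, fun x hx => h x ((sortL_perm l).mem_iff.mp hx)⟩

lemma isPartition_cons {a : ℕ} {l : List ℕ} (hl : IsPartition l) (ha : 0 < a)
    (hh : l.headI ≤ a) : IsPartition (a :: l) := by
  refine ⟨List.pairwise_cons.mpr ⟨fun b hb => le_trans (sorted_head_max hl.1 hb) hh, hl.1⟩, ?_⟩
  intro x hx
  rcases List.mem_cons.1 hx with rfl | hx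
  · exact ha
  · exact hl.2 x hx

lemma sum_distinct_ge (s : Finset ℕ) : ∑ t ∈ Finset.range s.card, t ≤ ∑ x ∈ s, x := by
  induction s using Finset.strongInduction with
  | _ s ih =>
    rcases Finset.eq_empty_or_nonempty s with rfl | hne
    · simp
    · have hM : s.max' hne ∈ s := s.max'_mem hne
      have hcard : s.card - 1 ≤ s.max' hne := by
        have : s ⊆ Finset.range (s.max' hne + 1) := fun x hx =>
          Finset.mem_range.mpr (by have := s.le_max' x hx; omega)
        have := Finset.card_le_card this
        simp at this; omega
      have herase := ih (s.erase (s.max' hne)) (Finset.erase_ssubset hM)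
      have hce : (s.erase (s.max' hne)).card = s.card - 1 := by
        rw [Finset.card_erase_of_mem hM]
      rw [hce] at herase
      have hsum : ∑ x ∈ s, x = s.max' hne + ∑ x ∈ s.erase (s.max' hne), x :=
        (Finset.add_sum_erase s id hM).symm
      have hcard1 : 1 ≤ s.card := Finset.card_pos.mpr hne
      obtain ⟨c, hc⟩ : ∃ c, s.card = c + 1 := ⟨s.card - 1, by omega⟩
      rw [hc, Finset.sum_range_succ]
      rw [hc] at herase hcard
      simp only [Nat.add_sub_cancel] at herase hcard
      omega

lemma abel_core (N : ℕ) (A B : ℕ → ℤ)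
    (hA0 : ∀ i, 0 ≤ A i) (hB0 : ∀ i, 0 ≤ B i)
    (hAm : ∀ i j, i ≤ j → A j ≤ A i) (hBm : ∀ i j, i ≤ j → B j ≤ B i)
    (hdom : ∀ m, (∑ i ∈ Finset.range m, B i) ≤ ∑ i ∈ Finset.range m, A i)
    (htot : ∑ i ∈ Finset.range N, A i = ∑ i ∈ Finset.range N, B i)
    (hAv : ∀ i, N ≤ i → A i = 0) (hBv : ∀ i, N ≤ i → B i = 0) :
    (∑ i ∈ Finset.range N, B i * B i) ≤ (∑ i ∈ Finset.range N, A i * A i) ∧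
    ((∑ i ∈ Finset.range N, A i * A i) = (∑ i ∈ Finset.range N, B i * B i) →
      ∀ i, A i = B i) := by
  set D : ℕ → ℤ := fun m => ∑ i ∈ Finset.range m, (A i - B i) with hD
  have hDrec : ∀ m, D (m + 1) = D m + (A m - B m) := by
    intro m; simp only [hD, Finset.sum_range_succ]
  have hD0 : D 0 = 0 := by simp [hD]
  have hDnn : ∀ m, 0 ≤ D m := by
    intro m
    have := hdom m
    simp only [hD, Finset.sum_sub_distrib]
    omega
  have hDN : D N = 0 := by
    simp only [hD, Finset.sum_sub_distrib]
    omega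
  set C : ℕ → ℤ := fun i => A i + B i with hC
  have hCm : ∀ i j, i ≤ j → C j ≤ C i := fun i j h => by
    have := hAm i j h; have := hBm i j h; simp only [hC]; omega
  have key : ∀ M, ∑ i ∈ Finset.range M, (A i * A i - B i * B i)
      = D M * C M + ∑ i ∈ Finset.range M, D (i+1) * (C i - C (i+1)) := by
    intro M
    induction M with
    | zero => simp [hD0]
    | succ M ih =>
      rw [Finset.sum_range_succ, Finset.sum_range_succ, ih]
      have h1 : A M * A M - B M * B M = (D (M+1) - D M) * C M := by
        simp only [hC]; rw [hDrec M]; ring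
      rw [h1]; ring
  have keyN := key N
  rw [hDN, zero_mul, zero_add, Finset.sum_sub_distrib] at keyN
  have hterms : ∀ i ∈ Finset.range N, 0 ≤ D (i+1) * (C i - C (i+1)) := by
    intro i _
    apply mul_nonneg (hDnn _)
    have := hCm i (i+1) (by omega); omega
  have hge : (∑ i ∈ Finset.range N, B i * B i) ≤ ∑ i ∈ Finset.range N, A i * A i := by
    have := Finset.sum_nonneg hterms
    omega
  refine ⟨hge, ?_⟩
  intro heq
  by_contra hcon
  push_neg at hcon
  obtain ⟨i₀, hi₀⟩ := hcon
  have hzero : ∀ i ∈ Finset.range N, D (i+1) * (C i - C (i+1)) = 0 := by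
    have hsum0 : ∑ i ∈ Finset.range N, D (i+1) * (C i - C (i+1)) = 0 := by omega
    exact (Finset.sum_eq_zero_iff_of_nonneg hterms).mp hsum0
  -- find first difference
  have hex : ∃ j, A j ≠ B j := ⟨i₀, hi₀⟩
  set j₀ := Nat.find hex with hj₀
  have hj₀spec : A j₀ ≠ B j₀ := Nat.find_spec hex
  have hj₀min : ∀ j < j₀, A j = B j := fun j hj => by
    rw [hj₀] at hj
    exact not_ne_iff.mp (Nat.find_min hex hj)
  have hj₀N : j₀ < N := by
    by_contra hge'
    push_neg at hge'
    exact hj₀spec (by rw [hAv _ hge', hBv _ hge'])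
  have hDj₀ : D j₀ = 0 := by
    simp only [hD]
    apply Finset.sum_eq_zero
    intro j hj
    have := hj₀min j (Finset.mem_range.mp hj)
    omega
  have hDj₀1 : 0 < D (j₀ + 1) := by
    have := hDrec j₀
    have := hDnn (j₀ + 1)
    rcases lt_trichotomy (A j₀) (B j₀) with h | h | h
    · omega
    · exact absurd h hj₀spec
    · omega
  -- greatest index with D > 0
  set m := Nat.findGreatest (fun t => 0 < D t) N with hm
  have hmP : 0 < D m := by
    rw [hm]; exact Nat.findGreatest_spec (P := fun t => 0 < D t) hj₀N hDj₀1
  have hmle : m ≤ N := Nat.findGreatest_le N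
  have hmN : m < N := by
    rcases lt_or_eq_of_le hmle with h | h
    · exact h
    · rw [h] at hmP; omega
  have hDm1 : D (m + 1) = 0 := by
    rcases Nat.lt_or_ge (m+1) (N+1) with h | h
    · have hgr := Nat.findGreatest_is_greatest (P := fun t => 0 < D t) (n := N)
        (k := m + 1) (by omega) (by omega)
      have := hDnn (m+1); omega
    · omega
  have hABm : A m < B m := by
    have := hDrec m; omega
  -- descent
  have descent : ∀ t, t ≤ m → 0 < D (m - t) ∧ A (m - t) < B (m - t) := by
    intro t
    induction t with
    | zero => intro _; simpa using ⟨hmP, hABm⟩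
    | succ t ih =>
      intro ht
      obtain ⟨hDpos, hABlt⟩ := ih (by omega)
      set i := m - t with hi
      have hi1 : 1 ≤ i := by omega
      have hzi := hzero (i - 1) (Finset.mem_range.mpr (by omega))
      have hii : i - 1 + 1 = i := by omega
      rw [hii] at hzi
      have hCeq : C (i-1) = C i := by
        rcases mul_eq_zero.mp hzi with h | h
        · omega
        · have := hCm (i-1) i (by omega); omega
      have hAeq : A (i-1) = A i ∧ B (i-1) = B i := by
        have h1 := hAm (i-1) i (by omega)
        have h2 := hBm (i-1) i (by omega)
        simp only [hC] at hCeq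
        constructor <;> omega
      have hDi : D i = D (i-1) + (A (i-1) - B (i-1)) := by
        have := hDrec (i-1); rw [hii] at this; exact this
      have hmt : m - (t+1) = i - 1 := by omega
      rw [hmt]
      constructor
      · omega
      · omega
  have := (descent m le_rfl).1
  simp only [Nat.sub_self] at this
  omega

/-- getD of sorted list is antitone -/
lemma getD_antitone {l : List ℕ} (h : l.Pairwise (· ≥ ·)) {i j : ℕ} (hij : i ≤ j) :
    l.getD j 0 ≤ l.getD i 0 := by
  rcases lt_or_ge j l.length with hj | hj
  · have hi : i < l.length := lt_of_le_of_lt hij hj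
    rw [List.getD_eq_getElem l 0 hj, List.getD_eq_getElem l 0 hi]
    rcases lt_or_eq_of_le hij with hlt | rfl
    · exact List.Pairwise.rel_get_of_lt h (by simpa using hlt)
    · exact le_rfl
  · rw [List.getD_eq_default _ _ hj]
    exact Nat.zero_le _

lemma getD_eq_imp_eq : ∀ {l1 l2 : List ℕ}, (∀ x ∈ l1, 0 < x) → (∀ x ∈ l2, 0 < x) →
    (∀ i, l1.getD i 0 = l2.getD i 0) → l1 = l2
  | [], [], _, _, _ => rfl
  | [], b :: t2, _, hp2, h => by
    have := h 0; simp at this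
    have := hp2 b (by simp); omega
  | a :: t1, [], hp1, _, h => by
    have := h 0; simp at this
    have := hp1 a (by simp); omega
  | a :: t1, b :: t2, hp1, hp2, h => by
    have hab : a = b := by simpa using h 0
    have : t1 = t2 := getD_eq_imp_eq (fun x hx => hp1 x (by simp [hx]))
      (fun x hx => hp2 x (by simp [hx])) (fun i => by simpa using h (i+1))
    rw [hab, this]

lemma map_sq_sum_getD (l : List ℕ) {N : ℕ} (hN : l.length ≤ N) :
    (((l.map (fun x => x * x)).sum : ℕ) : ℤ) = ∑ i ∈ Finset.range N, (l.getD i 0 : ℤ) * (l.getD i 0 : ℤ) := by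
  induction l generalizing N with
  | nil => simp
  | cons a t ih =>
    obtain ⟨N', rfl⟩ : ∃ N', N = N' + 1 := ⟨N - 1, by simp at hN; omega⟩
    have hN' : t.length ≤ N' := by simp at hN; omega
    rw [Finset.sum_range_succ']
    simp only [List.getD_cons_succ, List.getD_cons_zero]
    rw [← ih hN']
    rw [List.map_cons, List.sum_cons]
    push_cast
    ring

/-- sum of squares respects dominance strictly -/
lemma sumsq_dominates {ν μ : List ℕ} (hν : IsPartition ν) (hμ : IsPartition μ)
    (hd : Dominates ν μ) (hs : ν.sum = μ.sum) :
    (μ.map (fun x => x * x)).sum ≤ (ν.map (fun x => x * x)).sum ∧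
    ((ν.map (fun x => x * x)).sum = (μ.map (fun x => x * x)).sum → ν = μ) := by
  set N := μ.length with hN
  have hlen : ν.length ≤ N := length_le_of_dominates hd hs hν.2
  set A : ℕ → ℤ := fun i => (ν.getD i 0 : ℤ) with hA
  set B : ℕ → ℤ := fun i => (μ.getD i 0 : ℤ) with hB
  have habel := abel_core N A B
    (fun i => by simp [hA]) (fun i => by simp [hB])
    (fun i j h => by simp only [hA]; exact_mod_cast getD_antitone hν.1 h)
    (fun i j h => by simp only [hB]; exact_mod_cast getD_antitone hμ.1 h)
    (fun m => by
      simp only [hA, hB, ← Nat.cast_sum]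
      rw [← take_sum_eq_range, ← take_sum_eq_range]
      exact_mod_cast hd m)
    (by
      simp only [hA, hB, ← Nat.cast_sum]
      rw [← take_sum_eq_range, ← take_sum_eq_range,
        take_of_ge_length ν hlen, take_of_ge_length μ le_rfl]
      exact_mod_cast hs)
    (fun i hi => by
      simp only [hA]
      rw [List.getD_eq_default _ _ (le_trans hlen hi)]; simp)
    (fun i hi => by
      simp only [hB]
      rw [List.getD_eq_default _ _ (hN ▸ hi)]; simp)
  rw [← map_sq_sum_getD ν hlen, ← map_sq_sum_getD μ le_rfl] at habel
  constructor
  · exact_mod_cast habel.1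
  · intro heq
    have h2 := habel.2 (by exact_mod_cast heq)
    refine getD_eq_imp_eq hν.2 hμ.2 (fun i => ?_)
    have := h2 i
    simp only [hA, hB] at this
    exact_mod_cast this

/-- linear combinations with integer coefficients over lists satisfying P -/
def Exp (f : List ℕ → SymFn) (P : List ℕ → Prop) (S : SymFn) : Prop :=
  ∃ (A : Finset (List ℕ)) (v : List ℕ → ℤ), (∀ μ ∈ A, P μ) ∧
    S = ∑ μ ∈ A, (v μ : ℚ) • f μ

namespace Exp

lemma zero (f : List ℕ → SymFn) (P : List ℕ → Prop) : Exp f P 0 :=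
  ⟨∅, 0, by simp, by simp⟩

lemma single {f : List ℕ → SymFn} {P : List ℕ → Prop} {μ : List ℕ} (h : P μ) :
    Exp f P (f μ) :=
  ⟨{μ}, fun _ => 1, by simpa using h, by simp⟩

lemma mono {f : List ℕ → SymFn} {P Q : List ℕ → Prop} {S : SymFn}
    (hS : Exp f P S) (h : ∀ μ, P μ → Q μ) : Exp f Q S := by
  obtain ⟨A, v, hA, rfl⟩ := hS
  exact ⟨A, v, fun μ hμ => h μ (hA μ hμ), rfl⟩

lemma sum_extend {A C : Finset (List ℕ)} (h : A ⊆ C) (v : List ℕ → ℤ) (f : List ℕ → SymFn) :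
    ∑ μ ∈ A, (v μ : ℚ) • f μ = ∑ μ ∈ C, ((if μ ∈ A then v μ else 0 : ℤ) : ℚ) • f μ := by
  have h2 : ∑ μ ∈ A, ((if μ ∈ A then v μ else 0 : ℤ) : ℚ) • f μ
      = ∑ μ ∈ C, ((if μ ∈ A then v μ else 0 : ℤ) : ℚ) • f μ :=
    Finset.sum_subset h (fun x _ hx => by rw [if_neg hx]; push_cast; rw [zero_smul])
  rw [← h2]
  exact Finset.sum_congr rfl (fun x hx => by rw [if_pos hx])

lemma add {f : List ℕ → SymFn} {P : List ℕ → Prop} {S T : SymFn}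
    (hS : Exp f P S) (hT : Exp f P T) : Exp f P (S + T) := by
  obtain ⟨A, v, hA, rfl⟩ := hS
  obtain ⟨B, w, hB, rfl⟩ := hT
  refine ⟨A ∪ B, fun μ => (if μ ∈ A then v μ else 0) + (if μ ∈ B then w μ else 0),
    ?_, ?_⟩
  · intro μ hμ
    rcases Finset.mem_union.1 hμ with h | h
    · exact hA μ h
    · exact hB μ h
  · rw [sum_extend (Finset.subset_union_left (s₂ := B)) v f,
      sum_extend (Finset.subset_union_right (s₁ := A)) w f,
      ← Finset.sum_add_distrib]
    apply Finset.sum_congr rfl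
    intro x _
    push_cast
    rw [add_smul]

lemma smul {f : List ℕ → SymFn} {P : List ℕ → Prop} {S : SymFn}
    (c : ℤ) (hS : Exp f P S) : Exp f P ((c : ℚ) • S) := by
  obtain ⟨A, v, hA, rfl⟩ := hS
  refine ⟨A, fun μ => c * v μ, hA, ?_⟩
  rw [Finset.smul_sum]
  apply Finset.sum_congr rfl
  intro x _
  rw [smul_smul]
  push_cast
  ring_nf

lemma fsum {f : List ℕ → SymFn} {P : List ℕ → Prop} {ι : Type*} {s : Finset ι}
    {F : ι → SymFn} (h : ∀ x ∈ s, Exp f P (F x)) : Exp f P (∑ x ∈ s, F x) := by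
  classical
  induction s using Finset.cons_induction with
  | empty => simpa using zero f P
  | cons a s ha ih =>
    rw [Finset.sum_cons]
    exact add (h a (Finset.mem_cons_self a s)) (ih (fun x hx => h x (Finset.mem_cons.2 (Or.inr hx))))

end Exp

lemma hProd_nil : hProd [] = 1 := rfl

lemma hProd_cons (a : ℕ) (l : List ℕ) : hProd (a :: l) = hh a * hProd l := by
  simp [hProd]

lemma hProd_append (x y : List ℕ) : hProd (x ++ y) = hProd x * hProd y := by
  simp [hProd]

lemma hProd_perm {x y : List ℕ} (h : List.Perm x y) : hProd x = hProd y :=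
  List.Perm.prod_eq (List.Perm.map hh h)

lemma hProd_sortL (l : List ℕ) : hProd (sortL l) = hProd l :=
  hProd_perm (sortL_perm l)

lemma hProd_mul (x y : List ℕ) : hProd x * hProd y = hProd (sortL (x ++ y)) := by
  rw [hProd_sortL, hProd_append]

lemma hh_mul_hProd (a : ℕ) (l : List ℕ) : hh a * hProd l = hProd (sortL (a :: l)) := by
  rw [← hProd_cons, ← hProd_sortL]

lemma hProd_filter_ne_zero (l : List ℕ) : hProd (l.filter (fun x => x ≠ 0)) = hProd l := by
  induction l with
  | nil => rfl
  | cons a t ih =>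
    by_cases ha : a = 0
    · subst ha
      rw [List.filter_cons_of_neg (by simp), ih, hProd_cons]
      rw [show hh 0 = (1 : SymFn) from rfl, one_mul]
    · rw [List.filter_cons_of_pos (by simpa using ha), hProd_cons, hProd_cons, ih]

/-- multiply two h-expansions -/
lemma Exp.mul {P Q R : List ℕ → Prop} {S T : SymFn}
    (hS : Exp hProd P S) (hT : Exp hProd Q T)
    (h : ∀ μ ν, P μ → Q ν → R (sortL (μ ++ ν))) : Exp hProd R (S * T) := by
  obtain ⟨A, v, hA, rfl⟩ := hS
  obtain ⟨B, w, hB, rfl⟩ := hT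
  rw [Finset.sum_mul_sum]
  apply Exp.fsum
  intro μ hμ
  apply Exp.fsum
  intro ν hν
  have : ((v μ : ℚ) • hProd μ) * ((w ν : ℚ) • hProd ν)
      = ((v μ * w ν : ℤ) : ℚ) • hProd (sortL (μ ++ ν)) := by
    rw [smul_mul_smul_comm, hProd_mul]
    push_cast
    ring_nf
  rw [this]
  exact Exp.smul _ (Exp.single (h μ ν (hA μ hμ) (hB ν hν)))

lemma multiset_sum_filter_ne_zero (s : Multiset ℕ) :
    (s.filter (fun x => x ≠ 0)).sum = s.sum := by
  induction s using Multiset.induction with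
  | empty => rfl
  | cons a t ih =>
    by_cases ha : a = 0
    · subst ha; rw [Multiset.filter_cons_of_neg _ (by simp)]; simp [ih]
    · rw [Multiset.filter_cons_of_pos _ (by simpa using ha)]; simp [ih]

lemma list_sum_filter_ne_zero (l : List ℕ) : (l.filter (fun x => x ≠ 0)).sum = l.sum := by
  have h := multiset_sum_filter_ne_zero (l : Multiset ℕ)
  rwa [Multiset.filter_coe, Multiset.sum_coe, Multiset.sum_coe] at h

lemma list_sum_eq_get_sum (l : List ℕ) : l.sum = ∑ i : Fin l.length, l.get i := by
  conv_lhs => rw [← List.ofFn_get l]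
  rw [List.sum_ofFn]

lemma sum_get_filter_lt (l : List ℕ) (m : ℕ) :
    ∑ j ∈ Finset.univ.filter (fun j : Fin l.length => (j : ℕ) < m), l.get j
      = (l.take m).sum := by
  rw [Finset.sum_filter]
  have h1 : ∀ j : Fin l.length, l.get j = l.getD (j : ℕ) 0 := fun j => by
    rw [List.getD_eq_getElem l 0 j.isLt]; rfl
  calc ∑ j : Fin l.length, (if (j : ℕ) < m then l.get j else 0)
      = ∑ t ∈ Finset.range l.length, (if t < m then l.getD t 0 else 0) := by
        rw [Finset.sum_range fun t => _]
        exact Finset.sum_congr rfl (fun j _ => by rw [h1])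
    _ = ∑ t ∈ (Finset.range l.length).filter (fun t => t < m), l.getD t 0 := by
        rw [Finset.sum_filter]
    _ = ∑ t ∈ Finset.range (min l.length m), l.getD t 0 := by
        congr 1
        ext t
        simp [Nat.lt_min]
    _ = (l.take (min l.length m)).sum := (take_sum_eq_range _ _).symm
    _ = (l.take m).sum := by
        rcases le_or_gt m l.length with h | h
        · rw [min_eq_right h]
        · rw [min_eq_left (le_of_lt h), take_of_ge_length l le_rfl,
            take_of_ge_length l (le_of_lt h)]

/-- The exponent function of the Jacobi-Trudi determinant. -/
def eF (l : List ℕ) (σ : Equiv.Perm (Fin l.length)) (i : Fin l.length) : ℤ :=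
  ((l.get (σ i) : ℕ) : ℤ) - ((σ i : ℕ) : ℤ) + ((i : ℕ) : ℤ)

def nuF (l : List ℕ) (σ : Equiv.Perm (Fin l.length)) : List ℕ :=
  sortL ((List.ofFn (fun i => (eF l σ i).toNat)).filter (fun x => x ≠ 0))

lemma nuF_multiset (l : List ℕ) (σ : Equiv.Perm (Fin l.length)) :
    (nuF l σ : Multiset ℕ) =
      Multiset.filter (fun x => x ≠ 0)
        (Multiset.map (fun i => (eF l σ i).toNat) Finset.univ.val) := by
  have h1 : (nuF l σ : Multiset ℕ)
      = ((List.ofFn (fun i => (eF l σ i).toNat)).filter (fun x => x ≠ 0) : Multiset ℕ) :=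
    Multiset.coe_eq_coe.mpr (sortL_perm _)
  rw [h1, ← Multiset.filter_coe]
  congr 1
  rw [List.ofFn_eq_map, Fin.univ_def]
  rfl

lemma nuF_sum (l : List ℕ) (σ : Equiv.Perm (Fin l.length))
    (hv : ∀ i, 0 ≤ eF l σ i) : (nuF l σ).sum = l.sum := by
  have h1 : (nuF l σ).sum = ((List.ofFn (fun i => (eF l σ i).toNat)).filter
      (fun x => x ≠ 0)).sum := (sortL_perm _).sum_eq
  rw [h1, list_sum_filter_ne_zero, List.sum_ofFn]
  have h2 : ((∑ i, (eF l σ i).toNat : ℕ) : ℤ) = ((l.sum : ℕ) : ℤ) := by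
    rw [Nat.cast_sum]
    rw [Finset.sum_congr rfl (fun i _ => Int.toNat_of_nonneg (hv i))]
    unfold eF
    rw [Finset.sum_add_distrib, Finset.sum_sub_distrib]
    have e1 : ∑ i : Fin l.length, ((l.get (σ i) : ℕ) : ℤ)
        = ∑ i : Fin l.length, ((l.get i : ℕ) : ℤ) :=
      Equiv.sum_comp σ (fun j => ((l.get j : ℕ) : ℤ))
    have e2 : ∑ i : Fin l.length, (((σ i : ℕ) : ℤ))
        = ∑ i : Fin l.length, (((i : ℕ) : ℤ)) :=
      Equiv.sum_comp σ (fun j => ((j : ℕ) : ℤ))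
    have e3 : ((l.sum : ℕ) : ℤ) = ∑ i : Fin l.length, ((l.get i : ℕ) : ℤ) := by
      rw [list_sum_eq_get_sum l, Nat.cast_sum]
    rw [e1, e2, e3]
    ring
  exact_mod_cast h2

lemma nuF_partition (l : List ℕ) (σ : Equiv.Perm (Fin l.length)) :
    IsPartition (nuF l σ) := by
  apply isPartition_sortL
  intro x hx
  have := List.of_mem_filter hx
  simp at this
  omega

lemma nuF_bounded (l : List ℕ) (hl : IsPartition l) (σ : Equiv.Perm (Fin l.length)) :
    ∀ x ∈ nuF l σ, x ≤ mainHook l := by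
  intro x hx
  have hx2 : x ∈ (List.ofFn (fun i => (eF l σ i).toNat)).filter (fun x => x ≠ 0) :=
    (sortL_perm _).mem_iff.mp hx
  have hx3 : x ∈ List.ofFn (fun i => (eF l σ i).toNat) := List.mem_of_mem_filter hx2
  obtain ⟨i, hi⟩ := List.mem_ofFn.mp hx3
  have hn : 0 < l.length := i.pos
  have hget : l.get (σ i) ≤ l.headI := sorted_head_max hl.1 (l.get_mem _)
  have hE : eF l σ i ≤ (l.headI : ℤ) + (l.length - 1 : ℕ) := by
    unfold eF
    have h1 : ((i : ℕ) : ℤ) ≤ ((l.length - 1 : ℕ) : ℤ) := by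
      have := i.isLt; push_cast; omega
    have h2 : ((l.get (σ i) : ℕ) : ℤ) ≤ (l.headI : ℤ) := by exact_mod_cast hget
    have h3 : (0 : ℤ) ≤ ((σ i : ℕ) : ℤ) := by positivity
    omega
  rw [← hi]
  have : eF l σ i ≤ (mainHook l : ℤ) := by
    unfold mainHook
    have : (l.headI : ℤ) + ((l.length - 1 : ℕ) : ℤ) = ((l.headI + l.length - 1 : ℕ) : ℤ) := by
      push_cast; omega
    omega
  exact Int.toNat_le.mpr this

lemma nuF_dominates (l : List ℕ) (σ : Equiv.Perm (Fin l.length))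
    (hv : ∀ i, 0 ≤ eF l σ i) : Dominates (nuF l σ) l := by
  intro m
  set I : Finset (Fin l.length) := Finset.univ.filter (fun i => ((σ i : ℕ) < m)) with hI
  set J : Finset (Fin l.length) := Finset.univ.filter (fun j => ((j : ℕ) < m)) with hJ
  have hJI : J = I.image σ := by
    ext j
    simp only [hI, hJ, Finset.mem_image, Finset.mem_filter, Finset.mem_univ, true_and]
    constructor
    · intro hj
      exact ⟨σ⁻¹ j, by simpa using hj, by simp⟩
    · rintro ⟨i, hi, rfl⟩
      exact hi
  have hinj : ∀ x ∈ I, ∀ y ∈ I, σ x = σ y → x = y := fun x _ y _ h => σ.injective h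
  -- the sub-multiset
  set D : Multiset ℕ := Multiset.filter (fun x => x ≠ 0)
    (Multiset.map (fun i => (eF l σ i).toNat) I.val) with hD
  have hDle : D ≤ (nuF l σ : Multiset ℕ) := by
    rw [nuF_multiset]
    apply Multiset.filter_le_filter
    apply Multiset.map_le_map
    exact Finset.val_le_iff.mpr (Finset.filter_subset _ _)
  have hDcard : Multiset.card D ≤ m := by
    have h1 : Multiset.card D ≤ Multiset.card (Multiset.map (fun i => (eF l σ i).toNat) I.val) :=
      Multiset.card_le_card (Multiset.filter_le _ _)
    rw [Multiset.card_map] at h1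
    have h2 : I.card ≤ m := by
      have h2' := Finset.card_le_card_of_injOn (s := I) (t := Finset.range m)
        (fun i => ((σ i : ℕ)))
        (by
          intro a ha
          rw [hI] at ha
          exact Finset.mem_range.mpr (Finset.mem_filter.mp ha).2)
        (fun a _ b _ h => σ.injective (Fin.ext h))
      rwa [Finset.card_range] at h2'
    exact le_trans h1 h2
  -- sum bound
  have hDsum : (l.take m).sum ≤ D.sum := by
    have hfil : D.sum = (Multiset.map (fun i => (eF l σ i).toNat) I.val).sum :=
      multiset_sum_filter_ne_zero _
    have hfin : (Multiset.map (fun i => (eF l σ i).toNat) I.val).sum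
        = ∑ i ∈ I, (eF l σ i).toNat := rfl
    -- work in ℤ
    have hz : ((l.take m).sum : ℤ) ≤ ((∑ i ∈ I, (eF l σ i).toNat : ℕ) : ℤ) := by
      rw [Nat.cast_sum]
      rw [Finset.sum_congr rfl (fun i _ => Int.toNat_of_nonneg (hv i))]
      unfold eF
      rw [Finset.sum_add_distrib, Finset.sum_sub_distrib]
      have e1 : ∑ i ∈ I, ((l.get (σ i) : ℕ) : ℤ) = ∑ j ∈ J, ((l.get j : ℕ) : ℤ) := by
        rw [hJI, Finset.sum_image hinj]
      have e2 : ∑ i ∈ I, (((σ i : ℕ)) : ℤ) = ∑ j ∈ J, (((j : ℕ)) : ℤ) := by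
        rw [hJI, Finset.sum_image hinj]
      have e3 : ∑ j ∈ J, ((l.get j : ℕ) : ℤ) = (((l.take m).sum : ℕ) : ℤ) := by
        rw [← sum_get_filter_lt l m, Nat.cast_sum]
      -- ∑ over J of j equals ∑ range (J.card)
      have hJim : Finset.image Fin.val J = Finset.range (min l.length m) := by
        ext t
        simp only [hJ, Finset.mem_image, Finset.mem_filter, Finset.mem_univ, true_and,
          Finset.mem_range, Nat.lt_min]
        constructor
        · rintro ⟨j, hj, rfl⟩; exact ⟨j.isLt, hj⟩
        · rintro ⟨h1, h2⟩; exact ⟨⟨t, h1⟩, h2, rfl⟩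
      have hvalinj : ∀ x ∈ J, ∀ y ∈ J, Fin.val x = Fin.val y → x = y :=
        fun x _ y _ h => Fin.ext h
      have hJcard : J.card = min l.length m := by
        rw [← Finset.card_image_of_injOn hvalinj, hJim, Finset.card_range]
      have hIcard : I.card = min l.length m := by
        rw [hJI, Finset.card_image_of_injOn (fun x hx y hy h => σ.injective h)] at hJcard
        omega
      have e4 : ∑ j ∈ J, Fin.val j = ∑ t ∈ Finset.range (min l.length m), t := by
        rw [← hJim, Finset.sum_image hvalinj]
      have e5 : ∑ t ∈ Finset.range (min l.length m), t ≤ ∑ i ∈ I, Fin.val i := by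
        have h6 : ∑ i ∈ I, Fin.val i = ∑ x ∈ I.image Fin.val, x := by
          rw [Finset.sum_image (fun x _ y _ h => Fin.ext h)]
        have h7 : (I.image Fin.val).card = min l.length m := by
          rw [Finset.card_image_of_injOn (fun x _ y _ h => Fin.ext h), hIcard]
        rw [h6, ← h7]
        exact sum_distinct_ge _
      have e2' : ∑ i ∈ I, (((σ i : ℕ)) : ℤ) = ((∑ t ∈ Finset.range (min l.length m), t : ℕ) : ℤ) := by
        rw [e2, ← Nat.cast_sum]
        rw [show ∑ j ∈ J, ((j : ℕ)) = ∑ j ∈ J, Fin.val j from rfl, e4]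
      have e5' : ((∑ t ∈ Finset.range (min l.length m), t : ℕ) : ℤ) ≤ ∑ i ∈ I, (((i : ℕ)) : ℤ) := by
        rw [← Nat.cast_sum]
        exact_mod_cast e5
      rw [e1, e3, e2']
      omega
    rw [hfil, hfin]
    exact_mod_cast hz
  have := sum_le_take_of_le (nuF l σ) (sortL_sorted _) m D hDle hDcard
  omega

lemma nuF_ne (l : List ℕ) (hl : IsPartition l) (σ : Equiv.Perm (Fin l.length))
    (hv : ∀ i, 0 ≤ eF l σ i) (hσ : σ ≠ 1) : nuF l σ ≠ l := by
  intro hνl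
  set g : Fin l.length → ℕ := fun i => (eF l σ i).toNat with hg
  -- the filtered list has full length, so no zeros
  have hlen : ((List.ofFn g).filter (fun x => x ≠ 0)).length = l.length := by
    have h1 : (nuF l σ).length = ((List.ofFn g).filter (fun x => x ≠ 0)).length := by
      unfold nuF
      exact (sortL_perm _).length_eq
    rw [hνl] at h1
    omega
  have hfull : (List.ofFn g).filter (fun x => x ≠ 0) = List.ofFn g :=
    (List.filter_sublist).eq_of_length (by rw [hlen, List.length_ofFn])
  -- multiset equality
  have hms : Multiset.map g Finset.univ.val = Multiset.map (fun i : Fin l.length => l.get i)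
      Finset.univ.val := by
    have h1 : ((List.ofFn g : List ℕ) : Multiset ℕ) = ((l : List ℕ) : Multiset ℕ) := by
      rw [← hfull]
      have h2 : ((nuF l σ : List ℕ) : Multiset ℕ)
          = (((List.ofFn g).filter (fun x => x ≠ 0) : List ℕ) : Multiset ℕ) :=
        Multiset.coe_eq_coe.mpr (sortL_perm _)
      rw [← h2, hνl]
    have h3 : ((List.ofFn g : List ℕ) : Multiset ℕ) = Multiset.map g Finset.univ.val := by
      rw [List.ofFn_eq_map, Fin.univ_def]; rfl
    have h4 : ((l : List ℕ) : Multiset ℕ) = Multiset.map (fun i : Fin l.length => l.get i)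
        Finset.univ.val := by
      conv_lhs => rw [← List.ofFn_get l]
      rw [List.ofFn_eq_map, Fin.univ_def]; rfl
    rw [← h3, ← h4, h1]
  -- sums of squares agree
  have hsq : ∑ i : Fin l.length, (eF l σ i) * (eF l σ i)
      = ∑ i : Fin l.length, ((l.get i : ℕ) : ℤ) * ((l.get i : ℕ) : ℤ) := by
    have h1 : Multiset.map (fun i : Fin l.length => (eF l σ i)) Finset.univ.val
        = Multiset.map (fun i : Fin l.length => ((l.get i : ℕ) : ℤ)) Finset.univ.val := by
      have h2 : Multiset.map (fun i : Fin l.length => (eF l σ i)) Finset.univ.val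
          = Multiset.map (fun x : ℕ => (x : ℤ)) (Multiset.map g Finset.univ.val) := by
        rw [Multiset.map_map]
        apply Multiset.map_congr rfl
        intro i _
        simp only [Function.comp_apply, hg, Int.toNat_of_nonneg (hv i)]
      rw [h2, hms, Multiset.map_map]
      rfl
    have h3 : ∀ (M : Multiset ℤ) (f : Fin l.length → ℤ),
        Multiset.map f Finset.univ.val = M →
        ∑ i : Fin l.length, f i * f i = (Multiset.map (fun x : ℤ => x * x) M).sum := by
      intro M f hM
      rw [← hM, Multiset.map_map]
      rfl
    rw [h3 _ _ h1, h3 _ _ rfl]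
  -- rearrangement
  set d : Fin l.length → ℤ := fun i => ((i : ℕ) : ℤ) - ((σ i : ℕ) : ℤ) with hd
  have hEd : ∀ i, eF l σ i = ((l.get (σ i) : ℕ) : ℤ) + d i := fun i => by
    simp only [eF, hd]; ring
  have hperm2 : ∑ i : Fin l.length, ((l.get (σ i) : ℕ) : ℤ) * ((l.get (σ i) : ℕ) : ℤ)
      = ∑ i : Fin l.length, ((l.get i : ℕ) : ℤ) * ((l.get i : ℕ) : ℤ) :=
    Equiv.sum_comp σ (fun j => ((l.get j : ℕ) : ℤ) * ((l.get j : ℕ) : ℤ))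
  have hexpand : ∑ i : Fin l.length, (eF l σ i) * (eF l σ i)
      = ∑ i : Fin l.length, ((l.get (σ i) : ℕ) : ℤ) * ((l.get (σ i) : ℕ) : ℤ)
        + (2 * ∑ i : Fin l.length, ((l.get (σ i) : ℕ) : ℤ) * d i + ∑ i : Fin l.length, d i * d i) := by
    rw [Finset.mul_sum, ← Finset.sum_add_distrib, ← Finset.sum_add_distrib]
    apply Finset.sum_congr rfl
    intro i _
    rw [hEd i]; ring
  have hzero : 2 * (∑ i : Fin l.length, ((l.get (σ i) : ℕ) : ℤ) * d i) + ∑ i : Fin l.length, d i * d i = 0 := by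
    rw [hsq] at hexpand
    rw [hperm2] at hexpand
    omega
  -- rearrangement inequality: ∑ get(σ i) * d i ≥ 0
  have hrear : 0 ≤ ∑ i : Fin l.length, ((l.get (σ i) : ℕ) : ℤ) * d i := by
    have hsplit : ∑ i : Fin l.length, ((l.get (σ i) : ℕ) : ℤ) * d i
        = ∑ i : Fin l.length, ((l.get (σ i) : ℕ) : ℤ) * ((i : ℕ) : ℤ)
          - ∑ i : Fin l.length, ((l.get (σ i) : ℕ) : ℤ) * ((σ i : ℕ) : ℤ) := by
      rw [← Finset.sum_sub_distrib]
      apply Finset.sum_congr rfl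
      intro i _
      simp only [hd]; ring
    have h1 : ∑ i : Fin l.length, ((l.get (σ i) : ℕ) : ℤ) * ((σ i : ℕ) : ℤ)
        = ∑ j : Fin l.length, ((l.get j : ℕ) : ℤ) * ((j : ℕ) : ℤ) :=
      Equiv.sum_comp σ (fun j => ((l.get j : ℕ) : ℤ) * ((j : ℕ) : ℤ))
    have h2 : ∑ i : Fin l.length, ((l.get (σ i) : ℕ) : ℤ) * ((i : ℕ) : ℤ)
        = ∑ j : Fin l.length, ((l.get j : ℕ) : ℤ) * (((σ⁻¹ j : Fin l.length) : ℕ) : ℤ) := by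
      have := Equiv.sum_comp σ⁻¹
        (fun i : Fin l.length => ((l.get (σ i) : ℕ) : ℤ) * ((i : ℕ) : ℤ))
      rw [← this]
      apply Finset.sum_congr rfl
      intro j _
      simp
    have hant : Antivary (fun j : Fin l.length => ((l.get j : ℕ) : ℤ))
        (fun j : Fin l.length => ((j : ℕ) : ℤ)) := by
      intro i j hij
      dsimp only at hij ⊢
      have hij2 : i < j := by
        rw [Fin.lt_def]; exact_mod_cast hij
      have h9 := List.Pairwise.rel_get_of_lt hl.1 hij2
      exact_mod_cast h9
    have h3 := hant.sum_mul_le_sum_mul_comp_perm (σ := σ⁻¹)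
    rw [hsplit, h1, h2]
    omega
  have hdzero : ∀ i : Fin l.length, d i = 0 := by
    have hsumd : ∑ i : Fin l.length, d i * d i = 0 := by
      have hnn : 0 ≤ ∑ i : Fin l.length, d i * d i :=
        Finset.sum_nonneg (fun i _ => mul_self_nonneg _)
      omega
    intro i
    have := (Finset.sum_eq_zero_iff_of_nonneg
      (fun i (_ : i ∈ Finset.univ) => mul_self_nonneg (d i))).mp hsumd i (Finset.mem_univ i)
    nlinarith [this]
  apply hσ
  ext i
  have := hdzero i
  simp only [hd] at this
  have : ((σ i : ℕ) : ℤ) = ((i : ℕ) : ℤ) := by omega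
  exact_mod_cast this



lemma prod_hZ_eq_hProd {l : List ℕ} (σ : Equiv.Perm (Fin l.length))
    (hv : ∀ i, 0 ≤ eF l σ i) :
    ∏ i : Fin l.length, hZ (eF l σ i) = hProd (nuF l σ) := by
  have h1 : ∀ i : Fin l.length, hZ (eF l σ i) = hh ((eF l σ i).toNat) := fun i => by
    have h0 := hv i
    unfold hZ
    rw [if_neg (by omega)]
  rw [Finset.prod_congr rfl (fun i _ => h1 i)]
  unfold nuF
  rw [hProd_sortL, hProd_filter_ne_zero]
  unfold hProd
  rw [List.map_ofFn, List.prod_ofFn]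
  rfl

lemma prod_hZ_eq_zero {l : List ℕ} (σ : Equiv.Perm (Fin l.length))
    (hv : ¬ ∀ i, 0 ≤ eF l σ i) :
    ∏ i : Fin l.length, hZ (eF l σ i) = 0 := by
  push_neg at hv
  obtain ⟨i, hi⟩ := hv
  apply Finset.prod_eq_zero (Finset.mem_univ i)
  unfold hZ
  rw [if_pos (by omega)]

lemma eF_one (l : List ℕ) (i : Fin l.length) : eF l 1 i = ((l.get i : ℕ) : ℤ) := by
  unfold eF
  simp

lemma nuF_one {l : List ℕ} (hl : IsPartition l) : nuF l 1 = l := by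
  unfold nuF
  have h1 : (List.ofFn (fun i => (eF l 1 i).toNat)) = l := by
    rw [show (fun i => (eF l 1 i).toNat) = l.get from ?_]
    · exact List.ofFn_get l
    · funext i
      rw [eF_one]
      simp
  rw [h1]
  have h2 : l.filter (fun x => x ≠ 0) = l := by
    apply List.filter_eq_self.mpr
    intro x hx
    have := hl.2 x hx
    simpa using by omega
  rw [h2]
  exact sortL_eq_self hl.1

/-- main expansion of a Schur function in the h-basis -/
lemma schur_expand {l : List ℕ} (hl : IsPartition l) :
    ∃ S : SymFn, schur l = hProd l + S ∧
      Exp hProd (fun ν => IsPartition ν ∧ (∀ x ∈ ν, x ≤ mainHook l) ∧ ν.sum = l.sum ∧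
        Dominates ν l ∧ ν ≠ l) S := by
  classical
  have hdet : schur l = ∑ σ : Equiv.Perm (Fin l.length),
      ((Equiv.Perm.sign σ : ℤ) : ℚ) • ∏ i : Fin l.length, hZ (eF l σ i) := by
    unfold schur
    rw [Matrix.det_apply]
    apply Finset.sum_congr rfl
    intro σ _
    rw [Units.smul_def, Int.cast_smul_eq_zsmul]
    rfl
  set V : Finset (Equiv.Perm (Fin l.length)) :=
    Finset.univ.filter (fun σ => ∀ i, 0 ≤ eF l σ i) with hV
  have hVsum : schur l = ∑ σ ∈ V,
      ((Equiv.Perm.sign σ : ℤ) : ℚ) • ∏ i : Fin l.length, hZ (eF l σ i) := by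
    rw [hdet]
    symm
    apply Finset.sum_subset (Finset.filter_subset _ _)
    intro σ _ hσ
    have : ¬ ∀ i, 0 ≤ eF l σ i := by
      intro hc
      exact hσ (Finset.mem_filter.mpr ⟨Finset.mem_univ _, hc⟩)
    rw [prod_hZ_eq_zero σ this, smul_zero]
  have h1V : (1 : Equiv.Perm (Fin l.length)) ∈ V :=
    Finset.mem_filter.mpr ⟨Finset.mem_univ _, fun i => by rw [eF_one]; positivity⟩
  have hsplit : schur l = hProd l + ∑ σ ∈ V.erase 1,
      ((Equiv.Perm.sign σ : ℤ) : ℚ) • hProd (nuF l σ) := by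
    rw [hVsum, ← Finset.add_sum_erase _ _ h1V]
    congr 1
    · have hv1 : ∀ i, 0 ≤ eF l 1 i := fun i => by rw [eF_one]; positivity
      rw [prod_hZ_eq_hProd 1 hv1, nuF_one hl]
      simp
    · apply Finset.sum_congr rfl
      intro σ hσ
      have hσV := Finset.mem_of_mem_erase hσ
      rw [prod_hZ_eq_hProd σ (Finset.mem_filter.mp hσV).2]
  refine ⟨_, hsplit, ?_⟩
  apply Exp.fsum
  intro σ hσ
  have hσ1 : σ ≠ 1 := Finset.ne_of_mem_erase hσ
  have hσV := Finset.mem_of_mem_erase hσ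
  have hv := (Finset.mem_filter.mp hσV).2
  exact Exp.smul _ (Exp.single ⟨nuF_partition l σ, nuF_bounded l hl σ, nuF_sum l σ hv,
    nuF_dominates l σ hv, nuF_ne l hl σ hv hσ1⟩)

/-- specification of the k-split -/
lemma kSplitAux_spec (k : ℕ) : ∀ (fuel : ℕ) (l : List ℕ), l.length ≤ fuel →
    IsPartition l → KBounded k l →
    (kSplitAux k fuel l).flatten = l ∧
      ∀ b ∈ kSplitAux k fuel l, IsPartition b ∧ mainHook b ≤ k := by
  intro fuel
  induction fuel with
  | zero =>
    intro l hlen _ _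
    have : l = [] := List.length_eq_zero_iff.mp (by omega)
    subst this
    exact ⟨rfl, by simp [kSplitAux]⟩
  | succ fuel ih =>
    intro l hlen hl hb
    cases l with
    | nil => exact ⟨rfl, by simp [kSplitAux]⟩
    | cons a rest =>
      have ha : 0 < a := hl.2 a (by simp)
      have hak : a ≤ k := hb a (by simp)
      have hcase : ¬ (k + 1 - a = 0) := by omega
      by_cases hc : (a :: rest).length ≤ k + 1 - a
      · rw [show kSplitAux k (fuel+1) (a :: rest) = [a :: rest] from by
          rw [kSplitAux]; rw [if_pos (Or.inl hc)]]
        refine ⟨by simp, ?_⟩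
        intro b hbmem
        simp at hbmem
        subst hbmem
        refine ⟨hl, ?_⟩
        unfold mainHook
        simp only [List.headI_cons]
        have : (a :: rest).length ≤ k + 1 - a := hc
        simp at this ⊢
        omega
      · rw [show kSplitAux k (fuel+1) (a :: rest)
            = (a :: rest).take (k + 1 - a) :: kSplitAux k fuel ((a :: rest).drop (k + 1 - a)) from by
          rw [kSplitAux]; rw [if_neg (by push_neg; exact ⟨by omega, hcase⟩)]]
        have hdroplen : ((a :: rest).drop (k + 1 - a)).length ≤ fuel := by
          rw [List.length_drop]
          simp only [List.length_cons] at hlen hc ⊢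
          omega
        have hdrop_part : IsPartition ((a :: rest).drop (k + 1 - a)) :=
          ⟨hl.1.sublist (List.drop_sublist _ _),
           fun x hx => hl.2 x (List.mem_of_mem_drop hx)⟩
        have hdrop_bd : KBounded k ((a :: rest).drop (k + 1 - a)) :=
          fun x hx => hb x (List.mem_of_mem_drop hx)
        obtain ⟨hjoin, hblocks⟩ := ih _ hdroplen hdrop_part hdrop_bd
        constructor
        · have hjc : ((a :: rest).take (k + 1 - a)
              :: kSplitAux k fuel ((a :: rest).drop (k + 1 - a))).flatten
              = (a :: rest).take (k + 1 - a)
                ++ (kSplitAux k fuel ((a :: rest).drop (k + 1 - a))).flatten := rfl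
          rw [hjc, hjoin]
          exact List.take_append_drop _ _
        · intro b hbmem
          rcases List.mem_cons.1 hbmem with rfl | hbmem
          · refine ⟨⟨hl.1.sublist (List.take_sublist _ _),
              fun x hx => hl.2 x (List.mem_of_mem_take hx)⟩, ?_⟩
            unfold mainHook
            obtain ⟨m, hm⟩ : ∃ m, k + 1 - a = m + 1 := ⟨k - a, by omega⟩
            rw [hm]
            simp only [List.take_succ_cons, List.headI_cons, List.length_cons,
              List.length_take]
            simp only [List.length_cons] at hc
            push_neg at hc
            omega
          · exact hblocks b hbmem

lemma kSplit_spec {k : ℕ} {l : List ℕ} (hl : IsPartition l) (hb : KBounded k l) :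
    (kSplit k l).flatten = l ∧ ∀ b ∈ kSplit k l, IsPartition b ∧ mainHook b ≤ k :=
  kSplitAux_spec k l.length l le_rfl hl hb

lemma isPartition_suffix {x y : List ℕ} (h : IsPartition (x ++ y)) : IsPartition y :=
  ⟨h.1.sublist (List.sublist_append_right x y), fun a ha => h.2 a (by simp [ha])⟩

lemma parts_le_of_mainHook {b : List ℕ} {k : ℕ} (hb : IsPartition b) (hmh : mainHook b ≤ k) :
    KBounded k b := by
  intro x hx
  have h1 : x ≤ b.headI := sorted_head_max hb.1 hx
  have h2 : 1 ≤ b.length := by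
    cases b with
    | nil => simp at hx
    | cons c t => simp
  unfold mainHook at hmh
  omega

lemma multiset_ne_of_partition_ne {x y : List ℕ} (hx : IsPartition x) (hy : IsPartition y)
    (h : x ≠ y) : (x : Multiset ℕ) ≠ (y : Multiset ℕ) := by
  intro hc
  exact h (sorted_eq_of_perm (Multiset.coe_eq_coe.mp hc) hx.1 hy.1)

/-- expansion of a product of Schur functions over blocks -/
lemma blocks_expand {k : ℕ} : ∀ (bs : List (List ℕ)),
    (∀ b ∈ bs, IsPartition b ∧ mainHook b ≤ k) → IsPartition bs.flatten →
    ∃ S, ((bs.map schur).prod = hProd bs.flatten + S) ∧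
      Exp hProd (fun ν => IsPartition ν ∧ KBounded k ν ∧ ν.sum = bs.flatten.sum ∧
        Dominates ν bs.flatten ∧ (ν : Multiset ℕ) ≠ (bs.flatten : Multiset ℕ)) S := by
  intro bs
  induction bs with
  | nil =>
    intro _ _
    exact ⟨0, by simp [hProd], Exp.zero _ _⟩
  | cons b bs ih =>
    intro hblocks hjoin
    have hjcons : (b :: bs).flatten = b ++ bs.flatten := by simp
    have hb : IsPartition b := (hblocks b (by simp)).1
    have hbmh : mainHook b ≤ k := (hblocks b (by simp)).2
    have hbk : KBounded k b := parts_le_of_mainHook hb hbmh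
    have hjr : IsPartition bs.flatten := isPartition_suffix (hjcons ▸ hjoin)
    obtain ⟨S₂, hS₂eq, hS₂⟩ := ih (fun c hc => hblocks c (by simp [hc])) hjr
    obtain ⟨S₁, hS₁eq, hS₁⟩ := schur_expand hb
    set jr := bs.flatten with hjrdef
    -- the three cross terms
    have hposb : ∀ x ∈ b, 0 < x := hb.2
    have hbExp : Exp hProd (fun μ => μ = b) (hProd b) := Exp.single rfl
    have hjrExp : Exp hProd (fun ν => ν = jr) (hProd jr) := Exp.single rfl
    set R : List ℕ → Prop := fun ν => IsPartition ν ∧ KBounded k ν ∧ ν.sum = (b ++ jr).sum ∧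
        Dominates ν (b ++ jr) ∧ (ν : Multiset ℕ) ≠ ((b ++ jr : List ℕ) : Multiset ℕ) with hR
    have hsort_facts : ∀ μ ν : List ℕ, IsPartition μ → IsPartition ν →
        IsPartition (sortL (μ ++ ν)) ∧ (sortL (μ ++ ν)).sum = μ.sum + ν.sum := by
      intro μ ν h1 h2
      constructor
      · apply isPartition_sortL
        intro x hx
        rcases List.mem_append.1 hx with h | h
        · exact h1.2 x h
        · exact h2.2 x h
      · rw [(sortL_perm _).sum_eq, List.sum_append]
    have hkb : ∀ μ ν : List ℕ, KBounded k μ → KBounded k ν → KBounded k (sortL (μ ++ ν)) := by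
      intro μ ν h1 h2 x hx
      rcases List.mem_append.1 ((sortL_perm _).mem_iff.mp hx) with h | h
      · exact h1 x h
      · exact h2 x h
    have hT1 : Exp hProd R (hProd b * S₂) := by
      apply Exp.mul hbExp hS₂
      intro μ ν hμb hνP
      rw [hμb]
      obtain ⟨hν1, hν2, hν3, hν4, hν5⟩ := hνP
      refine ⟨(hsort_facts _ _ hb hν1).1, hkb _ _ hbk hν2, ?_, ?_, ?_⟩
      · rw [(hsort_facts _ _ hb hν1).2, hν3, List.sum_append]
      · exact dominates_append (dominates_refl b) rfl hposb hν4
      · intro hc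
        apply hν5
        have h1 : ((sortL (b ++ ν) : List ℕ) : Multiset ℕ)
            = (b : Multiset ℕ) + (ν : Multiset ℕ) := by
          rw [Multiset.coe_eq_coe.mpr (sortL_perm _), ← Multiset.coe_add]
        rw [h1] at hc
        have h2 : ((b ++ jr : List ℕ) : Multiset ℕ) = (b : Multiset ℕ) + (jr : Multiset ℕ) := by
          rw [← Multiset.coe_add]
        rw [h2] at hc
        exact add_left_cancel hc
    have hjrk : KBounded k jr := by
      intro x hx
      obtain ⟨c, hc, hxc⟩ := List.mem_flatten.mp hx
      exact parts_le_of_mainHook (hblocks c (by simp [hc])).1 (hblocks c (by simp [hc])).2 x hxc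
    have hT2 : Exp hProd R (S₁ * hProd jr) := by
      apply Exp.mul hS₁ hjrExp
      intro μ ν hμP hνjr
      subst hνjr
      obtain ⟨hμ1, hμ2, hμ3, hμ4, hμ5⟩ := hμP
      have hμk : KBounded k μ := fun x hx => le_trans (hμ2 x hx) hbmh
      refine ⟨(hsort_facts _ _ hμ1 hjr).1, hkb _ _ hμk hjrk, ?_, ?_, ?_⟩
      · rw [(hsort_facts _ _ hμ1 hjr).2, hμ3, List.sum_append]
      · exact dominates_append hμ4 hμ3 hμ1.2 (dominates_refl jr)
      · intro hc
        have h1 : ((sortL (μ ++ jr) : List ℕ) : Multiset ℕ)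
            = (μ : Multiset ℕ) + (jr : Multiset ℕ) := by
          rw [Multiset.coe_eq_coe.mpr (sortL_perm _), ← Multiset.coe_add]
        have h2 : ((b ++ jr : List ℕ) : Multiset ℕ) = (b : Multiset ℕ) + (jr : Multiset ℕ) := by
          rw [← Multiset.coe_add]
        rw [h1, h2] at hc
        have h3 := add_right_cancel hc
        exact multiset_ne_of_partition_ne hμ1 hb hμ5 h3
    have hT3 : Exp hProd R (S₁ * S₂) := by
      apply Exp.mul hS₁ hS₂
      rintro μ ν ⟨hμ1, hμ2, hμ3, hμ4, hμ5⟩ ⟨hν1, hν2, hν3, hν4, hν5⟩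
      have hμk : KBounded k μ := fun x hx => le_trans (hμ2 x hx) hbmh
      refine ⟨(hsort_facts _ _ hμ1 hν1).1, hkb _ _ hμk hν2, ?_, ?_, ?_⟩
      · rw [(hsort_facts _ _ hμ1 hν1).2, hμ3, hν3, List.sum_append]
      · exact dominates_append hμ4 hμ3 hμ1.2 hν4
      · intro hc
        have h1 : ((sortL (μ ++ ν) : List ℕ) : Multiset ℕ)
            = (μ : Multiset ℕ) + (ν : Multiset ℕ) := by
          rw [Multiset.coe_eq_coe.mpr (sortL_perm _), ← Multiset.coe_add]
        have h2 : ((b ++ jr : List ℕ) : Multiset ℕ) = (b : Multiset ℕ) + (jr : Multiset ℕ) := by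
          rw [← Multiset.coe_add]
        rw [h1, h2] at hc
        -- sums of squares
        have hF : ∀ z : List ℕ, ((z : Multiset ℕ).map (fun x => x * x)).sum
            = (z.map (fun x => x * x)).sum := fun z => rfl
        have hsum_eq : (μ.map (fun x => x * x)).sum + (ν.map (fun x => x * x)).sum
            = (b.map (fun x => x * x)).sum + (jr.map (fun x => x * x)).sum := by
          have := congrArg (fun M : Multiset ℕ => (M.map (fun x => x * x)).sum) hc
          simpa [Multiset.map_add, Multiset.sum_add, hF] using this
        have h5 := sumsq_dominates hμ1 hb hμ4 hμ3
        have h6 := sumsq_dominates hν1 hjr hν4 hν3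
        have h7 : (μ.map (fun x => x * x)).sum = (b.map (fun x => x * x)).sum := by omega
        exact hμ5 (h5.2 h7)
    refine ⟨hProd b * S₂ + S₁ * hProd jr + S₁ * S₂, ?_, ?_⟩
    · rw [show ((b :: bs).map schur).prod = schur b * (bs.map schur).prod from by simp]
      rw [hS₁eq, hS₂eq, hjcons, hProd_append]
      ring
    · rw [hjcons]
      exact Exp.add (Exp.add hT1 hT2) hT3



lemma Gk_expand {k : ℕ} {l : List ℕ} (hl : IsPartition l) (hb : KBounded k l) :
    ∃ S, Gk k l = hProd l + S ∧
      Exp hProd (fun ν => IsPartition ν ∧ KBounded k ν ∧ ν.sum = l.sum ∧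
        Dominates ν l ∧ ν ≠ l) S := by
  obtain ⟨hjoin, hblocks⟩ := kSplit_spec hl hb
  obtain ⟨S, hSeq, hS⟩ := blocks_expand (kSplit k l) hblocks (by rw [hjoin]; exact hl)
  rw [hjoin] at hSeq hS
  refine ⟨S, hSeq, Exp.mono hS ?_⟩
  rintro ν ⟨h1, h2, h3, h4, h5⟩
  exact ⟨h1, h2, h3, h4, fun hc => h5 (by rw [hc])⟩

/-- inverse expansion: h in terms of G -/
lemma hProd_expand_G {k : ℕ} : ∀ (fuel : ℕ) (l : List ℕ), IsPartition l → KBounded k l →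
    l.sum * l.sum ≤ wMeas l.sum l + fuel →
    ∃ S, hProd l = Gk k l + S ∧
      Exp (Gk k) (fun ρ => IsPartition ρ ∧ KBounded k ρ ∧ ρ.sum = l.sum ∧
        Dominates ρ l ∧ ρ ≠ l) S := by
  intro fuel
  induction fuel with
  | zero =>
    intro l hl hb hw
    obtain ⟨S, hSeq, A, v, hA, hSsum⟩ := Gk_expand hl hb
    have hAempty : A = ∅ := by
      apply Finset.eq_empty_iff_forall_notMem.mpr
      intro ν hν
      obtain ⟨h1, h2, h3, h4, h5⟩ := hA ν hν
      have hlt := wMeas_lt h1.2 hl.2 h3 rfl h4 h5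
      have hle := wMeas_le h3
      omega
    subst hAempty
    simp only [Finset.sum_empty] at hSsum
    subst hSsum
    rw [add_zero] at hSeq
    exact ⟨0, by rw [add_zero, hSeq], Exp.zero _ _⟩
  | succ fuel ih =>
    intro l hl hb hw
    obtain ⟨S, hSeq, A, v, hA, hSsum⟩ := Gk_expand hl hb
    -- recursively expand each hProd ν
    have hrec : ∀ ν : List ℕ, ∃ S', ν ∈ A →
        (hProd ν = Gk k ν + S' ∧
         Exp (Gk k) (fun ρ => IsPartition ρ ∧ KBounded k ρ ∧ ρ.sum = ν.sum ∧
           Dominates ρ ν ∧ ρ ≠ ν) S') := by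
      intro ν
      by_cases hν : ν ∈ A
      · obtain ⟨h1, h2, h3, h4, h5⟩ := hA ν hν
        have hwν : ν.sum * ν.sum ≤ wMeas ν.sum ν + fuel := by
          have hlt := wMeas_lt h1.2 hl.2 h3 rfl h4 h5
          rw [h3] at *
          omega
        obtain ⟨S', h6, h7⟩ := ih ν h1 h2 hwν
        exact ⟨S', fun _ => ⟨h6, h7⟩⟩
      · exact ⟨0, fun h => absurd h hν⟩
    choose S' hS' using hrec
    refine ⟨∑ ν ∈ A, ((-(v ν) : ℤ) : ℚ) • (Gk k ν + S' ν), ?_, ?_⟩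
    · have h8 : S = ∑ ν ∈ A, (v ν : ℚ) • (Gk k ν + S' ν) := by
        rw [hSsum]
        apply Finset.sum_congr rfl
        intro ν hν
        rw [(hS' ν hν).1]
      have h9 : ∑ ν ∈ A, ((-(v ν) : ℤ) : ℚ) • (Gk k ν + S' ν)
          = - ∑ ν ∈ A, (v ν : ℚ) • (Gk k ν + S' ν) := by
        rw [← Finset.sum_neg_distrib]
        apply Finset.sum_congr rfl
        intro ν _
        push_cast
        rw [neg_smul]
      rw [h9, ← h8, hSeq]
      abel
    · apply Exp.fsum
      intro ν hν
      obtain ⟨h1, h2, h3, h4, h5⟩ := hA ν hν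
      apply Exp.smul
      apply Exp.add
      · exact Exp.single ⟨h1, h2, h3, h4, h5⟩
      · apply Exp.mono (hS' ν hν).2
        rintro ρ ⟨g1, g2, g3, g4, g5⟩
        refine ⟨g1, g2, by omega, dominates_trans g4 h4, ?_⟩
        intro hc
        subst hc
        exact h5 (dominates_antisymm h1.2 hl.2 h4 g4)



lemma schur_single (a : ℕ) : schur [a] = hh a := by
  have h : schur [a] = Matrix.det (Matrix.of fun i j : Fin 1 =>
      hZ ((([a].get i : ℕ) : ℤ) - ((i : ℕ) : ℤ) + ((j : ℕ) : ℤ))) := rfl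
  rw [h, Matrix.det_unique]
  show hZ ((([a].get (0 : Fin 1) : ℕ) : ℤ) - (((0 : Fin 1) : ℕ) : ℤ)
    + (((0 : Fin 1) : ℕ) : ℤ)) = hh a
  simp [hZ]

lemma Gk_nil (k : ℕ) : Gk k [] = 1 := rfl

lemma dominates_cons {a : ℕ} {ν μ : List ℕ} (h : Dominates ν μ) :
    Dominates (a :: ν) (a :: μ) := by
  intro i
  cases i with
  | zero => simp
  | succ i =>
    simp only [List.take_succ_cons, List.sum_cons]
    have := h i
    omega

/-- multiplication by h_a maps the G-basis triangularly -/
lemma mul_Gk_expand {k a : ℕ} {μ : List ℕ} (ha : 0 < a) (hak : a ≤ k)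
    (hμ : IsPartition μ) (hbd : KBounded k μ) (hhead : μ.headI ≤ a) :
    ∃ S, hh a * Gk k μ = Gk k (a :: μ) + S ∧
      Exp (Gk k) (fun ρ => IsPartition ρ ∧ KBounded k ρ ∧ ρ.sum = (a :: μ).sum ∧
        Dominates ρ (a :: μ) ∧ ρ ≠ a :: μ) S := by
  have haμ : IsPartition (a :: μ) := isPartition_cons hμ ha hhead
  have haμb : KBounded k (a :: μ) := by
    intro x hx
    rcases List.mem_cons.1 hx with rfl | hx
    · exact hak
    · exact hbd x hx
  obtain ⟨S₁, hS₁eq, A, v, hA, hS₁sum⟩ := Gk_expand hμ hbd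
  -- expand leading term
  obtain ⟨S₂, hS₂eq, hS₂⟩ := hProd_expand_G ((a :: μ).sum * (a :: μ).sum) (a :: μ) haμ haμb
    (by omega)
  -- expand each cross term
  have hrec : ∀ ν : List ℕ, ∃ S', ν ∈ A →
      (hProd (sortL (a :: ν)) = Gk k (sortL (a :: ν)) + S' ∧
       Exp (Gk k) (fun ρ => IsPartition ρ ∧ KBounded k ρ ∧ ρ.sum = (sortL (a :: ν)).sum ∧
         Dominates ρ (sortL (a :: ν)) ∧ ρ ≠ sortL (a :: ν)) S') := by
    intro ν
    by_cases hν : ν ∈ A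
    · obtain ⟨h1, h2, h3, h4, h5⟩ := hA ν hν
      have hp : IsPartition (sortL (a :: ν)) := by
        apply isPartition_sortL
        intro x hx
        rcases List.mem_cons.1 hx with rfl | hx
        · exact ha
        · exact h1.2 x hx
      have hk2 : KBounded k (sortL (a :: ν)) := by
        intro x hx
        rcases List.mem_cons.1 ((sortL_perm _).mem_iff.mp hx) with rfl | hx
        · exact hak
        · exact h2 x hx
      obtain ⟨S', h6, h7⟩ := hProd_expand_G ((sortL (a :: ν)).sum * (sortL (a :: ν)).sum)
        (sortL (a :: ν)) hp hk2 (by omega)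
      exact ⟨S', fun _ => ⟨h6, h7⟩⟩
    · exact ⟨0, fun h => absurd h hν⟩
  choose S' hS' using hrec
  -- facts about cross terms
  have hcross : ∀ ν ∈ A, IsPartition (sortL (a :: ν)) ∧ KBounded k (sortL (a :: ν)) ∧
      (sortL (a :: ν)).sum = (a :: μ).sum ∧ Dominates (sortL (a :: ν)) (a :: μ) ∧
      sortL (a :: ν) ≠ a :: μ := by
    intro ν hν
    obtain ⟨h1, h2, h3, h4, h5⟩ := hA ν hν
    refine ⟨?_, ?_, ?_, dominates_cons_sort ha h4, ?_⟩
    · apply isPartition_sortL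
      intro x hx
      rcases List.mem_cons.1 hx with rfl | hx
      · exact ha
      · exact h1.2 x hx
    · intro x hx
      rcases List.mem_cons.1 ((sortL_perm _).mem_iff.mp hx) with rfl | hx
      · exact hak
      · exact h2 x hx
    · rw [(sortL_perm _).sum_eq]
      simp [h3]
    · intro hc
      have hperm : List.Perm (a :: ν) (a :: μ) := by
        have hp := sortL_perm (a :: ν)
        rw [hc] at hp
        exact hp.symm
      have hperm2 : List.Perm ν μ := hperm.cons_inv
      exact h5 (sorted_eq_of_perm hperm2 h1.1 hμ.1)
  set P : List ℕ → Prop := fun ρ => IsPartition ρ ∧ KBounded k ρ ∧ ρ.sum = (a :: μ).sum ∧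
      Dominates ρ (a :: μ) ∧ ρ ≠ a :: μ with hP
  refine ⟨S₂ + ∑ ν ∈ A, (v ν : ℚ) • (Gk k (sortL (a :: ν)) + S' ν), ?_, ?_⟩
  · rw [hS₁eq, mul_add, ← hProd_cons a μ, hS₂eq]
    have hX : hh a * S₁ = ∑ ν ∈ A, (v ν : ℚ) • (Gk k (sortL (a :: ν)) + S' ν) := by
      rw [hS₁sum, Finset.mul_sum]
      apply Finset.sum_congr rfl
      intro ν hν
      rw [mul_smul_comm, hh_mul_hProd, (hS' ν hν).1]
    rw [hX]
    ring
  · apply Exp.add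
    · apply Exp.mono hS₂
      rintro ρ ⟨g1, g2, g3, g4, g5⟩
      exact ⟨g1, g2, g3, g4, g5⟩
    · apply Exp.fsum
      intro ν hν
      obtain ⟨c1, c2, c3, c4, c5⟩ := hcross ν hν
      apply Exp.smul
      apply Exp.add
      · exact Exp.single ⟨c1, c2, c3, c4, c5⟩
      · apply Exp.mono (hS' ν hν).2
        rintro ρ ⟨g1, g2, g3, g4, g5⟩
        refine ⟨g1, g2, by omega, dominates_trans g4 c4, ?_⟩
        intro hc
        subst hc
        exact c5 (dominates_antisymm c1.2 haμ.2 c4 g4)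



theorem main_aux (k : ℕ) (T : ℕ → (SymFn →ₗ[ℚ] SymFn)) (hT : ProjOps k T) :
    ∀ l : List ℕ, IsPartition l → KBounded k l →
    ∃ (A : Finset (List ℕ)) (v : List ℕ → ℤ),
      (∀ μ ∈ A, IsPartition μ ∧ KBounded k μ ∧ μ.sum = l.sum ∧
        Dominates μ l ∧ μ ≠ l ∧ μ.headI = l.headI) ∧
      kSchurWith T l = Gk k l + ∑ μ ∈ A, (v μ : ℚ) • Gk k μ := by
  intro l
  induction l with
  | nil =>
    intro _ _
    refine ⟨∅, 0, by simp, ?_⟩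
    show (1 : SymFn) = Gk k [] + _
    rw [Gk_nil]
    simp
  | cons a rest ih =>
    intro hl hb
    have hrest : IsPartition rest := ⟨hl.1.of_cons, fun x hx => hl.2 x (by simp [hx])⟩
    have hrb : KBounded k rest := fun x hx => hb x (by simp [hx])
    have ha : 0 < a := hl.2 a (by simp)
    have hak : a ≤ k := hb a (by simp)
    have hheadr : rest.headI ≤ a := by
      cases rest with
      | nil => simp
      | cons b t => exact List.rel_of_pairwise_cons hl.1 (by simp)
    obtain ⟨A, v, hA, hsum⟩ := ih hrest hrb
    obtain ⟨S₀, hS₀eq, hS₀⟩ := mul_Gk_expand ha hak hrest hrb hheadr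
    have hrec : ∀ μ : List ℕ, ∃ S', μ ∈ A →
        (hh a * Gk k μ = Gk k (a :: μ) + S' ∧
         Exp (Gk k) (fun ρ => IsPartition ρ ∧ KBounded k ρ ∧ ρ.sum = (a :: μ).sum ∧
           Dominates ρ (a :: μ) ∧ ρ ≠ a :: μ) S') := by
      intro μ
      by_cases hμ : μ ∈ A
      · obtain ⟨h1, h2, h3, h4, h5, h6⟩ := hA μ hμ
        obtain ⟨S', h7, h8⟩ := mul_Gk_expand ha hak h1 h2 (h6 ▸ hheadr)
        exact ⟨S', fun _ => ⟨h7, h8⟩⟩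
      · exact ⟨0, fun h => absurd h hμ⟩
    choose S' hS' using hrec
    have hinner : schur [a] * kSchurWith T rest
        = Gk k (a :: rest) + (S₀ + ∑ μ ∈ A, (v μ : ℚ) • (Gk k (a :: μ) + S' μ)) := by
      rw [schur_single, hsum, mul_add, hS₀eq, Finset.mul_sum]
      rw [Finset.sum_congr rfl (fun μ hμ => by
        rw [mul_smul_comm, (hS' μ hμ).1] :
        ∀ μ ∈ A, hh a * ((v μ : ℚ) • Gk k μ) = (v μ : ℚ) • (Gk k (a :: μ) + S' μ))]
      ring
    set Q : List ℕ → Prop := fun ρ => IsPartition ρ ∧ KBounded k ρ ∧ ρ.sum = (a :: rest).sum ∧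
        Dominates ρ (a :: rest) ∧ ρ ≠ a :: rest with hQ
    have hW : Exp (Gk k) Q (S₀ + ∑ μ ∈ A, (v μ : ℚ) • (Gk k (a :: μ) + S' μ)) := by
      apply Exp.add
      · exact hS₀
      · apply Exp.fsum
        intro μ hμ
        obtain ⟨h1, h2, h3, h4, h5, h6⟩ := hA μ hμ
        have haμ : IsPartition (a :: μ) := isPartition_cons h1 ha (h6 ▸ hheadr)
        have haμd : Dominates (a :: μ) (a :: rest) := dominates_cons h4
        have haμs : (a :: μ).sum = (a :: rest).sum := by simp [h3]
        have haμne : (a :: μ) ≠ (a :: rest) := fun hc => h5 (by injection hc)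
        apply Exp.smul
        apply Exp.add
        · apply Exp.single
          refine ⟨haμ, ?_, haμs, haμd, haμne⟩
          intro x hx
          rcases List.mem_cons.1 hx with rfl | hx
          · exact hak
          · exact h2 x hx
        · apply Exp.mono (hS' μ hμ).2
          rintro ρ ⟨g1, g2, g3, g4, g5⟩
          refine ⟨g1, g2, by omega, dominates_trans g4 haμd, ?_⟩
          intro hc
          subst hc
          exact haμne (dominates_antisymm haμ.2 hl.2 haμd g4)
    obtain ⟨C, w, hC, hCsum⟩ := hW
    have hstep : kSchurWith T (a :: rest) = T a (schur [a] * kSchurWith T rest) := rfl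
    rw [hstep, hinner, hCsum, map_add]
    have hTG : T a (Gk k (a :: rest)) = Gk k (a :: rest) := by
      rw [hT a (a :: rest) hl hb]
      rw [if_pos (show (a :: rest).headI = a from rfl)]
    have hTsum : T a (∑ ρ ∈ C, (w ρ : ℚ) • Gk k ρ)
        = ∑ ρ ∈ C.filter (fun ρ => ρ.headI = a), (w ρ : ℚ) • Gk k ρ := by
      rw [map_sum]
      have h1 : ∀ ρ ∈ C, T a ((w ρ : ℚ) • Gk k ρ)
          = if ρ.headI = a then (w ρ : ℚ) • Gk k ρ else 0 := by
        intro ρ hρ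
        obtain ⟨g1, g2, _, _, _⟩ := hC ρ hρ
        rw [map_smul, hT a ρ g1 g2]
        split_ifs
        · rfl
        · rw [smul_zero]
      rw [Finset.sum_congr rfl h1, Finset.sum_filter]
    rw [hTG, hTsum]
    refine ⟨C.filter (fun ρ => ρ.headI = a), w, ?_, rfl⟩
    intro ρ hρ
    obtain ⟨hρC, hρh⟩ := Finset.mem_filter.mp hρ
    obtain ⟨g1, g2, g3, g4, g5⟩ := hC ρ hρC
    exact ⟨g1, g2, g3, g4, g5, by simpa using hρh⟩

end KSP

/-- For any `k`-bounded partition `λ`, the `k`-Schur function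
expands unitriangularly in the `k`-split basis with integer coefficients, all
higher terms being indexed by partitions having the same first part:
`s_λ^{(k)} = G_λ^{(k)} + Σ_{μ > λ, μ₁ = λ₁} v_μ G_μ^{(k)}`. -/
theorem kSchur_Gk_unitriangular (k : ℕ) (hk : 1 ≤ k)
    (T : ℕ → (SymFn →ₗ[ℚ] SymFn)) (hT : ProjOps k T)
    (l : List ℕ) (hl : IsPartition l) (hb : KBounded k l) :
    ∃ (A : Finset (List ℕ)) (v : List ℕ → ℤ),
      (∀ μ ∈ A, IsPartition μ ∧ KBounded k μ ∧ μ.sum = l.sum ∧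
        Dominates μ l ∧ μ ≠ l ∧ μ.headI = l.headI) ∧
      kSchurWith T l = Gk k l + ∑ μ ∈ A, (v μ : ℚ) • Gk k μ := by
  exact KSP.main_aux k T hT l hl hb
end
end
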